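/- arXiv:1305.1003 — 7 statements merged into one kernel-verified Lean document; each statement's English description precedes it below -/
import Mathlib

section
/- Let n ≥ 3, p ∈ (1,2], β > 0, and a ∈ ℝ with 0 ≤ −a < pβ < n. If q ∈ (0, (n+a)(p−1)/(n−pβ)], then the integral equation u(x) = R(x)·W_{β,p}(|·|^a u^q)(x) on ℝ^n has no positive solution for any double bounded function R. -/
open MeasureTheory Metric Set Filter ENNReal

/-- The Wolff potential `W_{β,p}(f)(x)`. -/
noncomputable def wolff (n : ℕ) (β p : ℝ) (f : EuclideanSpace ℝ (Fin n) → ℝ)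
    (x : EuclideanSpace ℝ (Fin n)) : ℝ≥0∞ :=
  ∫⁻ t in Set.Ioi (0 : ℝ),
    ((ENNReal.ofReal (t ^ (p * β - (n : ℝ))) *
        ∫⁻ y in Metric.ball x t, ENNReal.ofReal (f y)) ^ (1 / (p - 1))) /
      ENNReal.ofReal t

/-- `R` is double bounded: `1/C ≤ R x ≤ C` for some `C > 0`. -/
def DoubleBounded {α : Type*} (R : α → ℝ) : Prop :=
  ∃ C : ℝ, 0 < C ∧ ∀ x, 1 / C ≤ R x ∧ R x ≤ C

/-- `u` is a positive (continuous) solution of the integral equation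
`u(x) = R(x)·W_{β,p}(|·|^a u^q)(x)`, with finite Wolff potential. -/
def IsIESolutionWith (n : ℕ) (β p a q : ℝ)
    (R u : EuclideanSpace ℝ (Fin n) → ℝ) : Prop :=
  Continuous u ∧ (∀ x, 0 < u x) ∧
  ∀ x, wolff n β p (fun y => ‖y‖ ^ a * u y ^ q) x ≠ ∞ ∧
    u x = R x * (wolff n β p (fun y => ‖y‖ ^ a * u y ^ q) x).toReal

/-- Key real-sequence blow-up lemma. -/
lemma seq_blowup (m δ θ c : ℝ) (hm : 0 < m) (hδ : 0 ≤ δ) (hθ : 0 < θ) (hc : 0 < c)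
    (hγ : 0 < δ - (1 - θ) * m) (a : ℕ → ℝ) (ha0 : 0 < a 0) (hmono : Monotone a)
    (hrec : ∀ k : ℕ, a k + c * (2:ℝ) ^ ((k:ℝ) * δ) * a k ^ θ ≤ a (k + 1)) :
    ∀ K : ℕ, ∃ k, K ≤ k ∧ (2:ℝ) ^ ((k:ℝ) * m) ≤ a k := by
  have hapos : ∀ k, 0 < a k := fun k => lt_of_lt_of_le ha0 (hmono (Nat.zero_le k))
  -- linear growth: a k ≥ a 0 + k * (c * a 0 ^ θ)
  have hε : 0 < c * a 0 ^ θ := mul_pos hc (Real.rpow_pos_of_pos ha0 θ)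
  have hlin : ∀ k : ℕ, a 0 + k * (c * a 0 ^ θ) ≤ a k := by
    intro k
    induction k with
    | zero => simp
    | succ k ih =>
      have h1 : (1:ℝ) ≤ (2:ℝ) ^ ((k:ℝ) * δ) :=
        Real.one_le_rpow one_le_two (by positivity)
      have h2 : a 0 ^ θ ≤ a k ^ θ :=
        Real.rpow_le_rpow ha0.le (hmono (Nat.zero_le k)) hθ.le
      have h3 : c * a 0 ^ θ ≤ c * (2:ℝ) ^ ((k:ℝ) * δ) * a k ^ θ := by
        have t1 : c * a 0 ^ θ ≤ c * a k ^ θ := mul_le_mul_of_nonneg_left h2 hc.le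
        have t2 : c * a k ^ θ ≤ c * (2:ℝ) ^ ((k:ℝ) * δ) * a k ^ θ := by
          nlinarith [Real.rpow_pos_of_pos (hapos k) θ]
        linarith
      have := hrec k
      push_cast
      push_cast at ih
      nlinarith
  have hatop : ∀ M : ℝ, ∃ K : ℕ, ∀ k, K ≤ k → M ≤ a k := by
    intro M
    obtain ⟨K, hK⟩ := exists_nat_gt ((M - a 0) / (c * a 0 ^ θ))
    refine ⟨K, fun k hk => ?_⟩
    have h1 := hlin k
    have h2 : (M - a 0) / (c * a 0 ^ θ) < (k:ℝ) := lt_of_lt_of_le hK (by exact_mod_cast hk)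
    have h3 : M - a 0 < k * (c * a 0 ^ θ) := by
      rw [div_lt_iff₀ hε] at h2; linarith
    linarith
  -- by contradiction
  intro K
  by_contra hcon
  push_neg at hcon
  -- ∀ k ≥ K, a k < 2 ^ (k*m)
  -- Claim: ∃ K₂ ≥ K, ∀ k ≥ K₂, 2^(m+1) ≤ c * 2^(k δ) * a k ^ (θ - 1)
  have key : ∃ K₂ : ℕ, K ≤ K₂ ∧ ∀ k, K₂ ≤ k → (2:ℝ) ^ (m + 1) ≤
      c * (2:ℝ) ^ ((k:ℝ) * δ) * a k ^ (θ - 1) := by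
    rcases lt_trichotomy θ 1 with hθ1 | hθ1 | hθ1
    · -- θ < 1 : use a k < 2^(k m) and γ > 0
      set γ := δ - (1 - θ) * m with hγdef
      obtain ⟨K₂, hK₂⟩ := exists_nat_gt (max (K:ℝ) (Real.logb 2 ((2:ℝ) ^ (m+1) / c) / γ))
      refine ⟨K₂, ?_, fun k hk => ?_⟩
      · have := (le_max_left (K:ℝ) _).trans_lt hK₂; exact_mod_cast this.le
      have hkK : K ≤ k := by
        have := (le_max_left (K:ℝ) _).trans_lt hK₂
        have : (K:ℝ) ≤ (k:ℝ) := this.le.trans (by exact_mod_cast hk)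
        exact_mod_cast this
      have hak := hcon k hkK
      -- a k ^ (θ-1) ≥ (2^(k m))^(θ-1)
      have h1 : a k ^ (1 - θ) ≤ ((2:ℝ) ^ ((k:ℝ) * m)) ^ (1 - θ) :=
        Real.rpow_le_rpow (hapos k).le hak.le (by linarith)
      have hp2 : (0:ℝ) < (2:ℝ) ^ ((k:ℝ) * m) := Real.rpow_pos_of_pos two_pos _
      have h2 : ((2:ℝ) ^ ((k:ℝ) * m)) ^ (θ - 1) ≤ a k ^ (θ - 1) := by
        rw [show θ - 1 = -(1 - θ) by ring, Real.rpow_neg (hapos k).le,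
          Real.rpow_neg hp2.le]
        exact inv_anti₀ (Real.rpow_pos_of_pos (hapos k) _) h1
      have h3 : ((2:ℝ) ^ ((k:ℝ) * m)) ^ (θ - 1) = (2:ℝ) ^ ((k:ℝ) * m * (θ - 1)) :=
        (Real.rpow_mul (by norm_num) ((k:ℝ) * m) (θ - 1)).symm
      -- c * 2^(k δ) * a k ^ (θ-1) ≥ c * 2^(k γ)
      have h4 : c * (2:ℝ) ^ ((k:ℝ) * γ) ≤ c * (2:ℝ) ^ ((k:ℝ) * δ) * a k ^ (θ - 1) := by
        have heq : (2:ℝ) ^ ((k:ℝ) * γ) = (2:ℝ) ^ ((k:ℝ) * δ) * (2:ℝ) ^ ((k:ℝ) * m * (θ - 1)) := by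
          rw [← Real.rpow_add two_pos, hγdef]; ring_nf
        have h2' : (2:ℝ) ^ ((k:ℝ) * m * (θ - 1)) ≤ a k ^ (θ - 1) := h3 ▸ h2
        calc c * (2:ℝ) ^ ((k:ℝ) * γ)
            = c * (2:ℝ) ^ ((k:ℝ) * δ) * (2:ℝ) ^ ((k:ℝ) * m * (θ - 1)) := by rw [heq]; ring
          _ ≤ c * (2:ℝ) ^ ((k:ℝ) * δ) * a k ^ (θ - 1) :=
              mul_le_mul_of_nonneg_left h2' (by positivity)
      refine le_trans ?_ h4
      -- c * 2^(k γ) ≥ 2^(m+1) since k γ ≥ logb 2 (2^(m+1)/c)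
      have hkb : Real.logb 2 ((2:ℝ) ^ (m+1) / c) / γ < (k:ℝ) := by
        have := (le_max_right (K:ℝ) _).trans_lt hK₂
        exact this.trans_le (by exact_mod_cast hk)
      have hγ' : 0 < γ := hγ
      have h5 : Real.logb 2 ((2:ℝ) ^ (m+1) / c) ≤ (k:ℝ) * γ := by
        rw [div_lt_iff₀ hγ'] at hkb; linarith
      have h6 : (2:ℝ) ^ (m+1) / c = (2:ℝ) ^ (Real.logb 2 ((2:ℝ) ^ (m+1) / c)) := by
        rw [Real.rpow_logb two_pos (by norm_num)]
        positivity
      have h7 : (2:ℝ) ^ (m+1) / c ≤ (2:ℝ) ^ ((k:ℝ) * γ) := by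
        rw [h6]; exact Real.rpow_le_rpow_left_iff (by norm_num) |>.2 h5
      rw [div_le_iff₀ hc] at h7
      linarith [h7]
    · -- θ = 1 : γ = δ > 0
      subst hθ1
      have hδ' : 0 < δ := by linarith [hγ]
      obtain ⟨K₂, hK₂⟩ := exists_nat_gt (max (K:ℝ) (Real.logb 2 ((2:ℝ) ^ (m+1) / c) / δ))
      refine ⟨K₂, ?_, fun k hk => ?_⟩
      · have := (le_max_left (K:ℝ) _).trans_lt hK₂; exact_mod_cast this.le
      have h0 : a k ^ (1 - 1 : ℝ) = 1 := by
        norm_num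
      rw [sub_self, Real.rpow_zero, mul_one]
      have hkb : Real.logb 2 ((2:ℝ) ^ (m+1) / c) / δ < (k:ℝ) := by
        have := (le_max_right (K:ℝ) _).trans_lt hK₂
        exact this.trans_le (by exact_mod_cast hk)
      have h5 : Real.logb 2 ((2:ℝ) ^ (m+1) / c) ≤ (k:ℝ) * δ := by
        rw [div_lt_iff₀ hδ'] at hkb; linarith
      have h6 : (2:ℝ) ^ (m+1) / c = (2:ℝ) ^ (Real.logb 2 ((2:ℝ) ^ (m+1) / c)) := by
        rw [Real.rpow_logb two_pos (by norm_num)]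
        positivity
      have h7 : (2:ℝ) ^ (m+1) / c ≤ (2:ℝ) ^ ((k:ℝ) * δ) := by
        rw [h6]; exact Real.rpow_le_rpow_left_iff (by norm_num) |>.2 h5
      rw [div_le_iff₀ hc] at h7
      linarith
    · -- θ > 1 : a k → ∞
      set B := max 1 (((2:ℝ) ^ (m+1) / c) ^ (1 / (θ - 1))) with hB
      obtain ⟨K₁, hK₁⟩ := hatop B
      refine ⟨max K K₁, le_max_left _ _, fun k hk => ?_⟩
      have hak : B ≤ a k := hK₁ k (le_trans (le_max_right _ _) hk)
      have hBpos : (0:ℝ) < (2:ℝ) ^ (m+1) / c := by positivity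
      have h1 : ((2:ℝ) ^ (m+1) / c) ≤ a k ^ (θ - 1) := by
        have hb2 : ((2:ℝ) ^ (m+1) / c) ^ (1 / (θ - 1)) ≤ a k := le_trans (le_max_right _ _) hak
        have := Real.rpow_le_rpow (by positivity) hb2 (by linarith : (0:ℝ) ≤ θ - 1)
        rwa [← Real.rpow_mul hBpos.le, one_div, inv_mul_cancel₀ (by linarith : θ - 1 ≠ 0),
          Real.rpow_one] at this
      have h2 : (1:ℝ) ≤ (2:ℝ) ^ ((k:ℝ) * δ) := Real.one_le_rpow one_le_two (by positivity)
      calc (2:ℝ) ^ (m+1) = c * ((2:ℝ) ^ (m+1) / c) := by field_simp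
        _ ≤ c * (2:ℝ) ^ ((k:ℝ) * δ) * a k ^ (θ - 1) := by
            have hA : (0:ℝ) < a k ^ (θ - 1) := Real.rpow_pos_of_pos (hapos k) (θ - 1)
            have s1 : c * ((2:ℝ) ^ (m+1) / c) ≤ c * a k ^ (θ - 1) :=
              mul_le_mul_of_nonneg_left h1 hc.le
            have s2 : c * a k ^ (θ - 1) * 1 ≤ c * a k ^ (θ - 1) * (2:ℝ) ^ ((k:ℝ) * δ) :=
              mul_le_mul_of_nonneg_left h2 (by positivity)
            nlinarith [s1, s2]
  obtain ⟨K₂, hKK₂, hK₂⟩ := key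
  -- geometric growth: a (K₂ + j) ≥ 2^((m+1) j) * a K₂
  have hgeo : ∀ j : ℕ, (2:ℝ) ^ ((j:ℝ) * (m+1)) * a K₂ ≤ a (K₂ + j) := by
    intro j
    induction j with
    | zero => simp
    | succ j ih =>
      have hk := hK₂ (K₂ + j) (Nat.le_add_right _ _)
      have hrec' := hrec (K₂ + j)
      have hsplit : a (K₂ + j) ^ θ = a (K₂ + j) ^ (θ - 1) * a (K₂ + j) := by
        rw [← Real.rpow_add_one (hapos _).ne' (θ - 1)]; ring_nf
      have h1 : (2:ℝ) ^ (m+1) * a (K₂ + j) ≤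
          c * (2:ℝ) ^ (((K₂ + j : ℕ):ℝ) * δ) * a (K₂ + j) ^ θ := by
        rw [hsplit]
        nlinarith [hapos (K₂ + j)]
      have h2 : (2:ℝ) ^ (m+1) * a (K₂ + j) ≤ a (K₂ + j + 1) := by
        nlinarith [hapos (K₂ + j), mul_pos (mul_pos hc (Real.rpow_pos_of_pos two_pos
          (((K₂ + j : ℕ):ℝ) * δ))) (Real.rpow_pos_of_pos (hapos (K₂ + j)) θ)]
      have h3 : (2:ℝ) ^ (((j:ℝ)+1) * (m+1)) = (2:ℝ) ^ (m+1) * (2:ℝ) ^ ((j:ℝ) * (m+1)) := by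
        rw [← Real.rpow_add two_pos]; ring_nf
      have : (K₂ + (j+1)) = (K₂ + j) + 1 := by ring
      rw [this]
      push_cast
      rw [h3]
      nlinarith [Real.rpow_pos_of_pos two_pos (m+1), hapos (K₂ + j)]
  -- contradiction: a (K₂+j) < 2^((K₂+j) m) but grows like 2^(j(m+1))
  have hfinal : ∀ j : ℕ, (2:ℝ) ^ ((j:ℝ)) ≤ (2:ℝ) ^ ((K₂:ℝ) * m) / a K₂ := by
    intro j
    have h1 := hgeo j
    have h2 := hcon (K₂ + j) (le_trans hKK₂ (Nat.le_add_right _ _))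
    have h3 : (2:ℝ) ^ ((j:ℝ) * (m+1)) * a K₂ < (2:ℝ) ^ (((K₂:ℝ) + (j:ℝ)) * m) := by
      calc (2:ℝ) ^ ((j:ℝ) * (m+1)) * a K₂ ≤ a (K₂ + j) := h1
        _ < (2:ℝ) ^ ((((K₂ + j : ℕ)):ℝ) * m) := h2
        _ = (2:ℝ) ^ (((K₂:ℝ) + (j:ℝ)) * m) := by push_cast; ring_nf
    have h4 : (2:ℝ) ^ (((K₂:ℝ) + (j:ℝ)) * m) = (2:ℝ) ^ ((K₂:ℝ) * m) * (2:ℝ) ^ ((j:ℝ) * m) := by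
      rw [← Real.rpow_add two_pos]; ring_nf
    have h5 : (2:ℝ) ^ ((j:ℝ) * (m+1)) = (2:ℝ) ^ ((j:ℝ) * m) * (2:ℝ) ^ ((j:ℝ)) := by
      rw [← Real.rpow_add two_pos]; ring_nf
    rw [h4] at h3; rw [h5] at h3
    rw [le_div_iff₀ (hapos K₂)]
    have hpm : (0:ℝ) < (2:ℝ) ^ ((j:ℝ) * m) := Real.rpow_pos_of_pos two_pos _
    nlinarith
  obtain ⟨j, hj⟩ := exists_nat_gt ((2:ℝ) ^ ((K₂:ℝ) * m) / a K₂)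
  have := hfinal j
  have hj2 : (j:ℝ) ≤ (2:ℝ) ^ ((j:ℝ)) := by
    calc (j:ℝ) ≤ (j:ℝ) + 1 := by linarith
      _ ≤ (2:ℝ) ^ ((j:ℝ)) := by
        rw [Real.rpow_natCast]
        exact_mod_cast Nat.succ_le_of_lt (Nat.lt_two_pow_self (n := j))
  linarith

set_option maxHeartbeats 2000000 in
/-- nonexistence of positive solutions of the integral equation
when `q ∈ (0, (n+a)(p-1)/(n-pβ)]`. -/
theorem stmt0_no_positive_solution
    (n : ℕ) (hn : 3 ≤ n) (p β a q : ℝ)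
    (hp1 : 1 < p) (hp2 : p ≤ 2) (hβ : 0 < β)
    (ha0 : 0 ≤ -a) (ha : -a < p * β) (hβn : p * β < n)
    (hq0 : 0 < q) (hq : q ≤ (n + a) * (p - 1) / (n - p * β)) :
    ¬ ∃ (R u : EuclideanSpace ℝ (Fin n) → ℝ),
        DoubleBounded R ∧ IsIESolutionWith n β p a q R u := by
  rintro ⟨R, u, ⟨C, hC, hR⟩, hu_cont, hu_pos, hsol⟩
  set f : EuclideanSpace ℝ (Fin n) → ℝ := fun y => ‖y‖ ^ a * u y ^ q with hf
  set F : EuclideanSpace ℝ (Fin n) → ℝ≥0∞ := fun y => ENNReal.ofReal (f y) with hF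
  set G : ℝ → ℝ≥0∞ :=
    fun t => ∫⁻ y in Metric.ball (0 : EuclideanSpace ℝ (Fin n)) t, F y with hG
  set g : ℝ → ℝ := fun t => (G t).toReal with hg
  have hgnn : ∀ t, 0 ≤ g t := fun t => ENNReal.toReal_nonneg
  -- basic constants
  have hp' : (0:ℝ) < p - 1 := by linarith
  set κ : ℝ := 1 / (p - 1) with hκdef
  have hκ : 0 < κ := by positivity
  set m : ℝ := (n:ℝ) - p * β with hmdef
  have hm : 0 < m := by rw [hmdef]; linarith
  set σ : ℝ := m / (p - 1) with hσdef
  have hσ : 0 < σ := by positivity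
  set θ : ℝ := q / (p - 1) with hθdef
  have hθ : 0 < θ := by positivity
  have ham : a ≤ 0 := by linarith
  have hapβ : 0 < a + p * β := by linarith
  have hqm : q * m ≤ ((n:ℝ) + a) * (p - 1) := by
    have hm' : (0:ℝ) < (n:ℝ) - p * β := by linarith
    have := (le_div_iff₀ hm').1 hq
    rw [hmdef]; linarith [mul_le_mul_of_nonneg_right this (le_of_lt hm')]
  have hqσ : q * σ ≤ (n:ℝ) + a := by
    have h2 : q * σ = q * m / (p - 1) := by rw [hσdef]; ring
    rw [h2, div_le_iff₀ hp']
    linarith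
  set δ : ℝ := (n:ℝ) + a - q * σ with hδdef
  have hδnn : 0 ≤ δ := by rw [hδdef]; linarith
  have hθm : θ * m = q * σ := by rw [hθdef, hσdef]; ring
  have hγpos : 0 < δ - (1 - θ) * m := by
    have h3 : δ - (1 - θ) * m = a + p * β := by
      rw [hδdef, hmdef] at *; nlinarith [hθm]
    rw [h3]; exact hapβ
  have hκσ : (p * β - (n:ℝ)) * κ = -σ := by
    rw [hκdef, hσdef, hmdef]; field_simp; ring
  have hmκ : m * κ = σ := by rw [hκdef, hσdef]; field_simp
  have hκq : κ * q = θ := by rw [hκdef, hθdef]; field_simp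
  -- the wolff potential written with G/F
  have hwolff : ∀ x : EuclideanSpace ℝ (Fin n), wolff n β p f x =
      ∫⁻ t in Set.Ioi (0:ℝ),
        ((ENNReal.ofReal (t ^ (p * β - (n : ℝ))) *
          ∫⁻ y in Metric.ball x t, F y) ^ κ) / ENNReal.ofReal t := fun _ => rfl
  have hw0ne : wolff n β p f 0 ≠ ∞ := (hsol 0).1
  -- monotonicity and finiteness of G
  have hGmono : ∀ {s t : ℝ}, s ≤ t → G s ≤ G t := fun h =>
    lintegral_mono_set (Metric.ball_subset_ball h)
  have hGne : ∀ t : ℝ, G t ≠ ∞ := by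
    intro t
    rcases le_or_gt t 0 with ht | ht
    · simp only [hG, Metric.ball_eq_empty.2 ht]
      simp
    · by_contra htop
      apply hw0ne
      rw [hwolff 0, eq_top_iff]
      calc (⊤:ℝ≥0∞) = ∫⁻ _ in Set.Ioi t, (⊤:ℝ≥0∞) := by
            rw [setLIntegral_const]; simp [Real.volume_Ioi]
        _ ≤ ∫⁻ s in Set.Ioi t,
            ((ENNReal.ofReal (s ^ (p * β - (n : ℝ))) *
              ∫⁻ y in Metric.ball (0:EuclideanSpace ℝ (Fin n)) s, F y) ^ κ) /
              ENNReal.ofReal s := by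
            apply setLIntegral_mono' measurableSet_Ioi
            intro s hs
            have hs0 : 0 < s := ht.trans hs
            have hGs : (∫⁻ y in Metric.ball (0:EuclideanSpace ℝ (Fin n)) s, F y) = ⊤ := by
              have h1 : G t ≤ G s := hGmono (le_of_lt hs)
              rw [htop] at h1
              exact top_le_iff.1 h1
            have hne0 : ENNReal.ofReal (s ^ (p * β - (n:ℝ))) ≠ 0 :=
              (ENNReal.ofReal_pos.2 (Real.rpow_pos_of_pos hs0 _)).ne'
            rw [hGs, ENNReal.mul_top hne0, ENNReal.top_rpow_of_pos hκ,
              ENNReal.top_div_of_ne_top ENNReal.ofReal_ne_top]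
        _ ≤ _ := lintegral_mono_set fun s hs => lt_trans ht hs
  have hgmono : ∀ {s t : ℝ}, s ≤ t → g s ≤ g t := fun {s t} h =>
    ENNReal.toReal_mono (hGne t) (hGmono h)
  have hGofg : ∀ t : ℝ, G t = ENNReal.ofReal (g t) := fun t =>
    (ENNReal.ofReal_toReal (hGne t)).symm
  -- positivity of g 1
  have hg1 : 0 < g 1 := by
    obtain ⟨z, hzK, hzmin'⟩ := (isCompact_closedBall (0:EuclideanSpace ℝ (Fin n)) 1).exists_isMinOn
      ⟨0, by simp⟩ hu_cont.continuousOn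
    have hzmin : ∀ w ∈ Metric.closedBall (0:EuclideanSpace ℝ (Fin n)) 1, u z ≤ u w :=
      fun w hw => hzmin' hw
    have hε : 0 < u z := hu_pos z
    set A₀ : Set (EuclideanSpace ℝ (Fin n)) :=
      Metric.ball 0 1 \ Metric.closedBall 0 2⁻¹ with hA₀
    have hA₀open : IsOpen A₀ := isOpen_ball.sdiff Metric.isClosed_closedBall
    have hA₀ne : A₀.Nonempty := by
      refine ⟨EuclideanSpace.single (⟨0, by omega⟩ : Fin n) ((3:ℝ)/4), ?_⟩
      have hnorm : ‖EuclideanSpace.single (⟨0, by omega⟩ : Fin n) ((3:ℝ)/4)‖ = 3/4 := by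
        rw [EuclideanSpace.norm_single]; norm_num
      constructor
      · rw [mem_ball, dist_zero_right, hnorm]; norm_num
      · rw [mem_closedBall, dist_zero_right, hnorm]; norm_num
    have hA₀pos : 0 < volume A₀ := hA₀open.measure_pos volume hA₀ne
    have hpt : ∀ y ∈ A₀, ENNReal.ofReal (u z ^ q) ≤ F y := by
      intro y hy
      obtain ⟨hy1, hy2⟩ := hy
      rw [mem_ball, dist_zero_right] at hy1
      rw [mem_closedBall, dist_zero_right, not_le] at hy2
      have hy0 : 0 < ‖y‖ := lt_trans (by norm_num) hy2
      apply ENNReal.ofReal_le_ofReal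
      have h1 : 1 ≤ ‖y‖ ^ a :=
        Real.one_le_rpow_of_pos_of_le_one_of_nonpos hy0 (le_of_lt hy1) ham
      have hyK : y ∈ Metric.closedBall (0:EuclideanSpace ℝ (Fin n)) 1 := by
        rw [mem_closedBall, dist_zero_right]; exact hy1.le
      have h2 : u z ^ q ≤ u y ^ q :=
        Real.rpow_le_rpow hε.le (hzmin y hyK) hq0.le
      calc u z ^ q = 1 * u z ^ q := (one_mul _).symm
        _ ≤ ‖y‖ ^ a * u y ^ q := by
            apply mul_le_mul h1 h2 (Real.rpow_nonneg hε.le q)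
            exact le_trans zero_le_one h1
    have hGlb : ENNReal.ofReal (u z ^ q) * volume A₀ ≤ G 1 := by
      calc ENNReal.ofReal (u z ^ q) * volume A₀
          = ∫⁻ _ in A₀, ENNReal.ofReal (u z ^ q) := (setLIntegral_const _ _).symm
        _ ≤ ∫⁻ y in A₀, F y := setLIntegral_mono' hA₀open.measurableSet hpt
        _ ≤ G 1 := lintegral_mono_set diff_subset
    have : 0 < G 1 := lt_of_lt_of_le
      (by
        apply ENNReal.mul_pos
        · exact (ENNReal.ofReal_pos.2 (Real.rpow_pos_of_pos hε q)).ne'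
        · exact hA₀pos.ne') hGlb
    exact ENNReal.toReal_pos this.ne' (hGne 1)
  -- lower bound for u
  set c₄ : ℝ := (4:ℝ) ^ (-σ) / (2 * C) with hc₄def
  have hc₄ : 0 < c₄ := by positivity
  have hulb : ∀ y : EuclideanSpace ℝ (Fin n), 1 ≤ ‖y‖ →
      c₄ * ‖y‖ ^ (-σ) * g ‖y‖ ^ κ ≤ u y := by
    intro y hy
    set s₀ : ℝ := ‖y‖ with hs₀def
    have hs₀ : (0:ℝ) < s₀ := lt_of_lt_of_le one_pos hy
    have h4s : (0:ℝ) < 4 * s₀ := by linarith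
    have hgs₀ : 0 < g s₀ := lt_of_lt_of_le hg1 (hgmono hy)
    -- pointwise bound on the annulus of radii
    have h1 : ∀ t ∈ Set.Ioc (2*s₀) (4*s₀),
        (ENNReal.ofReal ((4*s₀) ^ (p * β - (n:ℝ))) * G s₀) ^ κ / ENNReal.ofReal (4*s₀) ≤
        (ENNReal.ofReal (t ^ (p * β - (n:ℝ))) * ∫⁻ z in Metric.ball y t, F z) ^ κ /
          ENNReal.ofReal t := by
      rintro t ⟨ht1, ht2⟩
      have ht0 : 0 < t := lt_trans (by linarith) ht1
      have hball : Metric.ball (0:EuclideanSpace ℝ (Fin n)) s₀ ⊆ Metric.ball y t := by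
        intro z hz
        rw [mem_ball] at hz ⊢
        have := dist_triangle z (0:EuclideanSpace ℝ (Fin n)) y
        rw [dist_zero_right] at hz
        calc dist z y ≤ dist z 0 + dist 0 y := dist_triangle _ _ _
          _ = ‖z‖ + s₀ := by rw [dist_zero_right, dist_comm, dist_zero_right]
          _ < s₀ + s₀ := by rw [dist_zero_right] at *; linarith
          _ ≤ t := by linarith
      have hGle : G s₀ ≤ ∫⁻ z in Metric.ball y t, F z := lintegral_mono_set hball
      have hcoef : ENNReal.ofReal ((4*s₀) ^ (p * β - (n:ℝ))) ≤
          ENNReal.ofReal (t ^ (p * β - (n:ℝ))) :=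
        ENNReal.ofReal_le_ofReal
          (Real.rpow_le_rpow_of_nonpos ht0 ht2 (by linarith))
      exact ENNReal.div_le_div
        (ENNReal.rpow_le_rpow (mul_le_mul' hcoef hGle) hκ.le)
        (ENNReal.ofReal_le_ofReal ht2)
    have hWlb : (ENNReal.ofReal ((4*s₀) ^ (p * β - (n:ℝ))) * G s₀) ^ κ /
        ENNReal.ofReal (4*s₀) * ENNReal.ofReal (2*s₀) ≤ wolff n β p f y := by
      rw [hwolff y]
      calc (ENNReal.ofReal ((4*s₀) ^ (p * β - (n:ℝ))) * G s₀) ^ κ /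
            ENNReal.ofReal (4*s₀) * ENNReal.ofReal (2*s₀)
          = ∫⁻ _ in Set.Ioc (2*s₀) (4*s₀),
              (ENNReal.ofReal ((4*s₀) ^ (p * β - (n:ℝ))) * G s₀) ^ κ /
                ENNReal.ofReal (4*s₀) := by
            rw [setLIntegral_const, Real.volume_Ioc]
            congr 2
            ring
        _ ≤ ∫⁻ t in Set.Ioc (2*s₀) (4*s₀),
              (ENNReal.ofReal (t ^ (p * β - (n:ℝ))) * ∫⁻ z in Metric.ball y t, F z) ^ κ /
                ENNReal.ofReal t := setLIntegral_mono' measurableSet_Ioc h1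
        _ ≤ _ := lintegral_mono_set fun t ht => lt_trans (by linarith) ht.1
    -- convert to real
    have hconst : (ENNReal.ofReal ((4*s₀) ^ (p * β - (n:ℝ))) * G s₀) ^ κ /
        ENNReal.ofReal (4*s₀) * ENNReal.ofReal (2*s₀) =
        ENNReal.ofReal (((4*s₀) ^ (p * β - (n:ℝ)) * g s₀) ^ κ / (4*s₀) * (2*s₀)) := by
      rw [hGofg s₀, ← ENNReal.ofReal_mul (Real.rpow_nonneg h4s.le _),
        ENNReal.ofReal_rpow_of_pos (mul_pos (Real.rpow_pos_of_pos h4s _) hgs₀),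
        ← ENNReal.ofReal_div_of_pos h4s,
        ← ENNReal.ofReal_mul (by positivity)]
    have hrealeq : ((4*s₀) ^ (p * β - (n:ℝ)) * g s₀) ^ κ / (4*s₀) * (2*s₀) =
        (1/2) * ((4:ℝ) ^ (-σ) * s₀ ^ (-σ)) * g s₀ ^ κ := by
      rw [Real.mul_rpow (Real.rpow_nonneg h4s.le _) (hgnn s₀),
        ← Real.rpow_mul h4s.le, hκσ,
        Real.mul_rpow (by norm_num : (0:ℝ) ≤ 4) hs₀.le]
      field_simp
      ring
    have hWfin := (hsol y).1
    have hBle : (1/2) * ((4:ℝ) ^ (-σ) * s₀ ^ (-σ)) * g s₀ ^ κ ≤ (wolff n β p f y).toReal := by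
      apply (ENNReal.ofReal_le_iff_le_toReal hWfin).1
      rw [← hrealeq, ← hconst]
      exact hWlb
    have huy := (hsol y).2
    have hRy := (hR y).1
    have hWt : 0 ≤ (wolff n β p f y).toReal := ENNReal.toReal_nonneg
    have hBnn : 0 ≤ (1/2) * ((4:ℝ) ^ (-σ) * s₀ ^ (-σ)) * g s₀ ^ κ := by positivity
    calc c₄ * s₀ ^ (-σ) * g s₀ ^ κ
        = (1/C) * ((1/2) * ((4:ℝ) ^ (-σ) * s₀ ^ (-σ)) * g s₀ ^ κ) := by
          rw [hc₄def]; field_simp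
      _ ≤ R y * (wolff n β p f y).toReal := by
          apply mul_le_mul hRy hBle hBnn (le_trans (by positivity) hRy)
      _ = u y := huy.symm
    -- volume constants
  set v : ℝ≥0∞ := volume (Metric.ball (0:EuclideanSpace ℝ (Fin n)) 1) with hv
  have hv0 : 0 < v := measure_ball_pos volume _ one_pos
  have hvne : v ≠ ∞ := (measure_ball_lt_top).ne
  set vr : ℝ := v.toReal with hvrdef
  have hvr0 : 0 < vr := ENNReal.toReal_pos hv0.ne' hvne
  have hvr' : v = ENNReal.ofReal vr := (ENNReal.ofReal_toReal hvne).symm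
  have hfinrank : Module.finrank ℝ (EuclideanSpace ℝ (Fin n)) = n := finrank_euclideanSpace_fin
  set c₅ : ℝ := c₄ ^ q * (2:ℝ) ^ (a - σ*q) with hc₅def
  have hc₅ : 0 < c₅ := by
    apply mul_pos (Real.rpow_pos_of_pos hc₄ q) (Real.rpow_pos_of_pos two_pos _)
  set c₉ : ℝ := c₅ * vr with hc₉def
  have hc₉ : 0 < c₉ := mul_pos hc₅ hvr0
  -- the doubling recursion for g
  have hgrec : ∀ t : ℝ, 1 ≤ t → g t + c₉ * t ^ δ * g t ^ θ ≤ g (2*t) := by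
    intro t ht
    have ht0 : (0:ℝ) < t := lt_of_lt_of_le one_pos ht
    have h2t0 : (0:ℝ) < 2*t := by linarith
    set A : Set (EuclideanSpace ℝ (Fin n)) :=
      Metric.ball 0 (2*t) \ Metric.closedBall 0 t with hA
    have hAmeas : MeasurableSet A := measurableSet_ball.diff measurableSet_closedBall
    have hpt : ∀ y ∈ A, ENNReal.ofReal (c₅ * t ^ (a - σ*q) * g t ^ θ) ≤ F y := by
      intro y hy
      obtain ⟨hy1, hy2⟩ := hy
      rw [mem_ball, dist_zero_right] at hy1
      rw [mem_closedBall, dist_zero_right, not_le] at hy2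
      have hy0 : (0:ℝ) < ‖y‖ := lt_trans ht0 hy2
      have hy1' : ‖y‖ ≤ 2*t := hy1.le
      have hyge1 : 1 ≤ ‖y‖ := le_trans ht hy2.le
      apply ENNReal.ofReal_le_ofReal
      have hu1 : c₄ * (2*t) ^ (-σ) * g t ^ κ ≤ u y := by
        have l1 : (2*t) ^ (-σ) ≤ ‖y‖ ^ (-σ) :=
          Real.rpow_le_rpow_of_nonpos hy0 hy1' (by linarith)
        have l2 : g t ^ κ ≤ g ‖y‖ ^ κ :=
          Real.rpow_le_rpow (hgnn t) (hgmono hy2.le) hκ.le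
        calc c₄ * (2*t) ^ (-σ) * g t ^ κ
            ≤ c₄ * ‖y‖ ^ (-σ) * g t ^ κ :=
              mul_le_mul_of_nonneg_right (mul_le_mul_of_nonneg_left l1 hc₄.le)
                (Real.rpow_nonneg (hgnn t) κ)
          _ ≤ c₄ * ‖y‖ ^ (-σ) * g ‖y‖ ^ κ :=
              mul_le_mul_of_nonneg_left l2
                (mul_nonneg hc₄.le (Real.rpow_nonneg (norm_nonneg y) _))
          _ ≤ u y := hulb y hyge1
      have hbase_nn : 0 ≤ c₄ * (2*t) ^ (-σ) * g t ^ κ :=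
        mul_nonneg (mul_nonneg hc₄.le (Real.rpow_nonneg h2t0.le _))
          (Real.rpow_nonneg (hgnn t) _)
      have hu2 : (c₄ * (2*t) ^ (-σ) * g t ^ κ) ^ q ≤ u y ^ q :=
        Real.rpow_le_rpow hbase_nn hu1 hq0.le
      have hexpand : (c₄ * (2*t) ^ (-σ) * g t ^ κ) ^ q
          = c₄ ^ q * (2*t) ^ (-σ * q) * g t ^ θ := by
        rw [Real.mul_rpow (mul_nonneg hc₄.le (Real.rpow_nonneg h2t0.le _))
            (Real.rpow_nonneg (hgnn t) _),
          Real.mul_rpow hc₄.le (Real.rpow_nonneg h2t0.le _),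
          ← Real.rpow_mul h2t0.le, ← Real.rpow_mul (hgnn t), hκq]
      have hna : (2*t) ^ a ≤ ‖y‖ ^ a := Real.rpow_le_rpow_of_nonpos hy0 hy1' ham
      have hsplit : (2*t) ^ a * (2*t) ^ (-σ * q) = (2:ℝ) ^ (a - σ*q) * t ^ (a - σ*q) := by
        rw [← Real.rpow_add h2t0, show a + -σ * q = a - σ*q from by ring,
          Real.mul_rpow (by norm_num : (0:ℝ) ≤ 2) ht0.le]
      have hmid_nn : 0 ≤ c₄ ^ q * (2*t) ^ (-σ * q) * g t ^ θ :=
        mul_nonneg (mul_nonneg (Real.rpow_nonneg hc₄.le _) (Real.rpow_nonneg h2t0.le _))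
          (Real.rpow_nonneg (hgnn t) _)
      calc c₅ * t ^ (a - σ*q) * g t ^ θ
          = (2*t) ^ a * (c₄ ^ q * (2*t) ^ (-σ * q) * g t ^ θ) := by
            rw [hc₅def, show (2*t) ^ a * (c₄ ^ q * (2*t) ^ (-σ * q) * g t ^ θ)
              = c₄ ^ q * ((2*t) ^ a * (2*t) ^ (-σ * q)) * g t ^ θ from by ring, hsplit]
            ring
        _ ≤ ‖y‖ ^ a * (c₄ ^ q * (2*t) ^ (-σ * q) * g t ^ θ) :=
            mul_le_mul_of_nonneg_right hna hmid_nn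
        _ ≤ ‖y‖ ^ a * u y ^ q :=
            mul_le_mul_of_nonneg_left (hexpand ▸ hu2) (Real.rpow_nonneg (norm_nonneg y) a)
        _ = f y := rfl
    -- volume of the annulus
    have hsub : Metric.closedBall (0:EuclideanSpace ℝ (Fin n)) t ⊆ Metric.ball 0 (2*t) :=
      Metric.closedBall_subset_ball (by linarith)
    have hvol : ENNReal.ofReal (t ^ n) * v ≤ volume A := by
      have hballvol : volume (Metric.ball (0:EuclideanSpace ℝ (Fin n)) (2*t)) =
          ENNReal.ofReal ((2*t) ^ n) * v := by
        rw [hv, Measure.addHaar_ball_of_pos volume _ h2t0, hfinrank]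
      have hcbvol : volume (Metric.closedBall (0:EuclideanSpace ℝ (Fin n)) t) =
          ENNReal.ofReal (t ^ n) * v := by
        rw [hv, Measure.addHaar_closedBall volume _ ht0.le, hfinrank]
      have hunion : A ∪ Metric.closedBall (0:EuclideanSpace ℝ (Fin n)) t =
          Metric.ball 0 (2*t) := diff_union_of_subset hsub
      have hdisj : Disjoint A (Metric.closedBall (0:EuclideanSpace ℝ (Fin n)) t) :=
        disjoint_sdiff_left
      have hsum : volume A + ENNReal.ofReal (t ^ n) * v = ENNReal.ofReal ((2*t)^n) * v := by
        rw [← hcbvol, ← measure_union hdisj measurableSet_closedBall, hunion, hballvol]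
      have h2le : (2:ℝ) ≤ (2:ℝ)^n := le_self_pow₀ one_le_two (by omega)
      have h2n : 2 * (ENNReal.ofReal (t ^ n) * v) ≤ ENNReal.ofReal ((2*t)^n) * v := by
        rw [show ((2*t):ℝ)^n = (2:ℝ)^n * t^n from mul_pow 2 t n,
          ENNReal.ofReal_mul (by positivity), ← mul_assoc]
        apply mul_le_mul_left
        apply mul_le_mul_left
        calc (2:ℝ≥0∞) = ENNReal.ofReal 2 := by norm_num
          _ ≤ ENNReal.ofReal ((2:ℝ)^n) := ENNReal.ofReal_le_ofReal h2le
      have hfin : ENNReal.ofReal (t ^ n) * v ≠ ∞ :=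
        ENNReal.mul_ne_top ENNReal.ofReal_ne_top hvne
      have hsum2 : ENNReal.ofReal (t ^ n) * v + ENNReal.ofReal (t ^ n) * v ≤
          volume A + ENNReal.ofReal (t ^ n) * v := by
        calc ENNReal.ofReal (t ^ n) * v + ENNReal.ofReal (t ^ n) * v
            = 2 * (ENNReal.ofReal (t ^ n) * v) := (two_mul _).symm
          _ ≤ ENNReal.ofReal ((2*t)^n) * v := h2n
          _ = volume A + ENNReal.ofReal (t ^ n) * v := hsum.symm
      exact (ENNReal.add_le_add_iff_right hfin).1 hsum2
    have hGA : ENNReal.ofReal (c₅ * t ^ (a - σ*q) * g t ^ θ) * (ENNReal.ofReal (t ^ n) * v)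
        ≤ ∫⁻ y in A, F y := by
      calc ENNReal.ofReal (c₅ * t ^ (a - σ*q) * g t ^ θ) * (ENNReal.ofReal (t ^ n) * v)
          ≤ ENNReal.ofReal (c₅ * t ^ (a - σ*q) * g t ^ θ) * volume A :=
            mul_le_mul_right hvol _
        _ = ∫⁻ _ in A, ENNReal.ofReal (c₅ * t ^ (a - σ*q) * g t ^ θ) :=
            (setLIntegral_const _ _).symm
        _ ≤ ∫⁻ y in A, F y := setLIntegral_mono' hAmeas hpt
    have hXnn : 0 ≤ c₅ * t ^ (a - σ*q) * g t ^ θ :=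
      mul_nonneg (mul_nonneg hc₅.le (Real.rpow_nonneg ht0.le _)) (Real.rpow_nonneg (hgnn t) _)
    have hGrec : G t + ENNReal.ofReal (c₉ * t ^ δ * g t ^ θ) ≤ G (2*t) := by
      have hdisj2 : Disjoint (Metric.ball (0:EuclideanSpace ℝ (Fin n)) t) A :=
        Set.disjoint_sdiff_right.mono_left Metric.ball_subset_closedBall
      have hcup : (∫⁻ y in Metric.ball (0:EuclideanSpace ℝ (Fin n)) t ∪ A, F y) =
          G t + ∫⁻ y in A, F y := lintegral_union hAmeas hdisj2
      have hsubU : Metric.ball (0:EuclideanSpace ℝ (Fin n)) t ∪ A ⊆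
          Metric.ball 0 (2*t) :=
        union_subset (Metric.ball_subset_ball (by linarith)) diff_subset
      have htn : t ^ (a - σ*q) * t ^ (n:ℕ) = t ^ δ := by
        rw [← Real.rpow_natCast t n, ← Real.rpow_add ht0, hδdef]
        congr 1
        have : q * σ = σ * q := by ring
        rw [this]; ring
      calc G t + ENNReal.ofReal (c₉ * t ^ δ * g t ^ θ)
          ≤ G t + ∫⁻ y in A, F y := by
            apply add_le_add_right
            refine le_trans (le_of_eq ?_) hGA
            rw [hvr', ← ENNReal.ofReal_mul (by positivity), ← ENNReal.ofReal_mul hXnn]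
            congr 1
            calc c₉ * t ^ δ * g t ^ θ
                = c₅ * (t ^ (a - σ*q) * t ^ (n:ℕ)) * g t ^ θ * vr := by rw [htn, hc₉def]; ring
              _ = c₅ * t ^ (a - σ*q) * g t ^ θ * (t ^ (n:ℕ) * vr) := by ring
        _ = ∫⁻ y in Metric.ball (0:EuclideanSpace ℝ (Fin n)) t ∪ A, F y := hcup.symm
        _ ≤ G (2*t) := lintegral_mono_set hsubU
    have h1 := ENNReal.toReal_mono (hGne (2*t)) hGrec
    rw [ENNReal.toReal_add (hGne t) ENNReal.ofReal_ne_top,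
      ENNReal.toReal_ofReal (by
        exact mul_nonneg (mul_nonneg hc₉.le (Real.rpow_nonneg ht0.le _))
          (Real.rpow_nonneg (hgnn t) _))] at h1
    exact h1
  -- the dyadic sequence
  set ak : ℕ → ℝ := fun k => g ((2:ℝ) ^ k) with hakdef
  have hak0 : 0 < ak 0 := by
    have h1 : ((2:ℝ) ^ (0:ℕ)) = 1 := pow_zero 2
    show 0 < g ((2:ℝ) ^ (0:ℕ))
    rw [h1]; exact hg1
  have hakmono : Monotone ak := fun i j h => hgmono (pow_le_pow_right₀ one_le_two h)
  have hakrec : ∀ k : ℕ, ak k + c₉ * (2:ℝ) ^ ((k:ℝ) * δ) * ak k ^ θ ≤ ak (k+1) := by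
    intro k
    have hk1 : (1:ℝ) ≤ (2:ℝ) ^ k := one_le_pow₀ one_le_two
    have h0 := hgrec ((2:ℝ) ^ k) hk1
    have h2k : (2:ℝ) * (2:ℝ) ^ k = (2:ℝ) ^ (k+1) := by rw [pow_succ]; ring
    have hexp : ((2:ℝ) ^ k) ^ δ = (2:ℝ) ^ ((k:ℝ) * δ) := by
      rw [← Real.rpow_natCast 2 k, ← Real.rpow_mul (by norm_num)]
    rw [h2k, hexp] at h0
    exact h0
  have hfreq := seq_blowup m δ θ c₉ hm hδnn hθ hc₉ hγpos ak hak0 hakmono hakrec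
  -- each good dyadic interval contributes at least ε₀
  set ε₀ : ℝ := (2:ℝ) ^ (-σ) / 2 with hε₀def
  have hε₀pos : 0 < ε₀ := by positivity
  have hterm : ∀ k : ℕ, (2:ℝ) ^ ((k:ℝ) * m) ≤ ak k →
      ENNReal.ofReal ε₀ ≤ ∫⁻ t in Set.Ioc ((2:ℝ)^k) ((2:ℝ)^(k+1)),
        ((ENNReal.ofReal (t ^ (p * β - (n : ℝ))) * G t) ^ κ) / ENNReal.ofReal t := by
    intro k hk
    have hS : (0:ℝ) < (2:ℝ)^k := by positivity
    have hT : (0:ℝ) < (2:ℝ)^(k+1) := by positivity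
    have hST : (2:ℝ)^k ≤ (2:ℝ)^(k+1) := by
      rw [pow_succ]; nlinarith
    have hakpos : 0 < ak k := lt_of_lt_of_le hak0 (hakmono (Nat.zero_le k))
    have hptk : ∀ t ∈ Set.Ioc ((2:ℝ)^k) ((2:ℝ)^(k+1)),
        (ENNReal.ofReal (((2:ℝ)^(k+1)) ^ (p*β - (n:ℝ))) * ENNReal.ofReal (ak k)) ^ κ /
          ENNReal.ofReal ((2:ℝ)^(k+1)) ≤
        ((ENNReal.ofReal (t ^ (p * β - (n : ℝ))) * G t) ^ κ) / ENNReal.ofReal t := by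
      rintro t ⟨ht1, ht2⟩
      have ht0 : 0 < t := lt_trans hS ht1
      have hcoef : ENNReal.ofReal (((2:ℝ)^(k+1)) ^ (p*β-(n:ℝ))) ≤
          ENNReal.ofReal (t ^ (p*β-(n:ℝ))) :=
        ENNReal.ofReal_le_ofReal (Real.rpow_le_rpow_of_nonpos ht0 ht2 (by linarith))
      have hGget : ENNReal.ofReal (ak k) ≤ G t := by
        have h1 : ENNReal.ofReal (ak k) = G ((2:ℝ)^k) := (hGofg _).symm
        rw [h1]; exact hGmono ht1.le
      exact ENNReal.div_le_div (ENNReal.rpow_le_rpow (mul_le_mul' hcoef hGget) hκ.le)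
        (ENNReal.ofReal_le_ofReal ht2)
    have hint : (ENNReal.ofReal (((2:ℝ)^(k+1)) ^ (p*β - (n:ℝ))) * ENNReal.ofReal (ak k)) ^ κ /
        ENNReal.ofReal ((2:ℝ)^(k+1)) * ENNReal.ofReal ((2:ℝ)^k) ≤
        ∫⁻ t in Set.Ioc ((2:ℝ)^k) ((2:ℝ)^(k+1)),
          ((ENNReal.ofReal (t ^ (p * β - (n : ℝ))) * G t) ^ κ) / ENNReal.ofReal t := by
      calc (ENNReal.ofReal (((2:ℝ)^(k+1)) ^ (p*β - (n:ℝ))) * ENNReal.ofReal (ak k)) ^ κ /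
          ENNReal.ofReal ((2:ℝ)^(k+1)) * ENNReal.ofReal ((2:ℝ)^k)
          = ∫⁻ _ in Set.Ioc ((2:ℝ)^k) ((2:ℝ)^(k+1)),
              (ENNReal.ofReal (((2:ℝ)^(k+1)) ^ (p*β - (n:ℝ))) * ENNReal.ofReal (ak k)) ^ κ /
                ENNReal.ofReal ((2:ℝ)^(k+1)) := by
            rw [setLIntegral_const, Real.volume_Ioc]
            congr 2
            rw [pow_succ]; ring
        _ ≤ _ := setLIntegral_mono' measurableSet_Ioc hptk
    refine le_trans ?_ hint
    have hcsteq : (ENNReal.ofReal (((2:ℝ)^(k+1)) ^ (p*β - (n:ℝ))) * ENNReal.ofReal (ak k)) ^ κ /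
        ENNReal.ofReal ((2:ℝ)^(k+1)) * ENNReal.ofReal ((2:ℝ)^k) =
        ENNReal.ofReal ((((2:ℝ)^(k+1)) ^ (p*β-(n:ℝ)) * ak k) ^ κ / ((2:ℝ)^(k+1)) * ((2:ℝ)^k)) := by
      rw [← ENNReal.ofReal_mul (Real.rpow_nonneg hT.le _),
        ENNReal.ofReal_rpow_of_pos (mul_pos (Real.rpow_pos_of_pos hT _) hakpos),
        ← ENNReal.ofReal_div_of_pos hT, ← ENNReal.ofReal_mul (by positivity)]
    rw [hcsteq]
    apply ENNReal.ofReal_le_ofReal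
    -- the real computation
    have hTr : ((2:ℝ)^(k+1) : ℝ) = (2:ℝ) ^ ((k:ℝ)+1) := by
      rw [← Real.rpow_natCast 2 (k+1)]; push_cast; ring_nf
    have hSr : ((2:ℝ)^k : ℝ) = (2:ℝ) ^ ((k:ℝ)) := (Real.rpow_natCast 2 k).symm
    have h1 : (2:ℝ) ^ ((k:ℝ)*σ) ≤ ak k ^ κ := by
      have h2 := Real.rpow_le_rpow (Real.rpow_nonneg (by norm_num : (0:ℝ) ≤ 2) _) hk hκ.le
      rwa [← Real.rpow_mul (by norm_num : (0:ℝ) ≤ 2),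
        show (k:ℝ)*m*κ = (k:ℝ)*σ from by rw [mul_assoc, hmκ]] at h2
    have hbase : (((2:ℝ)^(k+1)) ^ (p*β-(n:ℝ)) * ak k) ^ κ
        = (2:ℝ) ^ (-(((k:ℝ)+1)*σ)) * ak k ^ κ := by
      rw [Real.mul_rpow (Real.rpow_nonneg hT.le _) hakpos.le, hTr,
        ← Real.rpow_mul (by norm_num : (0:ℝ) ≤ 2),
        ← Real.rpow_mul (by norm_num : (0:ℝ) ≤ 2),
        show ((k:ℝ)+1) * (p*β-(n:ℝ)) * κ = -(((k:ℝ)+1)*σ) from by rw [mul_assoc, hκσ]; ring]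
    have key : (2:ℝ) ^ (-(((k:ℝ)+1)*σ)) * (2:ℝ)^((k:ℝ)*σ) / (2:ℝ)^((k:ℝ)+1) * (2:ℝ)^((k:ℝ))
        = ε₀ := by
      rw [div_eq_mul_inv, ← Real.rpow_neg (by norm_num : (0:ℝ) ≤ 2) ((k:ℝ)+1),
        ← Real.rpow_add two_pos, ← Real.rpow_add two_pos, ← Real.rpow_add two_pos,
        show -(((k:ℝ)+1)*σ) + (k:ℝ)*σ + -((k:ℝ)+1) + (k:ℝ) = -σ + (-1) from by ring,
        Real.rpow_add two_pos, Real.rpow_neg_one, hε₀def]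
      ring
    calc ε₀ = (2:ℝ)^(-(((k:ℝ)+1)*σ)) * (2:ℝ)^((k:ℝ)*σ) / (2:ℝ)^((k:ℝ)+1) * (2:ℝ)^((k:ℝ)) :=
          key.symm
      _ ≤ (2:ℝ)^(-(((k:ℝ)+1)*σ)) * ak k ^ κ / (2:ℝ)^((k:ℝ)+1) * (2:ℝ)^((k:ℝ)) := by
          gcongr <;> first
            | exact Real.rpow_nonneg (by norm_num) _
            | exact h1
            | positivity
      _ = (((2:ℝ)^(k+1)) ^ (p*β-(n:ℝ)) * ak k) ^ κ / ((2:ℝ)^(k+1)) * ((2:ℝ)^k) := by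
          rw [hbase, hTr, hSr]
  -- extraction of infinitely many good indices
  obtain ⟨φ, hφmono, hφgood⟩ := Filter.extraction_of_frequently_atTop
    (Filter.frequently_atTop.2 fun b => (hfreq b).imp fun k hk => ⟨hk.1, hk.2⟩)
  have hwlb : ∀ N : ℕ, (N:ℝ≥0∞) * ENNReal.ofReal ε₀ ≤ wolff n β p f 0 := by
    intro N
    set s : Finset ℕ := (Finset.range N).image φ with hs
    have hcard : s.card = N := by
      rw [hs, Finset.card_image_of_injective _ hφmono.injective, Finset.card_range]
    have hIoc : ∀ i j : ℕ, i ≠ j →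
        Disjoint (Set.Ioc ((2:ℝ)^i) ((2:ℝ)^(i+1))) (Set.Ioc ((2:ℝ)^j) ((2:ℝ)^(j+1))) := by
      intro i j hij
      rw [Set.Ioc_disjoint_Ioc]
      rcases lt_or_gt_of_ne hij with h | h
      · have h2 : (2:ℝ)^(i+1) ≤ (2:ℝ)^j := pow_le_pow_right₀ one_le_two h
        exact le_trans (min_le_left _ _) (le_trans h2 (le_max_right _ _))
      · have h2 : (2:ℝ)^(j+1) ≤ (2:ℝ)^i := pow_le_pow_right₀ one_le_two h
        exact le_trans (min_le_right _ _) (le_trans h2 (le_max_left _ _))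
    have hdisj : Set.PairwiseDisjoint (↑s : Set ℕ)
        (fun k => Set.Ioc ((2:ℝ)^k) ((2:ℝ)^(k+1))) :=
      fun i _ j _ hij => hIoc i j hij
    calc (N:ℝ≥0∞) * ENNReal.ofReal ε₀
        = ∑ _k ∈ s, ENNReal.ofReal ε₀ := by
          rw [Finset.sum_const, hcard, nsmul_eq_mul]
      _ ≤ ∑ k ∈ s, ∫⁻ t in Set.Ioc ((2:ℝ)^k) ((2:ℝ)^(k+1)),
            ((ENNReal.ofReal (t ^ (p * β - (n : ℝ))) * G t) ^ κ) / ENNReal.ofReal t := by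
          apply Finset.sum_le_sum
          intro k hk
          obtain ⟨j, _, rfl⟩ := Finset.mem_image.1 hk
          exact hterm _ (hφgood j)
      _ = ∫⁻ t in ⋃ k ∈ s, Set.Ioc ((2:ℝ)^k) ((2:ℝ)^(k+1)),
            ((ENNReal.ofReal (t ^ (p * β - (n : ℝ))) * G t) ^ κ) / ENNReal.ofReal t :=
          (lintegral_biUnion_finset hdisj (fun _ _ => measurableSet_Ioc) _).symm
      _ ≤ ∫⁻ t in Set.Ioi (0:ℝ),
            ((ENNReal.ofReal (t ^ (p * β - (n : ℝ))) * G t) ^ κ) / ENNReal.ofReal t := by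
          apply lintegral_mono_set
          apply Set.iUnion₂_subset
          intro k _ t ht
          exact lt_trans (by positivity) ht.1
      _ = wolff n β p f 0 := (hwolff 0).symm
  obtain ⟨N, hN⟩ := exists_nat_gt ((wolff n β p f 0).toReal / ε₀)
  have h1 := ENNReal.toReal_mono hw0ne (hwlb N)
  rw [ENNReal.toReal_mul, ENNReal.toReal_ofReal hε₀pos.le, ENNReal.toReal_natCast] at h1
  rw [div_lt_iff₀ hε₀pos] at hN
  linarith
end

section
/- Assume n ≥ 3, p ∈ (1,2], q > p−1, β > 0, 0 ≤ −a < pβ < n, and let s₀ = n(q−p+1)/(pβ+a). Let r₀ ∈ [s₀, ∞) and let u be a positive solution of the integral equation (IE) which is bounded on ℝ^n but does not belong to L^{r₀}(ℝ^n). If the limit lim_{|x|→∞} u(x)|x|^θ exists and lies in (0,∞) for some θ ∈ ℝ, then θ = (pβ+a)/(q−p+1). -/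
open MeasureTheory Metric Set Filter ENNReal

/-- helper: the power of an interior point dominates the min of the endpoint powers. -/
lemma min_rpow_le {s t v e : ℝ} (hs : 0 < s) (hst : s ≤ t) (htv : t ≤ v) :
    min (s ^ e) (v ^ e) ≤ t ^ e := by
  rcases le_total 0 e with he | he
  · exact le_trans (min_le_left _ _) (Real.rpow_le_rpow hs.le hst he)
  · exact le_trans (min_le_right _ _) (Real.rpow_le_rpow_of_nonpos (hs.trans_le hst) htv he)

/-- helper: two-sided tail bounds from the limit along the cobounded filter. -/
lemma tail_bounds {n : ℕ} {u : EuclideanSpace ℝ (Fin n) → ℝ} {θ L : ℝ} (hL : 0 < L)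
    (h : Tendsto (fun x : EuclideanSpace ℝ (Fin n) => u x * ‖x‖ ^ θ)
        (Bornology.cobounded (EuclideanSpace ℝ (Fin n))) (nhds L)) :
    ∃ M : ℝ, 1 ≤ M ∧ ∀ x : EuclideanSpace ℝ (Fin n), M ≤ ‖x‖ →
      L / 2 * ‖x‖ ^ (-θ) ≤ u x ∧ u x ≤ 2 * L * ‖x‖ ^ (-θ) := by
  have hev : ∀ᶠ x in Bornology.cobounded (EuclideanSpace ℝ (Fin n)),
      u x * ‖x‖ ^ θ ∈ Set.Ioo (L / 2) (2 * L) :=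
    h (Ioo_mem_nhds (by linarith) (by linarith))
  rw [Filter.hasBasis_cobounded_norm.eventually_iff] at hev
  obtain ⟨M₀, -, hM₀⟩ := hev
  refine ⟨max M₀ 1, le_max_right _ _, fun x hx => ?_⟩
  have hx₀ : M₀ ≤ ‖x‖ := le_trans (le_max_left _ _) hx
  have h1 : (1 : ℝ) ≤ ‖x‖ := le_trans (le_max_right _ _) hx
  have hxpos : (0 : ℝ) < ‖x‖ := by linarith
  have hmem := hM₀ hx₀
  simp only [Set.mem_Ioo] at hmem
  have hpow : (0 : ℝ) < ‖x‖ ^ θ := Real.rpow_pos_of_pos hxpos θ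
  have hinv : ‖x‖ ^ (-θ) = (‖x‖ ^ θ)⁻¹ := Real.rpow_neg hxpos.le θ
  have e1 : u x * ‖x‖ ^ θ * (‖x‖ ^ θ)⁻¹ = u x := by field_simp
  constructor
  · rw [hinv]
    calc L / 2 * (‖x‖ ^ θ)⁻¹ ≤ u x * ‖x‖ ^ θ * (‖x‖ ^ θ)⁻¹ :=
          mul_le_mul_of_nonneg_right hmem.1.le (inv_nonneg.2 hpow.le)
      _ = u x := e1
  · rw [hinv]
    calc u x = u x * ‖x‖ ^ θ * (‖x‖ ^ θ)⁻¹ := e1.symm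
      _ ≤ 2 * L * (‖x‖ ^ θ)⁻¹ :=
          mul_le_mul_of_nonneg_right hmem.2.le (inv_nonneg.2 hpow.le)

/-- helper: lower bound for the integral over a ball of a function bounded below. -/
lemma ball_lintegral_lower {n : ℕ} [Nontrivial (EuclideanSpace ℝ (Fin n))]
    (f : EuclideanSpace ℝ (Fin n) → ℝ)
    (x : EuclideanSpace ℝ (Fin n)) {r K : ℝ} (hr : 0 < r) (hK : 0 ≤ K)
    (hfK : ∀ y ∈ Metric.ball x r, K ≤ f y) :
    ENNReal.ofReal (K * (r ^ n *
        (volume (Metric.ball (0 : EuclideanSpace ℝ (Fin n)) 1)).toReal))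
      ≤ ∫⁻ y in Metric.ball x r, ENNReal.ofReal (f y) := by
  have hvol : volume (Metric.ball x r) =
      ENNReal.ofReal (r ^ n) * volume (Metric.ball (0 : EuclideanSpace ℝ (Fin n)) 1) := by
    rw [Measure.addHaar_ball_of_pos _ x hr, finrank_euclideanSpace_fin]
  calc ENNReal.ofReal (K * (r ^ n *
        (volume (Metric.ball (0 : EuclideanSpace ℝ (Fin n)) 1)).toReal))
      = ENNReal.ofReal K * volume (Metric.ball x r) := by
        rw [hvol, ENNReal.ofReal_mul hK, ENNReal.ofReal_mul (by positivity),
          ENNReal.ofReal_toReal measure_ball_lt_top.ne]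
    _ = ∫⁻ _ in Metric.ball x r, ENNReal.ofReal K := (setLIntegral_const _ _).symm
    _ ≤ ∫⁻ y in Metric.ball x r, ENNReal.ofReal (f y) :=
        setLIntegral_mono' measurableSet_ball
          (fun y hy => ENNReal.ofReal_le_ofReal (hfK y hy))

/-- helper: lower bound for the Wolff potential from a lower bound on the inner integral. -/
lemma wolff_lower {n : ℕ} {β p : ℝ} (hp : 1 < p) (hpβn : p * β - (n : ℝ) ≤ 0)
    (f : EuclideanSpace ℝ (Fin n) → ℝ)
    (x : EuclideanSpace ℝ (Fin n)) {m I : ℝ} (hm : 0 < m) (hI : 0 ≤ I)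
    (hinner : ENNReal.ofReal I ≤ ∫⁻ y in Metric.ball x (m / 2), ENNReal.ofReal (f y)) :
    ENNReal.ofReal ((m ^ (p * β - (n : ℝ)) * I) ^ (1 / (p - 1)) / 2) ≤ wolff n β p f x := by
  have hp1 : (0:ℝ) < p - 1 := sub_pos.mpr hp
  have hexp : (0 : ℝ) ≤ 1 / (p - 1) := le_of_lt (div_pos one_pos hp1)
  set X : ℝ := (m ^ (p * β - (n : ℝ)) * I) ^ (1 / (p - 1)) with hX
  have hX0 : 0 ≤ X := Real.rpow_nonneg (by positivity) _
  set c : ℝ≥0∞ := ENNReal.ofReal X / ENNReal.ofReal m with hc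
  have key : ∀ t ∈ Set.Ioo (m / 2) m, c ≤
      ((ENNReal.ofReal (t ^ (p * β - (n : ℝ))) *
        ∫⁻ y in Metric.ball x t, ENNReal.ofReal (f y)) ^ (1 / (p - 1))) /
      ENNReal.ofReal t := by
    intro t ht
    have ht0 : 0 < t := lt_trans (by positivity) ht.1
    have h1 : ENNReal.ofReal (m ^ (p * β - (n : ℝ))) ≤ ENNReal.ofReal (t ^ (p * β - (n : ℝ))) :=
      ENNReal.ofReal_le_ofReal (Real.rpow_le_rpow_of_nonpos ht0 ht.2.le hpβn)
    have h2 : ENNReal.ofReal I ≤ ∫⁻ y in Metric.ball x t, ENNReal.ofReal (f y) :=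
      le_trans hinner (lintegral_mono_set (Metric.ball_subset_ball (by linarith [ht.1])))
    have h3 : ENNReal.ofReal (m ^ (p * β - (n : ℝ)) * I) ≤
        ENNReal.ofReal (t ^ (p * β - (n : ℝ))) *
          ∫⁻ y in Metric.ball x t, ENNReal.ofReal (f y) := by
      rw [ENNReal.ofReal_mul (Real.rpow_nonneg hm.le _)]
      exact mul_le_mul' h1 h2
    have h4 : ENNReal.ofReal X ≤
        (ENNReal.ofReal (t ^ (p * β - (n : ℝ))) *
          ∫⁻ y in Metric.ball x t, ENNReal.ofReal (f y)) ^ (1 / (p - 1)) := by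
      rw [hX, ← ENNReal.ofReal_rpow_of_nonneg (by positivity) hexp]
      exact ENNReal.rpow_le_rpow h3 hexp
    exact ENNReal.div_le_div h4 (ENNReal.ofReal_le_ofReal ht.2.le)
  have heq : ENNReal.ofReal (X / 2) = c * ENNReal.ofReal (m / 2) := by
    rw [hc, ← ENNReal.ofReal_div_of_pos hm, ← ENNReal.ofReal_mul (by positivity)]
    congr 1
    field_simp
  calc ENNReal.ofReal (X / 2) = c * ENNReal.ofReal (m / 2) := heq
    _ = c * volume (Set.Ioo (m / 2) m) := by rw [Real.volume_Ioo]; congr 1; ring_nf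
    _ = ∫⁻ _ in Set.Ioo (m / 2) m, c := (setLIntegral_const _ _).symm
    _ ≤ ∫⁻ t in Set.Ioo (m / 2) m,
        ((ENNReal.ofReal (t ^ (p * β - (n : ℝ))) *
          ∫⁻ y in Metric.ball x t, ENNReal.ofReal (f y)) ^ (1 / (p - 1))) /
        ENNReal.ofReal t := setLIntegral_mono' measurableSet_Ioo key
    _ ≤ wolff n β p f x :=
        lintegral_mono_set (fun t ht => lt_trans (by positivity) ht.1)

/-- a bounded positive solution of the integral equation which is not in
`L^{r₀}(ℝⁿ)` (for some `r₀ ≥ s₀`) and decays exactly with some rate `θ` must decay with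
the slow rate `(pβ+a)/(q-p+1)`. -/
theorem stmt1_slow_decay_rate
    (n : ℕ) (hn : 3 ≤ n) (p β a q : ℝ)
    (hp1 : 1 < p) (hp2 : p ≤ 2) (hβ : 0 < β)
    (ha0 : 0 ≤ -a) (ha : -a < p * β) (hβn : p * β < n)
    (hq1 : p - 1 < q)
    (R u : EuclideanSpace ℝ (Fin n) → ℝ)
    (hR : DoubleBounded R) (hu : IsIESolutionWith n β p a q R u)
    (r₀ : ℝ) (hr₀ : n * (q - p + 1) / (p * β + a) ≤ r₀)
    (hbdd : ∃ C : ℝ, ∀ x, u x ≤ C)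
    (hnotLr : ¬ MemLp u (ENNReal.ofReal r₀) volume)
    (θ : ℝ)
    (hlim : ∃ L : ℝ, 0 < L ∧
      Tendsto (fun x : EuclideanSpace ℝ (Fin n) => u x * ‖x‖ ^ θ)
        (Bornology.cobounded (EuclideanSpace ℝ (Fin n))) (nhds L)) :
    θ = (p * β + a) / (q - p + 1) := by
  obtain ⟨Cr, hCr, hRbd⟩ := hR
  obtain ⟨hucont, hupos, huie⟩ := hu
  obtain ⟨L, hL, hlimT⟩ := hlim
  obtain ⟨M, hM1, hMbd⟩ := tail_bounds hL hlimT
  haveI : Nonempty (Fin n) := ⟨⟨0, by omega⟩⟩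
  have hp1' : (0:ℝ) < p - 1 := sub_pos.mpr hp1
  have hq0 : (0:ℝ) < q := by linarith
  have hqp : (0:ℝ) < q - p + 1 := by linarith
  have hpβa : (0:ℝ) < p * β + a := by linarith
  have hn0 : (0:ℝ) < (n:ℝ) := by
    have : 0 < n := by omega
    exact_mod_cast this
  have haneg : a ≤ 0 := by linarith
  -- Part A: p*β + a ≤ θ*(q-p+1)
  have partA : p * β + a ≤ θ * (q - p + 1) := by
    by_contra hcon
    push_neg at hcon
    set δ : ℝ := (p * β + a - θ * q) / (p - 1) with hδ
    have hδθ : 0 < δ + θ := by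
      have h0 : 0 < (p * β + a - θ * q) + θ * (p - 1) := by nlinarith
      have hde : δ + θ = ((p * β + a - θ * q) + θ * (p - 1)) / (p - 1) := by
        rw [hδ, div_add' _ _ _ hp1'.ne']
      rw [hde]
      exact div_pos h0 hp1'
    set V : ℝ := (volume (Metric.ball (0 : EuclideanSpace ℝ (Fin n)) 1)).toReal with hV
    have hV0 : 0 < V :=
      ENNReal.toReal_pos (measure_ball_pos _ _ one_pos).ne' measure_ball_lt_top.ne
    set κ : ℝ := min ((1/2 : ℝ) ^ (-(θ * q))) ((3/2 : ℝ) ^ (-(θ * q))) with hκ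
    have hκ0 : 0 < κ :=
      lt_min (Real.rpow_pos_of_pos (by norm_num) _) (Real.rpow_pos_of_pos (by norm_num) _)
    set D₀ : ℝ := (3/2 : ℝ) ^ a * ((L/2) ^ q * κ) * ((1/2 : ℝ) ^ n * V) with hD₀
    have hD₀0 : 0 < D₀ := by
      have h1 : (0:ℝ) < (3/2 : ℝ) ^ a := Real.rpow_pos_of_pos (by norm_num) _
      have h2 : (0:ℝ) < (L/2) ^ q := Real.rpow_pos_of_pos (by linarith) _
      positivity
    set D : ℝ := D₀ ^ (1 / (p - 1)) / 2 with hD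
    have hD0 : 0 < D := by
      have := Real.rpow_pos_of_pos hD₀0 (1 / (p - 1))
      positivity
    set c₀ : ℝ := (1 / Cr) * D with hc₀
    have hc₀0 : 0 < c₀ := by positivity
    have key : ∀ m : ℝ, max (2 * M) 2 ≤ m → c₀ * m ^ (δ + θ) ≤ 2 * L := by
      intro m hm
      have hm2 : (2:ℝ) ≤ m := le_trans (le_max_right _ _) hm
      have hmM : 2 * M ≤ m := le_trans (le_max_left _ _) hm
      have hm0 : (0:ℝ) < m := by linarith
      set x : EuclideanSpace ℝ (Fin n) := EuclideanSpace.single (⟨0, by omega⟩ : Fin n) m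
        with hxdef
      have hxm : ‖x‖ = m := by
        rw [hxdef, EuclideanSpace.norm_single, Real.norm_of_nonneg hm0.le]
      set K : ℝ := m ^ a * (3/2 : ℝ) ^ a * ((L/2) ^ q * (m ^ (-(θ * q)) * κ)) with hKdef
      have hK0 : 0 ≤ K := by
        have h1 : (0:ℝ) < (3/2 : ℝ) ^ a := Real.rpow_pos_of_pos (by norm_num) _
        have h2 : (0:ℝ) < (L/2) ^ q := Real.rpow_pos_of_pos (by linarith) _
        positivity
      have hball : ∀ y ∈ Metric.ball x (m / 2), K ≤ ‖y‖ ^ a * u y ^ q := by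
        intro y hy
        rw [Metric.mem_ball, dist_eq_norm] at hy
        have hb1 : ‖x‖ - ‖y‖ ≤ ‖x - y‖ := norm_sub_norm_le x y
        have hb2 : ‖y‖ - ‖x‖ ≤ ‖y - x‖ := norm_sub_norm_le y x
        have hrev : ‖x - y‖ = ‖y - x‖ := norm_sub_rev x y
        have hy1 : m / 2 ≤ ‖y‖ := by rw [hxm] at hb1; rw [hrev] at hb1; linarith
        have hy2 : ‖y‖ ≤ 3 * m / 2 := by rw [hxm] at hb2; linarith
        have hy0 : (0:ℝ) < ‖y‖ := lt_of_lt_of_le (by positivity) hy1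
        have hyM : M ≤ ‖y‖ := by linarith
        have hu1 : L / 2 * ‖y‖ ^ (-θ) ≤ u y := (hMbd y hyM).1
        have ha1 : m ^ a * (3/2 : ℝ) ^ a ≤ ‖y‖ ^ a := by
          have h1 : (3 * m / 2 : ℝ) ^ a ≤ ‖y‖ ^ a :=
            Real.rpow_le_rpow_of_nonpos hy0 hy2 haneg
          have h2 : (3 * m / 2 : ℝ) ^ a = m ^ a * (3/2 : ℝ) ^ a := by
            rw [show (3 * m / 2 : ℝ) = m * (3/2) by ring,
              Real.mul_rpow hm0.le (by norm_num)]
          linarith [h2 ▸ h1]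
        have hu2 : (L/2) ^ q * (m ^ (-(θ * q)) * κ) ≤ u y ^ q := by
          have h1 : (L / 2 * ‖y‖ ^ (-θ)) ^ q ≤ u y ^ q :=
            Real.rpow_le_rpow (by positivity) hu1 hq0.le
          have h2 : (L / 2 * ‖y‖ ^ (-θ)) ^ q = (L/2) ^ q * ‖y‖ ^ (-(θ * q)) := by
            rw [Real.mul_rpow (by linarith) (Real.rpow_nonneg hy0.le _),
              ← Real.rpow_mul hy0.le]
            ring_nf
          have h3 : m ^ (-(θ * q)) * κ ≤ ‖y‖ ^ (-(θ * q)) := by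
            have hmin := min_rpow_le (e := -(θ * q)) (by positivity : (0:ℝ) < m / 2) hy1 hy2
            have e1 : (m / 2 : ℝ) ^ (-(θ * q)) = m ^ (-(θ * q)) * (1/2 : ℝ) ^ (-(θ * q)) := by
              rw [show (m / 2 : ℝ) = m * (1/2) by ring, Real.mul_rpow hm0.le (by norm_num)]
            have e2 : (3 * m / 2 : ℝ) ^ (-(θ * q)) = m ^ (-(θ * q)) * (3/2 : ℝ) ^ (-(θ * q)) := by
              rw [show (3 * m / 2 : ℝ) = m * (3/2) by ring, Real.mul_rpow hm0.le (by norm_num)]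
            have e3 : m ^ (-(θ * q)) * κ ≤
                min ((m / 2 : ℝ) ^ (-(θ * q))) ((3 * m / 2 : ℝ) ^ (-(θ * q))) := by
              rw [e1, e2, hκ]
              exact le_min
                (mul_le_mul_of_nonneg_left (min_le_left _ _) (Real.rpow_nonneg hm0.le _))
                (mul_le_mul_of_nonneg_left (min_le_right _ _) (Real.rpow_nonneg hm0.le _))
            linarith
          calc (L/2) ^ q * (m ^ (-(θ * q)) * κ) ≤ (L/2) ^ q * ‖y‖ ^ (-(θ * q)) :=
                mul_le_mul_of_nonneg_left h3 (Real.rpow_nonneg (by linarith) _)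
            _ = (L / 2 * ‖y‖ ^ (-θ)) ^ q := h2.symm
            _ ≤ u y ^ q := h1
        rw [hKdef]
        have hKa : (0:ℝ) ≤ (L/2) ^ q * (m ^ (-(θ * q)) * κ) := by
          have h2 : (0:ℝ) < (L/2) ^ q := Real.rpow_pos_of_pos (by linarith) _
          positivity
        exact mul_le_mul ha1 hu2 hKa (Real.rpow_nonneg hy0.le a)
      have hinner := ball_lintegral_lower _ x (by positivity : (0:ℝ) < m / 2) hK0 hball
      have hwl := wolff_lower hp1 (by linarith : p * β - (n:ℝ) ≤ 0)
        (fun y => ‖y‖ ^ a * u y ^ q) x hm0 (by positivity) hinner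
      obtain ⟨hfin, hueq⟩ := huie x
      have hT : (m ^ (p * β - (n:ℝ)) * (K * ((m/2) ^ n * V))) ^ (1 / (p - 1)) / 2 ≤
          (wolff n β p (fun y => ‖y‖ ^ a * u y ^ q) x).toReal :=
        (ENNReal.ofReal_le_iff_le_toReal hfin).mp hwl
      -- identify the left side with D * m ^ δ
      have step1 : ((m / 2 : ℝ)) ^ n = m ^ n * (1/2 : ℝ) ^ n := by
        rw [show (m / 2 : ℝ) = m * (1/2) by ring, mul_pow]
      have hXeq : m ^ (p * β - (n:ℝ)) * (K * ((m/2) ^ n * V)) =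
          m ^ (p * β + a - θ * q) * D₀ := by
        rw [hKdef, step1, ← Real.rpow_natCast m n, hD₀,
          show p * β + a - θ * q = (p * β - (n:ℝ)) + a + (-(θ * q)) + ((n:ℕ):ℝ) by
            ring,
          Real.rpow_add hm0, Real.rpow_add hm0, Real.rpow_add hm0]
        ring
      have hrw : (m ^ (p * β - (n:ℝ)) * (K * ((m/2) ^ n * V))) ^ (1 / (p - 1)) / 2 =
          D * m ^ δ := by
        rw [hXeq, Real.mul_rpow (Real.rpow_nonneg hm0.le _) hD₀0.le,
          ← Real.rpow_mul hm0.le, mul_one_div, hD, hδ]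
        ring
      rw [hrw] at hT
      have hux : c₀ * m ^ δ ≤ u x := by
        have hR1 : (0:ℝ) < 1 / Cr := by positivity
        calc c₀ * m ^ δ = (1 / Cr) * (D * m ^ δ) := by rw [hc₀]; ring
          _ ≤ R x * (wolff n β p (fun y => ‖y‖ ^ a * u y ^ q) x).toReal :=
              mul_le_mul (hRbd x).1 hT (by positivity) (le_trans hR1.le (hRbd x).1)
          _ = u x := hueq.symm
      have huxu : u x ≤ 2 * L * m ^ (-θ) := by
        have h := (hMbd x (by rw [hxm]; linarith)).2
        rwa [hxm] at h
      have h5 : c₀ * m ^ δ ≤ 2 * L * m ^ (-θ) := le_trans hux huxu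
      calc c₀ * m ^ (δ + θ) = (c₀ * m ^ δ) * m ^ θ := by
            rw [Real.rpow_add hm0]; ring
        _ ≤ (2 * L * m ^ (-θ)) * m ^ θ :=
            mul_le_mul_of_nonneg_right h5 (Real.rpow_nonneg hm0.le θ)
        _ = 2 * L := by
            rw [mul_assoc, ← Real.rpow_add hm0, neg_add_cancel, Real.rpow_zero, mul_one]
    have htend : Tendsto (fun m : ℝ => c₀ * m ^ (δ + θ)) atTop atTop :=
      (tendsto_rpow_atTop hδθ).const_mul_atTop hc₀0
    obtain ⟨m, hm1, hm2⟩ :=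
      ((htend.eventually_gt_atTop (2 * L)).and (eventually_ge_atTop (max (2 * M) 2))).exists
    exact absurd (key m hm2) (not_le.mpr hm1)
  -- Part B: θ*(q-p+1) ≤ p*β + a
  have partB : θ * (q - p + 1) ≤ p * β + a := by
    by_contra hcon
    push_neg at hcon
    have hθ : 0 < θ := by nlinarith
    have hθr : (n:ℝ) < θ * r₀ := by
      have h2 : θ * ((n:ℝ) * (q - p + 1) / (p * β + a)) ≤ θ * r₀ :=
        mul_le_mul_of_nonneg_left hr₀ hθ.le
      have h3 : (n:ℝ) < θ * ((n:ℝ) * (q - p + 1) / (p * β + a)) := by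
        rw [mul_div_assoc', lt_div_iff₀ hpβa]
        nlinarith [mul_lt_mul_of_pos_left hcon hn0]
      linarith
    obtain ⟨C, hC⟩ := hbdd
    have hC0 : (0:ℝ) < C := lt_of_lt_of_le (hupos 0) (hC 0)
    set C' : ℝ := max (2 * L * 2 ^ θ) (C * (1 + M) ^ θ) with hC'
    have h2θ : (0:ℝ) < (2:ℝ) ^ θ := Real.rpow_pos_of_pos two_pos θ
    have hC'0 : (0:ℝ) < C' := lt_of_lt_of_le (by positivity) (le_max_left _ _)
    have hglob : ∀ x : EuclideanSpace ℝ (Fin n), u x ≤ C' * (1 + ‖x‖) ^ (-θ) := by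
      intro x
      have h1x : (0:ℝ) < 1 + ‖x‖ := by positivity
      rcases le_or_gt M ‖x‖ with hxM | hxM
      · have hx1 : (1:ℝ) ≤ ‖x‖ := le_trans hM1 hxM
        have hb : ‖x‖ ^ (-θ) ≤ 2 ^ θ * (1 + ‖x‖) ^ (-θ) := by
          have h2x : 1 + ‖x‖ ≤ 2 * ‖x‖ := by linarith
          have h3 : (2 * ‖x‖) ^ (-θ) ≤ (1 + ‖x‖) ^ (-θ) :=
            Real.rpow_le_rpow_of_nonpos h1x h2x (by linarith)
          have h4 : (2 * ‖x‖ : ℝ) ^ (-θ) = 2 ^ (-θ) * ‖x‖ ^ (-θ) :=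
            Real.mul_rpow (by norm_num) (norm_nonneg x)
          have h5 : (2:ℝ) ^ θ * (2:ℝ) ^ (-θ) = 1 := by
            rw [← Real.rpow_add (by norm_num : (0:ℝ) < 2), add_neg_cancel, Real.rpow_zero]
          calc ‖x‖ ^ (-θ) = 2 ^ θ * (2 ^ (-θ) * ‖x‖ ^ (-θ)) := by
                rw [← mul_assoc, h5, one_mul]
            _ = 2 ^ θ * (2 * ‖x‖) ^ (-θ) := by rw [h4]
            _ ≤ 2 ^ θ * (1 + ‖x‖) ^ (-θ) := mul_le_mul_of_nonneg_left h3 (by positivity)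
        calc u x ≤ 2 * L * ‖x‖ ^ (-θ) := (hMbd x hxM).2
          _ ≤ 2 * L * (2 ^ θ * (1 + ‖x‖) ^ (-θ)) :=
              mul_le_mul_of_nonneg_left hb (by positivity)
          _ = (2 * L * 2 ^ θ) * (1 + ‖x‖) ^ (-θ) := by ring
          _ ≤ C' * (1 + ‖x‖) ^ (-θ) :=
              mul_le_mul_of_nonneg_right (le_max_left _ _) (by positivity)
      · have h6 : (1 + M : ℝ) ^ (-θ) ≤ (1 + ‖x‖) ^ (-θ) :=
          Real.rpow_le_rpow_of_nonpos h1x (by linarith) (by linarith)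
        have h7 : C * (1 + M) ^ θ * (1 + M) ^ (-θ) = C := by
          rw [mul_assoc, ← Real.rpow_add (by linarith : (0:ℝ) < 1 + M), add_neg_cancel,
            Real.rpow_zero, mul_one]
        have hCM : (0:ℝ) ≤ C * (1 + M) ^ θ := by positivity
        calc u x ≤ C := hC x
          _ = C * (1 + M) ^ θ * (1 + M) ^ (-θ) := h7.symm
          _ ≤ C * (1 + M) ^ θ * (1 + ‖x‖) ^ (-θ) := mul_le_mul_of_nonneg_left h6 hCM
          _ ≤ C' * (1 + ‖x‖) ^ (-θ) :=
              mul_le_mul_of_nonneg_right (le_max_right _ _) (by positivity)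
    have hr0pos : (0:ℝ) < r₀ := by
      have h11 : (0:ℝ) < (n:ℝ) * (q - p + 1) / (p * β + a) := by positivity
      linarith
    have hint : Integrable (fun x : EuclideanSpace ℝ (Fin n) => ‖u x‖ ^ r₀) volume := by
      have hg : Integrable
          (fun x : EuclideanSpace ℝ (Fin n) => C' ^ r₀ * (1 + ‖x‖) ^ (-(θ * r₀))) volume := by
        apply Integrable.const_mul
        apply integrable_one_add_norm (E := EuclideanSpace ℝ (Fin n))
        rw [finrank_euclideanSpace_fin]
        exact hθr
      apply hg.mono'
        ((hucont.norm.rpow_const (fun x => Or.inr hr0pos.le)).aestronglyMeasurable)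
      refine ae_of_all _ (fun x => ?_)
      have hunn : (0:ℝ) ≤ ‖u x‖ ^ r₀ := Real.rpow_nonneg (norm_nonneg _) _
      rw [Real.norm_eq_abs, abs_of_nonneg hunn, Real.norm_of_nonneg (hupos x).le]
      have h9 : u x ^ r₀ ≤ (C' * (1 + ‖x‖) ^ (-θ)) ^ r₀ :=
        Real.rpow_le_rpow (hupos x).le (hglob x) hr0pos.le
      have h10 : (C' * (1 + ‖x‖) ^ (-θ)) ^ r₀ = C' ^ r₀ * (1 + ‖x‖) ^ (-(θ * r₀)) := by
        rw [Real.mul_rpow hC'0.le (Real.rpow_nonneg (by positivity) _),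
          ← Real.rpow_mul (by positivity : (0:ℝ) ≤ 1 + ‖x‖), neg_mul]
      linarith [h10 ▸ h9]
    apply hnotLr
    have h0' : ENNReal.ofReal r₀ ≠ 0 := by
      simp only [ne_eq, ENNReal.ofReal_eq_zero, not_le]
      exact hr0pos
    have htop' : ENNReal.ofReal r₀ ≠ ∞ := ENNReal.ofReal_ne_top
    have hiff := memLp_norm_rpow_iff (μ := (volume : Measure (EuclideanSpace ℝ (Fin n)))) (q := ENNReal.ofReal r₀) (p := ENNReal.ofReal r₀)
      hucont.aestronglyMeasurable h0' htop'
    rw [ENNReal.toReal_ofReal hr0pos.le, ENNReal.div_self h0' htop'] at hiff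
    exact hiff.mp (memLp_one_iff_integrable.mpr hint)
  have : θ * (q - p + 1) = p * β + a := le_antisymm partB partA
  rw [eq_div_iff hqp.ne']
  linarith
end

section
/- Assume n ≥ 3, p ∈ (1,2], q > p−1, β > 0, 0 ≤ −a < pβ < n, and q > (n+a)(p−1)/(n−pβ). Let u be a positive solution of the integral equation (IE). Then for every θ < (pβ+a)/(q−p+1) there do NOT exist constants C > 0 and M > 0 such that u(x) ≥ C|x|^{−θ} for all |x| ≥ M; that is, the decay of u at infinity cannot be slower than the slow rate (pβ+a)/(q−p+1). -/
open MeasureTheory Metric Set Filter ENNReal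

private lemma min_rpow_le_s2 {r1 r2 s e : ℝ} (h1 : 0 < r1) (h12 : r1 ≤ s) (h2 : s ≤ r2) :
    min (r1 ^ e) (r2 ^ e) ≤ s ^ e := by
  rcases le_or_gt 0 e with he | he
  · exact le_trans (min_le_left _ _) (Real.rpow_le_rpow h1.le h12 he)
  · exact le_trans (min_le_right _ _)
      (Real.rpow_le_rpow_of_nonpos (h1.trans_le h12) h2 he.le)

/-- Key pointwise lower bound for the Wolff integrand. -/
private lemma key_lb (n : ℕ) (hn : 3 ≤ n) {p a q θ C M : ℝ} (β : ℝ)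
    (hp1 : 1 < p) (hq0 : 0 < q) (hC : 0 < C)
    {u : EuclideanSpace ℝ (Fin n) → ℝ}
    (hlow : ∀ x : EuclideanSpace ℝ (Fin n), M ≤ ‖x‖ → C * ‖x‖ ^ (-θ) ≤ u x)
    (x : EuclideanSpace ℝ (Fin n)) {t : ℝ}
    (hxt : ‖x‖ ≤ t / 2) (htM : 4 * M ≤ t) (ht0 : 0 < t) :
    ENNReal.ofReal ((C ^ q * min ((4:ℝ)⁻¹ ^ (a - θ * q)) ((2:ℝ)⁻¹ ^ (a - θ * q)) / 16 ^ n)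
          ^ (1 / (p - 1)) * t ^ ((p * β + (a - θ * q)) / (p - 1) - 1)) *
        volume (ball (0 : EuclideanSpace ℝ (Fin n)) 1) ^ (1 / (p - 1)) ≤
      ((ENNReal.ofReal (t ^ (p * β - (n : ℝ))) *
          ∫⁻ y in ball x t, ENNReal.ofReal (‖y‖ ^ a * u y ^ q)) ^ (1 / (p - 1))) /
        ENNReal.ofReal t := by
  have hp0 : 0 < p - 1 := by linarith
  have hr0 : (0:ℝ) ≤ 1 / (p - 1) := by positivity
  set e : ℝ := a - θ * q with he
  set κ : ℝ := min ((4:ℝ)⁻¹ ^ e) ((2:ℝ)⁻¹ ^ e) with hκ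
  have hκ0 : 0 < κ :=
    lt_min (Real.rpow_pos_of_pos (by norm_num) _) (Real.rpow_pos_of_pos (by norm_num) _)
  have hMt : M ≤ t / 4 := by linarith
  have ht4 : 0 < t / 4 := by linarith
  have hn0 : 0 < n := by omega
  set y0 : EuclideanSpace ℝ (Fin n) := EuclideanSpace.single (⟨0, hn0⟩ : Fin n) (3 * t / 8)
    with hy0
  have hy0n : ‖y0‖ = 3 * t / 8 := by
    rw [hy0, EuclideanSpace.norm_single, Real.norm_eq_abs, abs_of_nonneg (by linarith)]
  set B : Set (EuclideanSpace ℝ (Fin n)) := ball y0 (t / 16) with hB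
  have hBsub : B ⊆ ball x t := by
    intro y hy
    rw [hB, mem_ball] at hy
    rw [mem_ball]
    have h2 : dist y0 x ≤ ‖y0‖ + ‖x‖ := by
      rw [dist_eq_norm]; exact norm_sub_le _ _
    have h3 := dist_triangle y y0 x
    rw [hy0n] at h2
    linarith
  have hBnorm : ∀ y ∈ B, t / 4 ≤ ‖y‖ ∧ ‖y‖ ≤ t / 2 := by
    intro y hy
    rw [hB, mem_ball, dist_eq_norm] at hy
    have h := abs_norm_sub_norm_le y y0
    rw [hy0n] at h
    have h' := abs_le.1 (h.trans hy.le)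
    exact ⟨by linarith [h'.1], by linarith [h'.2]⟩
  -- pointwise bound on B
  have hpt : ∀ y ∈ B, C ^ q * (κ * t ^ e) ≤ ‖y‖ ^ a * u y ^ q := by
    intro y hy
    obtain ⟨h1, h2⟩ := hBnorm y hy
    have hy0' : 0 < ‖y‖ := lt_of_lt_of_le ht4 h1
    have hu1 : C * ‖y‖ ^ (-θ) ≤ u y := hlow y (le_trans hMt h1)
    have hu1' : (0:ℝ) ≤ C * ‖y‖ ^ (-θ) := by positivity
    have hu2 : (C * ‖y‖ ^ (-θ)) ^ q ≤ u y ^ q := Real.rpow_le_rpow hu1' hu1 hq0.le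
    have hu3 : (C * ‖y‖ ^ (-θ)) ^ q = C ^ q * ‖y‖ ^ (-θ * q) := by
      rw [Real.mul_rpow hC.le (Real.rpow_nonneg (norm_nonneg y) _),
        ← Real.rpow_mul (norm_nonneg y)]
    have hkey : κ * t ^ e ≤ ‖y‖ ^ e := by
      have hmin : min ((t / 4) ^ e) ((t / 2) ^ e) ≤ ‖y‖ ^ e := min_rpow_le_s2 ht4 h1 h2
      have h4 : (t / 4 : ℝ) ^ e = (4:ℝ)⁻¹ ^ e * t ^ e := by
        rw [← Real.mul_rpow (by norm_num) ht0.le, inv_mul_eq_div]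
      have h5 : (t / 2 : ℝ) ^ e = (2:ℝ)⁻¹ ^ e * t ^ e := by
        rw [← Real.mul_rpow (by norm_num) ht0.le, inv_mul_eq_div]
      calc κ * t ^ e = min ((4:ℝ)⁻¹ ^ e * t ^ e) ((2:ℝ)⁻¹ ^ e * t ^ e) :=
            min_mul_of_nonneg _ _ (Real.rpow_nonneg ht0.le e)
        _ = min ((t / 4) ^ e) ((t / 2) ^ e) := by rw [h4, h5]
        _ ≤ ‖y‖ ^ e := hmin
    have hexp : e = a + -θ * q := by rw [he]; ring
    calc C ^ q * (κ * t ^ e) ≤ C ^ q * ‖y‖ ^ e :=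
          mul_le_mul_of_nonneg_left hkey (Real.rpow_nonneg hC.le q)
      _ = C ^ q * (‖y‖ ^ a * ‖y‖ ^ (-θ * q)) := by rw [hexp, Real.rpow_add hy0']
      _ = ‖y‖ ^ a * (C ^ q * ‖y‖ ^ (-θ * q)) := by ring
      _ = ‖y‖ ^ a * (C * ‖y‖ ^ (-θ)) ^ q := by rw [hu3]
      _ ≤ ‖y‖ ^ a * u y ^ q :=
          mul_le_mul_of_nonneg_left hu2 (Real.rpow_nonneg (norm_nonneg y) a)
  -- mass lower bound
  have hmass : ENNReal.ofReal (C ^ q * (κ * t ^ e)) *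
      (ENNReal.ofReal ((t / 16) ^ n) * volume (ball (0 : EuclideanSpace ℝ (Fin n)) 1)) ≤
      ∫⁻ y in ball x t, ENNReal.ofReal (‖y‖ ^ a * u y ^ q) := by
    refine le_trans ?_ (lintegral_mono_set hBsub)
    refine le_trans ?_ (setLIntegral_mono' measurableSet_ball
      (fun y hy => ENNReal.ofReal_le_ofReal (hpt y hy)))
    rw [setLIntegral_const, hB,
      Measure.addHaar_ball_of_pos volume y0 (by linarith : (0:ℝ) < t / 16),
      finrank_euclideanSpace_fin]
  set vb : ℝ≥0∞ := volume (ball (0 : EuclideanSpace ℝ (Fin n)) 1) with hvb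
  -- real algebra
  have hreal : t ^ (p * β - (n:ℝ)) * (C ^ q * (κ * t ^ e)) * ((t / 16) ^ n) =
      (C ^ q * κ / 16 ^ n) * t ^ (p * β + e) := by
    have h6 : t ^ (p * β - (n:ℝ)) * t ^ ((n:ℕ):ℝ) * t ^ e = t ^ (p * β + e) := by
      rw [← Real.rpow_add ht0, ← Real.rpow_add ht0]
      congr 1; ring
    rw [div_pow, ← Real.rpow_natCast t n, ← h6]
    ring
  have h7 : ENNReal.ofReal (t ^ (p * β - (n:ℝ))) * (ENNReal.ofReal (C ^ q * (κ * t ^ e)) *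
      (ENNReal.ofReal ((t / 16) ^ n) * vb)) =
      ENNReal.ofReal ((C ^ q * κ / 16 ^ n) * t ^ (p * β + e)) * vb := by
    calc ENNReal.ofReal (t ^ (p * β - (n:ℝ))) * (ENNReal.ofReal (C ^ q * (κ * t ^ e)) *
          (ENNReal.ofReal ((t / 16) ^ n) * vb))
        = (ENNReal.ofReal (t ^ (p * β - (n:ℝ))) * ENNReal.ofReal (C ^ q * (κ * t ^ e)) *
            ENNReal.ofReal ((t / 16) ^ n)) * vb := by ring
      _ = ENNReal.ofReal ((C ^ q * κ / 16 ^ n) * t ^ (p * β + e)) * vb := by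
          rw [← ENNReal.ofReal_mul (Real.rpow_nonneg ht0.le _),
            ← ENNReal.ofReal_mul (by positivity), hreal]
  have hstep : ENNReal.ofReal ((C ^ q * κ / 16 ^ n) * t ^ (p * β + e)) * vb ≤
      ENNReal.ofReal (t ^ (p * β - (n:ℝ))) *
        ∫⁻ y in ball x t, ENNReal.ofReal (‖y‖ ^ a * u y ^ q) := by
    rw [← h7]
    exact mul_le_mul_right hmass _
  set c1 : ℝ := C ^ q * κ / 16 ^ n with hc1
  have hc1pos : 0 < c1 := by rw [hc1]; positivity
  set γ : ℝ := (p * β + e) / (p - 1) with hγ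
  have hpowEq : (ENNReal.ofReal (c1 * t ^ (p * β + e)) * vb) ^ (1 / (p - 1)) =
      ENNReal.ofReal (c1 ^ (1 / (p - 1)) * t ^ γ) * vb ^ (1 / (p - 1)) := by
    rw [ENNReal.mul_rpow_of_nonneg _ _ hr0,
      ENNReal.ofReal_rpow_of_nonneg (by positivity) hr0]
    congr 2
    rw [Real.mul_rpow hc1pos.le (Real.rpow_nonneg ht0.le _), ← Real.rpow_mul ht0.le,
      mul_one_div, hγ]
  have hdiv : (ENNReal.ofReal (c1 ^ (1 / (p - 1)) * t ^ γ) * vb ^ (1 / (p - 1))) /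
      ENNReal.ofReal t =
      ENNReal.ofReal (c1 ^ (1 / (p - 1)) * t ^ (γ - 1)) * vb ^ (1 / (p - 1)) := by
    have hre : c1 ^ (1 / (p - 1)) * t ^ γ / t = c1 ^ (1 / (p - 1)) * t ^ (γ - 1) := by
      rw [Real.rpow_sub ht0, Real.rpow_one, mul_div_assoc]
    calc (ENNReal.ofReal (c1 ^ (1 / (p - 1)) * t ^ γ) * vb ^ (1 / (p - 1))) /
          ENNReal.ofReal t
        = (ENNReal.ofReal (c1 ^ (1 / (p - 1)) * t ^ γ) / ENNReal.ofReal t) *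
            vb ^ (1 / (p - 1)) := by
          simp only [div_eq_mul_inv, mul_comm, mul_left_comm, mul_assoc]
      _ = ENNReal.ofReal (c1 ^ (1 / (p - 1)) * t ^ (γ - 1)) * vb ^ (1 / (p - 1)) := by
          rw [← ENNReal.ofReal_div_of_pos ht0, hre]
  refine le_trans (le_of_eq ?_)
    (ENNReal.div_le_div_right (ENNReal.rpow_le_rpow hstep hr0) _)
  rw [hpowEq, hdiv]

/-- If the decay exponent is at most the divergence threshold, the Wolff potential at 0
is infinite. -/
private lemma lemA (n : ℕ) (hn : 3 ≤ n) {p β a q θ C M : ℝ}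
    (hp1 : 1 < p) (hq0 : 0 < q) (hC : 0 < C) (hM : 0 < M)
    {u : EuclideanSpace ℝ (Fin n) → ℝ}
    (hlow : ∀ x : EuclideanSpace ℝ (Fin n), M ≤ ‖x‖ → C * ‖x‖ ^ (-θ) ≤ u x)
    (hθ0 : p - 1 ≤ p * β + (a - θ * q)) :
    wolff n β p (fun y => ‖y‖ ^ a * u y ^ q) 0 = ∞ := by
  have hp0 : 0 < p - 1 := by linarith
  set e : ℝ := a - θ * q with he
  set κ : ℝ := min ((4:ℝ)⁻¹ ^ e) ((2:ℝ)⁻¹ ^ e) with hκ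
  have hκ0 : 0 < κ :=
    lt_min (Real.rpow_pos_of_pos (by norm_num) _) (Real.rpow_pos_of_pos (by norm_num) _)
  set c2 : ℝ := (C ^ q * κ / 16 ^ n) ^ (1 / (p - 1)) with hc2
  have hc2pos : 0 < c2 := Real.rpow_pos_of_pos (by positivity) _
  set γ : ℝ := (p * β + e) / (p - 1) with hγ
  have hγ1 : 1 ≤ γ := by rw [hγ, le_div_iff₀ hp0]; linarith
  set vb := volume (ball (0 : EuclideanSpace ℝ (Fin n)) 1) with hvb
  set V : ℝ≥0∞ := vb ^ (1 / (p - 1)) with hV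
  have hV0 : V ≠ 0 :=
    (ENNReal.rpow_pos (measure_ball_pos volume _ one_pos) measure_ball_lt_top.ne).ne'
  set T0 : ℝ := max (4 * M) 1 with hT0
  have hT01 : (1:ℝ) ≤ T0 := le_max_right _ _
  have hT0pos : (0:ℝ) < T0 := by linarith
  have hkey : ∀ t ∈ Ioi T0, ENNReal.ofReal (c2 * T0 ^ (γ - 1)) * V ≤
      (ENNReal.ofReal (t ^ (p * β - (n:ℝ))) *
        ∫⁻ y in ball (0 : EuclideanSpace ℝ (Fin n)) t,
          ENNReal.ofReal (‖y‖ ^ a * u y ^ q)) ^ (1 / (p - 1)) / ENNReal.ofReal t := by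
    intro t ht
    rw [mem_Ioi] at ht
    have ht0 : 0 < t := hT0pos.trans ht
    refine le_trans ?_ (key_lb n hn β hp1 hq0 hC hlow 0 (by rw [norm_zero]; linarith)
      (le_trans (le_max_left _ _) ht.le) ht0)
    apply mul_le_mul_left
    apply ENNReal.ofReal_le_ofReal
    exact mul_le_mul_of_nonneg_left
      (Real.rpow_le_rpow hT0pos.le ht.le (by linarith)) hc2pos.le
  have hsub : Ioi T0 ⊆ Ioi (0:ℝ) := Ioi_subset_Ioi hT0pos.le
  have h1 : ∫⁻ _ in Ioi T0, (ENNReal.ofReal (c2 * T0 ^ (γ - 1)) * V) ≤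
      ∫⁻ t in Ioi T0, (ENNReal.ofReal (t ^ (p * β - (n:ℝ))) *
        ∫⁻ y in ball (0 : EuclideanSpace ℝ (Fin n)) t,
          ENNReal.ofReal (‖y‖ ^ a * u y ^ q)) ^ (1 / (p - 1)) / ENNReal.ofReal t :=
    setLIntegral_mono' measurableSet_Ioi hkey
  have h2 : ∫⁻ _ in Ioi T0, (ENNReal.ofReal (c2 * T0 ^ (γ - 1)) * V) =
      (ENNReal.ofReal (c2 * T0 ^ (γ - 1)) * V) * volume (Ioi T0) := setLIntegral_const _ _
  have hne : ENNReal.ofReal (c2 * T0 ^ (γ - 1)) * V ≠ 0 := by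
    apply mul_ne_zero _ hV0
    simp only [ne_eq, ENNReal.ofReal_eq_zero, not_le]
    positivity
  have h4 : (⊤:ℝ≥0∞) ≤ wolff n β p (fun y => ‖y‖ ^ a * u y ^ q) 0 := by
    have h3 := le_trans h1 (lintegral_mono_set hsub)
    rw [h2, Real.volume_Ioi, ENNReal.mul_top hne] at h3
    simpa [wolff] using h3
  exact top_le_iff.mp h4

/-- Bootstrap: a decay lower bound with exponent `θ` upgrades to one with exponent
`(θq - (pβ+a))/(p-1)`. -/
private lemma lemB (n : ℕ) (hn : 3 ≤ n) {p β a q θ C M : ℝ}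
    (hp1 : 1 < p) (hq0 : 0 < q) (hC : 0 < C) (hM : 0 < M)
    {R u : EuclideanSpace ℝ (Fin n) → ℝ}
    (hR : DoubleBounded R) (hu : IsIESolutionWith n β p a q R u)
    (hlow : ∀ x : EuclideanSpace ℝ (Fin n), M ≤ ‖x‖ → C * ‖x‖ ^ (-θ) ≤ u x) :
    ∃ C' M' : ℝ, 0 < C' ∧ 0 < M' ∧ ∀ x : EuclideanSpace ℝ (Fin n), M' ≤ ‖x‖ →
      C' * ‖x‖ ^ (-((θ * q - (p * β + a)) / (p - 1))) ≤ u x := by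
  obtain ⟨CR, hCR, hRb⟩ := hR
  obtain ⟨-, hupos, hueq⟩ := hu
  have hp0 : 0 < p - 1 := by linarith
  have hr0 : (0:ℝ) ≤ 1 / (p - 1) := by positivity
  set e : ℝ := a - θ * q with he
  set κ : ℝ := min ((4:ℝ)⁻¹ ^ e) ((2:ℝ)⁻¹ ^ e) with hκ
  have hκ0 : 0 < κ :=
    lt_min (Real.rpow_pos_of_pos (by norm_num) _) (Real.rpow_pos_of_pos (by norm_num) _)
  set c2 : ℝ := (C ^ q * κ / 16 ^ n) ^ (1 / (p - 1)) with hc2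
  have hc2pos : 0 < c2 := Real.rpow_pos_of_pos (by positivity) _
  set γ : ℝ := (p * β + e) / (p - 1) with hγ
  set κ2 : ℝ := min ((2:ℝ) ^ (γ - 1)) ((3:ℝ) ^ (γ - 1)) with hκ2
  have hκ20 : 0 < κ2 :=
    lt_min (Real.rpow_pos_of_pos (by norm_num) _) (Real.rpow_pos_of_pos (by norm_num) _)
  set vb := volume (ball (0 : EuclideanSpace ℝ (Fin n)) 1) with hvb
  set V : ℝ≥0∞ := vb ^ (1 / (p - 1)) with hV
  have hV0 : V ≠ 0 :=
    (ENNReal.rpow_pos (measure_ball_pos volume _ one_pos) measure_ball_lt_top.ne).ne'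
  have hVtop : V ≠ ⊤ := (ENNReal.rpow_lt_top_of_nonneg hr0 measure_ball_lt_top.ne).ne
  have hVR : 0 < V.toReal := ENNReal.toReal_pos hV0 hVtop
  refine ⟨1 / CR * (c2 * κ2 * V.toReal), max (2 * M) 1, by positivity, by positivity, ?_⟩
  intro x hx
  have hr1 : 1 ≤ ‖x‖ := le_trans (le_max_right _ _) hx
  have hrM : 2 * M ≤ ‖x‖ := le_trans (le_max_left _ _) hx
  have hrpos : (0:ℝ) < ‖x‖ := by linarith
  have hkey : ∀ t ∈ Ioo (2 * ‖x‖) (3 * ‖x‖),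
      ENNReal.ofReal (c2 * (κ2 * ‖x‖ ^ (γ - 1))) * V ≤
      (ENNReal.ofReal (t ^ (p * β - (n:ℝ))) *
        ∫⁻ y in ball x t, ENNReal.ofReal (‖y‖ ^ a * u y ^ q)) ^ (1 / (p - 1)) /
        ENNReal.ofReal t := by
    intro t ht
    obtain ⟨ht1, ht2⟩ := ht
    have ht0 : 0 < t := by linarith
    refine le_trans ?_ (key_lb n hn β hp1 hq0 hC hlow x (by linarith) (by linarith) ht0)
    apply mul_le_mul_left
    apply ENNReal.ofReal_le_ofReal
    have h1 : ((2 * ‖x‖):ℝ) ^ (γ - 1) = 2 ^ (γ - 1) * ‖x‖ ^ (γ - 1) :=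
      Real.mul_rpow (by norm_num) hrpos.le
    have h2 : ((3 * ‖x‖):ℝ) ^ (γ - 1) = 3 ^ (γ - 1) * ‖x‖ ^ (γ - 1) :=
      Real.mul_rpow (by norm_num) hrpos.le
    have h3 := min_rpow_le_s2 (e := γ - 1) (show (0:ℝ) < 2 * ‖x‖ by linarith) ht1.le ht2.le
    rw [h1, h2, ← min_mul_of_nonneg _ _ (Real.rpow_nonneg hrpos.le _)] at h3
    exact mul_le_mul_of_nonneg_left h3 hc2pos.le
  have hIoosub : Ioo (2 * ‖x‖) (3 * ‖x‖) ⊆ Ioi (0:ℝ) :=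
    fun s hs => lt_trans (by linarith : (0:ℝ) < 2 * ‖x‖) hs.1
  have hwlb : ENNReal.ofReal (c2 * (κ2 * ‖x‖ ^ (γ - 1))) * V * ENNReal.ofReal ‖x‖ ≤
      wolff n β p (fun y => ‖y‖ ^ a * u y ^ q) x := by
    have h1 := setLIntegral_mono' (μ := volume) measurableSet_Ioo hkey
    have h2 : ∫⁻ _ in Ioo (2 * ‖x‖) (3 * ‖x‖),
        (ENNReal.ofReal (c2 * (κ2 * ‖x‖ ^ (γ - 1))) * V) =
        (ENNReal.ofReal (c2 * (κ2 * ‖x‖ ^ (γ - 1))) * V) *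
          volume (Ioo (2 * ‖x‖) (3 * ‖x‖)) := setLIntegral_const _ _
    rw [Real.volume_Ioo, (show 3 * ‖x‖ - 2 * ‖x‖ = ‖x‖ by ring)] at h2
    have h3 := le_trans h1 (lintegral_mono_set hIoosub)
    rw [h2] at h3
    simpa [wolff, mul_assoc] using h3
  have hfin := (hueq x).1
  have heq := (hueq x).2
  have h5 := ENNReal.toReal_mono hfin hwlb
  have h6 : (ENNReal.ofReal (c2 * (κ2 * ‖x‖ ^ (γ - 1))) * V * ENNReal.ofReal ‖x‖).toReal
      = c2 * (κ2 * ‖x‖ ^ (γ - 1)) * V.toReal * ‖x‖ := by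
    rw [ENNReal.toReal_mul, ENNReal.toReal_mul, ENNReal.toReal_ofReal (by positivity),
      ENNReal.toReal_ofReal (norm_nonneg x)]
  rw [h6] at h5
  have h7 : 1 / CR * (c2 * (κ2 * ‖x‖ ^ (γ - 1)) * V.toReal * ‖x‖) ≤ u x := by
    rw [heq]
    have h8 : 0 ≤ (wolff n β p (fun y => ‖y‖ ^ a * u y ^ q) x).toReal :=
      ENNReal.toReal_nonneg
    calc 1 / CR * (c2 * (κ2 * ‖x‖ ^ (γ - 1)) * V.toReal * ‖x‖)
        ≤ 1 / CR * (wolff n β p (fun y => ‖y‖ ^ a * u y ^ q) x).toReal :=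
          mul_le_mul_of_nonneg_left h5 (by positivity)
      _ ≤ R x * (wolff n β p (fun y => ‖y‖ ^ a * u y ^ q) x).toReal :=
          mul_le_mul_of_nonneg_right (hRb x).1 h8
  have hexp : ‖x‖ ^ (-((θ * q - (p * β + a)) / (p - 1))) = ‖x‖ ^ (γ - 1) * ‖x‖ := by
    have h9 : -((θ * q - (p * β + a)) / (p - 1)) = γ := by
      rw [hγ, he, ← neg_div]
      congr 1; ring
    have h10 : ‖x‖ ^ (γ - 1) * ‖x‖ ^ (1:ℝ) = ‖x‖ ^ γ := by
      rw [← Real.rpow_add hrpos]; congr 1; ring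
    rw [h9, ← h10, Real.rpow_one]
  calc 1 / CR * (c2 * κ2 * V.toReal) * ‖x‖ ^ (-((θ * q - (p * β + a)) / (p - 1)))
      = 1 / CR * (c2 * (κ2 * ‖x‖ ^ (γ - 1)) * V.toReal * ‖x‖) := by rw [hexp]; ring
    _ ≤ u x := h7

/-- the decay of a positive solution of the integral equation cannot be
slower than the slow rate: for `θ < (pβ+a)/(q-p+1)` there is no lower bound
`u(x) ≥ C|x|^{-θ}` near infinity. -/
theorem stmt2_no_slower_decay
    (n : ℕ) (hn : 3 ≤ n) (p β a q : ℝ)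
    (hp1 : 1 < p) (hp2 : p ≤ 2) (hβ : 0 < β)
    (ha0 : 0 ≤ -a) (ha : -a < p * β) (hβn : p * β < n)
    (hq1 : p - 1 < q) (hq2 : (n + a) * (p - 1) / (n - p * β) < q)
    (R u : EuclideanSpace ℝ (Fin n) → ℝ)
    (hR : DoubleBounded R) (hu : IsIESolutionWith n β p a q R u)
    (θ : ℝ) (hθ : θ < (p * β + a) / (q - p + 1)) :
    ¬ ∃ (C M : ℝ), 0 < C ∧ 0 < M ∧
        ∀ x : EuclideanSpace ℝ (Fin n), M ≤ ‖x‖ → C * ‖x‖ ^ (-θ) ≤ u x := by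
  rintro ⟨C, M, hC, hM, hlow⟩
  have hp0 : 0 < p - 1 := by linarith
  have hq0 : 0 < q := by linarith
  have hqp : 0 < q - p + 1 := by linarith
  set θs : ℝ := (p * β + a) / (q - p + 1) with hθs
  set ρ : ℝ := q / (p - 1) with hρ
  have hρ1 : 1 < ρ := by rw [hρ, lt_div_iff₀ hp0]; linarith
  have hseq : ∀ k : ℕ, ∃ C' M' : ℝ, 0 < C' ∧ 0 < M' ∧
      ∀ x : EuclideanSpace ℝ (Fin n), M' ≤ ‖x‖ →
        C' * ‖x‖ ^ (-(θs + ρ ^ k * (θ - θs))) ≤ u x := by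
    intro k
    induction k with
    | zero =>
        have h0 : θs + ρ ^ 0 * (θ - θs) = θ := by rw [pow_zero]; ring
        rw [h0]
        exact ⟨C, M, hC, hM, hlow⟩
    | succ k ih =>
        obtain ⟨Ck, Mk, hCk, hMk, hlowk⟩ := ih
        have h2 := lemB n hn hp1 hq0 hCk hMk hR hu hlowk
        have e1 : θs * (q - p + 1) = p * β + a := by
          rw [hθs, div_mul_cancel₀ _ hqp.ne']
        have e2 : ρ * (p - 1) = q := by
          rw [hρ, div_mul_cancel₀ _ hp0.ne']
        have key : (θs + ρ ^ (k + 1) * (θ - θs)) * (p - 1) =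
            (θs + ρ ^ k * (θ - θs)) * q - (p * β + a) := by
          calc (θs + ρ ^ (k + 1) * (θ - θs)) * (p - 1)
              = θs * (p - 1) + ρ ^ k * (θ - θs) * (ρ * (p - 1)) := by ring
            _ = θs * (p - 1) + ρ ^ k * (θ - θs) * q := by rw [e2]
            _ = (θs + ρ ^ k * (θ - θs)) * q - θs * (q - p + 1) := by ring
            _ = (θs + ρ ^ k * (θ - θs)) * q - (p * β + a) := by rw [e1]
        have h3 : ((θs + ρ ^ k * (θ - θs)) * q - (p * β + a)) / (p - 1) =
            θs + ρ ^ (k + 1) * (θ - θs) := by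
          rw [div_eq_iff hp0.ne']
          exact key.symm
        rw [h3] at h2
        exact h2
  have hθd : 0 < θs - θ := by linarith
  set θ0 : ℝ := (p * β + a - (p - 1)) / q with hθ0def
  obtain ⟨k, hk⟩ := pow_unbounded_of_one_lt ((θs - θ0) / (θs - θ)) hρ1
  have hprod : ρ ^ k * (θ - θs) = -(ρ ^ k * (θs - θ)) := by ring
  have hsle : θs + ρ ^ k * (θ - θs) ≤ θ0 := by
    have h1 : (θs - θ0) / (θs - θ) * (θs - θ) < ρ ^ k * (θs - θ) :=
      mul_lt_mul_of_pos_right hk hθd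
    rw [div_mul_cancel₀ _ hθd.ne'] at h1
    rw [hprod]
    linarith
  obtain ⟨Ck, Mk, hCk, hMk, hlowk⟩ := hseq k
  have hcontr : p - 1 ≤ p * β + (a - (θs + ρ ^ k * (θ - θs)) * q) := by
    have h1 : (θs + ρ ^ k * (θ - θs)) * q ≤ θ0 * q :=
      mul_le_mul_of_nonneg_right hsle hq0.le
    have h2 : θ0 * q = p * β + a - (p - 1) := by
      rw [hθ0def, div_mul_cancel₀ _ hq0.ne']
    linarith
  exact (hu.2.2 0).1 (lemA n hn hp1 hq0 hCk hMk hlowk hcontr)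
end

section
/- Assume n ≥ 3, p ∈ (1,2], q > p−1, β > 0, 0 ≤ −a < pβ < n, and q > (n+a)(p−1)/(n−pβ). Let u be a positive solution of the integral equation (IE) which is radially symmetric and radially decreasing about the origin. Then there exists C > 0 such that u(x) ≤ C|x|^{−(pβ+a)/(q−p+1)} for all x ≠ 0. -/
open MeasureTheory Metric Set Filter ENNReal

/-- a radially symmetric decreasing positive solution of the integral
equation satisfies `u(x) ≤ C|x|^{-(pβ+a)/(q-p+1)}` for `x ≠ 0`. -/
theorem stmt3_radial_slow_decay_bound
    (n : ℕ) (hn : 3 ≤ n) (p β a q : ℝ)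
    (hp1 : 1 < p) (hp2 : p ≤ 2) (hβ : 0 < β)
    (ha0 : 0 ≤ -a) (ha : -a < p * β) (hβn : p * β < n)
    (hq1 : p - 1 < q) (hq2 : (n + a) * (p - 1) / (n - p * β) < q)
    (R u : EuclideanSpace ℝ (Fin n) → ℝ)
    (hR : DoubleBounded R) (hu : IsIESolutionWith n β p a q R u)
    (hrad : ∀ x y : EuclideanSpace ℝ (Fin n), ‖x‖ ≤ ‖y‖ → u y ≤ u x) :
    ∃ C : ℝ, 0 < C ∧ ∀ x : EuclideanSpace ℝ (Fin n), x ≠ 0 →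
      u x ≤ C * ‖x‖ ^ (-((p * β + a) / (q - p + 1))) := by
  obtain ⟨C0, hC0, hRb⟩ := hR
  obtain ⟨hcont, hupos, hIE⟩ := hu
  haveI : NeZero n := ⟨by omega⟩
  -- basic positivity facts
  have hp0 : (0:ℝ) < p - 1 := by linarith
  have hq0 : (0:ℝ) < q := by linarith
  have ha' : a ≤ 0 := by linarith
  have hpa : 0 < p * β + a := by linarith
  have hqp : (0:ℝ) < q - p + 1 := by linarith
  set e : ℝ := 1 / (p - 1) with he_def
  have he : 0 < e := by positivity
  set μ0 : ℝ := (q - p + 1) / (p - 1) with hμ0_def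
  have hμ0 : 0 < μ0 := by positivity
  have hV1lt : volume (ball (0:EuclideanSpace ℝ (Fin n)) 1) < ∞ := measure_ball_lt_top
  set V1 : ℝ := (volume (ball (0:EuclideanSpace ℝ (Fin n)) 1)).toReal with hV1_def
  have hV1 : 0 < V1 := ENNReal.toReal_pos (measure_ball_pos volume 0 one_pos).ne' hV1lt.ne
  set c0 : ℝ := (1 / (2 * C0)) * ((4:ℝ) ^ (p * β - n) * V1) ^ e with hc0_def
  have hc0 : 0 < c0 := by
    have h4 : (0:ℝ) < (4:ℝ) ^ (p * β - n) := Real.rpow_pos_of_pos (by norm_num) _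
    positivity
  refine ⟨c0⁻¹ ^ (1/μ0), by positivity, ?_⟩
  intro x hx
  set r : ℝ := ‖x‖ with hr_def
  have hr : 0 < r := norm_pos_iff.mpr hx
  set ux : ℝ := u x with hux_def
  have hux : 0 < ux := hupos x
  set A : ℝ := r ^ a * ux ^ q with hA_def
  have hA : 0 < A := by
    have := Real.rpow_pos_of_pos hr a
    have := Real.rpow_pos_of_pos hux q
    positivity
  have hrn : (0:ℝ) < r ^ n := pow_pos hr n
  -- volume of ball 0 r
  have hVb : volume (ball (0:EuclideanSpace ℝ (Fin n)) r) = ENNReal.ofReal (r ^ n * V1) := by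
    rw [Measure.addHaar_ball _ _ hr.le, finrank_euclideanSpace_fin,
      ENNReal.ofReal_mul (pow_pos hr n).le, hV1_def,
      ENNReal.ofReal_toReal hV1lt.ne]
  -- inner estimate
  have hinner : ∀ t : ℝ, 2 * r < t →
      ENNReal.ofReal (A * (r ^ n * V1)) ≤
        ∫⁻ y in ball x t, ENNReal.ofReal (‖y‖ ^ a * u y ^ q) := by
    intro t ht
    have hsub : ball (0:EuclideanSpace ℝ (Fin n)) r \ {0} ⊆ ball x t := by
      intro y hy
      have hy1 : ‖y‖ < r := by
        have := hy.1
        rwa [mem_ball, dist_zero_right] at this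
      have : dist y x ≤ ‖y‖ + ‖x‖ := by
        calc dist y x ≤ dist y 0 + dist 0 x := dist_triangle _ _ _
        _ = ‖y‖ + ‖x‖ := by rw [dist_zero_right, dist_zero_left]
      have : dist y x < t := by
        have : dist y x < 2 * r := by rw [← hr_def] at *; linarith
        linarith
      exact mem_ball.mpr this
    calc ENNReal.ofReal (A * (r ^ n * V1))
        = ENNReal.ofReal A * volume (ball (0:EuclideanSpace ℝ (Fin n)) r) := by
          rw [hVb, ENNReal.ofReal_mul hA.le]
      _ = ENNReal.ofReal A * volume (ball (0:EuclideanSpace ℝ (Fin n)) r \ {0}) := by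
          rw [measure_diff_null (measure_singleton _)]
      _ = ∫⁻ _ in ball (0:EuclideanSpace ℝ (Fin n)) r \ {0}, ENNReal.ofReal A := by
          rw [setLIntegral_const]
      _ ≤ ∫⁻ y in ball (0:EuclideanSpace ℝ (Fin n)) r \ {0}, ENNReal.ofReal (‖y‖ ^ a * u y ^ q) := by
          refine setLIntegral_mono' (measurableSet_ball.diff (measurableSet_singleton _)) ?_
          intro y hy
          have hy0 : (0:ℝ) < ‖y‖ := norm_pos_iff.mpr (by simpa using hy.2)
          have hy1 : ‖y‖ ≤ r := by
            have := hy.1; rw [mem_ball, dist_zero_right] at this; linarith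
          refine ENNReal.ofReal_le_ofReal ?_
          refine mul_le_mul ?_ ?_ (Real.rpow_nonneg hux.le q) (Real.rpow_nonneg hy0.le a)
          · exact Real.rpow_le_rpow_of_nonpos hy0 hy1 ha'
          · exact Real.rpow_le_rpow hux.le (hrad y x hy1) hq0.le
      _ ≤ ∫⁻ y in ball x t, ENNReal.ofReal (‖y‖ ^ a * u y ^ q) :=
          lintegral_mono_set hsub
  -- outer estimate
  set W : ℝ≥0∞ := wolff n β p (fun y => ‖y‖ ^ a * u y ^ q) x with hW_def
  set B : ℝ := (4 * r) ^ (p * β - n) * (A * (r ^ n * V1)) with hB_def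
  have h4r : (0:ℝ) < 4 * r := by linarith
  have hBpos : 0 < B := by
    have := Real.rpow_pos_of_pos h4r (p * β - n)
    positivity
  set K : ℝ := B ^ e / (4 * r) * (2 * r) with hK_def
  have hKpos : 0 < K := by
    have := Real.rpow_pos_of_pos hBpos e
    positivity
  have houter : ENNReal.ofReal K ≤ W := by
    have hIoo : Ioo (2 * r) (4 * r) ⊆ Ioi (0:ℝ) := by
      intro t ht; exact lt_trans (by linarith) ht.1
    have step1 : ∫⁻ t in Ioo (2*r) (4*r),
        ((ENNReal.ofReal (t ^ (p * β - (n : ℝ))) *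
          ∫⁻ y in ball x t, ENNReal.ofReal (‖y‖ ^ a * u y ^ q)) ^ (1 / (p - 1))) /
            ENNReal.ofReal t ≤ W := lintegral_mono_set hIoo
    refine le_trans ?_ step1
    have hconst : ∀ t ∈ Ioo (2*r) (4*r),
        (ENNReal.ofReal ((4*r) ^ (p * β - (n : ℝ))) *
          ENNReal.ofReal (A * (r ^ n * V1))) ^ (1 / (p - 1)) / ENNReal.ofReal (4*r) ≤
        ((ENNReal.ofReal (t ^ (p * β - (n : ℝ))) *
          ∫⁻ y in ball x t, ENNReal.ofReal (‖y‖ ^ a * u y ^ q)) ^ (1 / (p - 1))) /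
            ENNReal.ofReal t := by
      intro t ht
      have ht0 : (0:ℝ) < t := lt_trans (by linarith) ht.1
      refine ENNReal.div_le_div ?_ (ENNReal.ofReal_le_ofReal ht.2.le)
      refine ENNReal.rpow_le_rpow ?_ (by positivity)
      exact mul_le_mul' (ENNReal.ofReal_le_ofReal
        (Real.rpow_le_rpow_of_nonpos ht0 ht.2.le (by linarith))) (hinner t ht.1)
    calc ENNReal.ofReal K
        = (ENNReal.ofReal ((4*r) ^ (p * β - (n : ℝ))) *
            ENNReal.ofReal (A * (r ^ n * V1))) ^ (1 / (p - 1)) / ENNReal.ofReal (4*r) *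
              ENNReal.ofReal (2*r) := by
          rw [← ENNReal.ofReal_mul (by positivity), ← hB_def,
            ENNReal.ofReal_rpow_of_pos hBpos, ← ENNReal.ofReal_div_of_pos h4r,
            ← ENNReal.ofReal_mul (by positivity), hK_def, he_def]
      _ = ∫⁻ _ in Ioo (2*r) (4*r),
            (ENNReal.ofReal ((4*r) ^ (p * β - (n : ℝ))) *
              ENNReal.ofReal (A * (r ^ n * V1))) ^ (1 / (p - 1)) / ENNReal.ofReal (4*r) := by
          rw [setLIntegral_const, Real.volume_Ioo]
          norm_num
          ring_nf
          rw [ENNReal.ofReal_mul hr.le, ENNReal.ofReal_ofNat]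
          ring
      _ ≤ _ := setLIntegral_mono' measurableSet_Ioo hconst
  -- from the lower bound on W to the key real inequality
  have hWfin := (hIE x).1
  have hKW : K ≤ W.toReal := by
    rw [← ENNReal.ofReal_le_iff_le_toReal hWfin]
    exact houter
  have hRx := hRb x
  have hkey : (1 / C0) * K ≤ ux := by
    have hWt : 0 ≤ W.toReal := ENNReal.toReal_nonneg
    have := mul_le_mul hRx.1 hKW hKpos.le (le_trans (by positivity) hRx.1)
    calc (1 / C0) * K ≤ R x * W.toReal := this
      _ = ux := ((hIE x).2).symm
  -- rewrite the left side as c0 * r ^ ((p*β+a)*e) * ux ^ (q*e)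
  have hBe : B ^ e = ((4:ℝ) ^ (p*β - n) * V1) ^ e * r ^ ((p*β + a) * e) * ux ^ (q * e) := by
    have h4 : (0:ℝ) < (4:ℝ) ^ (p * β - n) := Real.rpow_pos_of_pos (by norm_num) _
    have hB' : B = ((4:ℝ) ^ (p*β - n) * V1) * r ^ (p*β + a) * ux ^ q := by
      rw [hB_def, Real.mul_rpow (by norm_num) hr.le, hA_def]
      rw [show (r:ℝ) ^ n = r ^ ((n:ℕ):ℝ) from (Real.rpow_natCast r n).symm]
      rw [show (p*β + a : ℝ) = (p*β - n) + a + (n:ℝ) by ring]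
      rw [Real.rpow_add hr, Real.rpow_add hr]
      ring
    rw [hB', Real.mul_rpow (by positivity) (Real.rpow_nonneg hux.le q),
      Real.mul_rpow (by positivity) (Real.rpow_nonneg hr.le _),
      ← Real.rpow_mul hr.le, ← Real.rpow_mul hux.le]
  have hkey2 : c0 * r ^ ((p*β + a) * e) * ux ^ (q * e) ≤ ux := by
    have hKval : (1 / C0) * K =
        c0 * r ^ ((p*β + a) * e) * ux ^ (q * e) := by
      rw [hK_def, hBe, hc0_def]
      field_simp
      ring
    rw [← hKval]; exact hkey
  -- solve for ux
  set s : ℝ := (p*β + a) * e with hs_def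
  have hrs : 0 < r ^ s := Real.rpow_pos_of_pos hr s
  have hc0r : 0 < c0 * r ^ s := by positivity
  have huq : 0 < ux ^ (q * e) := Real.rpow_pos_of_pos hux _
  have h1 : c0 * r ^ s ≤ ux ^ (-μ0) := by
    have : c0 * r ^ s ≤ ux / ux ^ (q * e) := by
      rw [le_div_iff₀ huq]; exact hkey2
    have hexp : (-μ0 : ℝ) = 1 - q * e := by
      rw [hμ0_def, he_def]; field_simp; ring
    rw [hexp, Real.rpow_sub hux, Real.rpow_one]
    exact this
  have h2 : ux ^ μ0 ≤ (c0 * r ^ s)⁻¹ := by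
    rw [Real.rpow_neg hux.le] at h1
    exact (le_inv_comm₀ hc0r (Real.rpow_pos_of_pos hux μ0)).mp h1
  have h3 : ux ≤ ((c0 * r ^ s)⁻¹) ^ (1/μ0) := by
    have : ux = (ux ^ μ0) ^ (1/μ0) := by
      rw [← Real.rpow_mul hux.le, mul_one_div, div_self hμ0.ne', Real.rpow_one]
    rw [this]
    exact Real.rpow_le_rpow (Real.rpow_pos_of_pos hux μ0).le h2 (by positivity)
  have h4 : ((c0 * r ^ s)⁻¹) ^ (1/μ0) =
      c0⁻¹ ^ (1/μ0) * r ^ (-((p * β + a) / (q - p + 1))) := by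
    rw [mul_inv, Real.mul_rpow (by positivity) (by positivity),
      ← Real.rpow_neg_one (r ^ s), ← Real.rpow_mul hr.le, ← Real.rpow_mul hr.le]
    congr 1
    rw [hs_def, he_def, hμ0_def]
    field_simp
  rw [h4] at h3
  exact h3
end

section
/- Let n ≥ 3, p ∈ (1,2], a ∈ ℝ with 0 ≤ −a < p < n, and q > (n+a)(p−1)/(n−p). Set t = (p+a)/(q−p+1) and c = t^{(p−1)/(q−p+1)} · (n−1−(p−1)(t+1))^{1/(q−p+1)}. Then n−1−(p−1)(t+1) > 0, and the function u(x) = c|x|^{−t} is a classical solution of the p-Laplace equation −div(|∇u|^{p−2}∇u) = |x|^a u^q on ℝ^n \ {0}; that is, for all x ≠ 0, −div(|∇u(x)|^{p−2}∇u(x)) = |x|^a u(x)^q. -/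
open MeasureTheory Metric Set Filter

local notation "⟪" x ", " y "⟫" => @inner ℝ _ _ x y

lemma myHasFDerivAt_norm_rpow {F : Type*} [NormedAddCommGroup F] [InnerProductSpace ℝ F]
    (r : ℝ) {x : F} (hx : x ≠ 0) :
    HasFDerivAt (fun y : F => ‖y‖ ^ r) ((r * ‖x‖ ^ (r - 2)) • (innerSL ℝ x : F →L[ℝ] ℝ)) x := by
  have hxn : (0:ℝ) < ‖x‖ := norm_pos_iff.2 hx
  have h2 : ∀ y : F, (‖y‖ ^ (2:ℕ)) ^ (r/2) = ‖y‖ ^ r := by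
    intro y
    rw [← Real.rpow_natCast ‖y‖ 2, ← Real.rpow_mul (norm_nonneg y)]
    ring_nf
  have hne : ‖x‖ ^ (2:ℕ) ≠ 0 := by positivity
  have H := ((hasStrictFDerivAt_norm_sq x).hasFDerivAt.rpow_const (p := r/2) (Or.inl hne))
  have : (fun y : F => (‖y‖ ^ (2:ℕ)) ^ (r/2)) = fun y : F => ‖y‖ ^ r := funext h2
  rw [this] at H
  convert H using 1
  have h3 : (‖x‖ ^ (2:ℕ)) ^ (r/2 - 1) = ‖x‖ ^ (r - 2) := by
    rw [← Real.rpow_natCast ‖x‖ 2, ← Real.rpow_mul (norm_nonneg x)]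
    norm_num
    ring_nf
  rw [h3, smul_comm]
  ext y
  simp only [ContinuousLinearMap.smul_apply, smul_eq_mul]
  ring

lemma my_trace_formula (n : ℕ) (α β : ℝ) (v w : EuclideanSpace ℝ (Fin n)) :
    LinearMap.trace ℝ (EuclideanSpace ℝ (Fin n))
      ((α • ContinuousLinearMap.id ℝ (EuclideanSpace ℝ (Fin n)) +
        (β • (innerSL ℝ v)).smulRight w).toLinearMap) = α * n + β * ⟪v, w⟫ := by
  rw [LinearMap.trace_eq_matrix_trace ℝ (PiLp.basisFun 2 ℝ (Fin n))]
  rw [Matrix.trace]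
  simp only [Matrix.diag, LinearMap.toMatrix_apply, PiLp.basisFun_repr, PiLp.basisFun_apply,
    ContinuousLinearMap.coe_coe, ContinuousLinearMap.add_apply, ContinuousLinearMap.smul_apply,
    ContinuousLinearMap.id_apply, ContinuousLinearMap.smulRight_apply, innerSL_apply_apply,
    PiLp.add_apply, PiLp.smul_apply, smul_eq_mul]
  rw [Finset.sum_add_distrib]
  congr 1
  · simp [mul_comm]
  · have h1 : ∀ i : Fin n, (inner ℝ v (PiLp.single 2 i (1:ℝ)) : ℝ) = v i := by
      intro i
      rw [PiLp.inner_apply]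
      simp [RCLike.inner_apply, PiLp.single_apply, Pi.single_apply]
    simp only [h1, PiLp.inner_apply, RCLike.inner_apply, conj_trivial, mul_assoc,
      ← Finset.mul_sum]
    simp only [mul_comm]

/-- The `p`-Laplacian `div(|∇u|^{p-2}∇u)` of `u`, computed as the trace of the
(Fréchet) derivative of the vector field `y ↦ ‖∇u(y)‖^{p-2} • ∇u(y)`. -/
noncomputable def pLap (n : ℕ) (p : ℝ)
    (u : EuclideanSpace ℝ (Fin n) → ℝ) (x : EuclideanSpace ℝ (Fin n)) : ℝ :=
  LinearMap.trace ℝ (EuclideanSpace ℝ (Fin n))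
    ((fderiv ℝ (fun y => ‖gradient u y‖ ^ (p - 2) • gradient u y) x).toLinearMap)

/-- with the slow rate `t = (p+a)/(q-p+1)` and the explicit constant `c`,
one has `n-1-(p-1)(t+1) > 0` and `u(x) = c|x|^{-t}` is a classical solution of
`-div(|∇u|^{p-2}∇u) = |x|^a u^q` on `ℝⁿ \ {0}`. -/
theorem stmt4_singular_solution_pLaplace
    (n : ℕ) (hn : 3 ≤ n) (p a q t c : ℝ)
    (hp1 : 1 < p) (hp2 : p ≤ 2)
    (ha0 : 0 ≤ -a) (hap : -a < p) (hpn : p < (n : ℝ))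
    (hq : (n + a) * (p - 1) / (n - p) < q)
    (ht : t = (p + a) / (q - p + 1))
    (hc : c = t ^ ((p - 1) / (q - p + 1)) *
      ((n : ℝ) - 1 - (p - 1) * (t + 1)) ^ (1 / (q - p + 1))) :
    0 < (n : ℝ) - 1 - (p - 1) * (t + 1) ∧
    ∀ x : EuclideanSpace ℝ (Fin n), x ≠ 0 →
      -pLap n p (fun y => c * ‖y‖ ^ (-t)) x = ‖x‖ ^ a * (c * ‖x‖ ^ (-t)) ^ q := by
  have hnp : 0 < (n : ℝ) - p := by linarith
  have hpa : 0 < p + a := by linarith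
  have hQ : 0 < q - p + 1 := by
    have h1 : p - 1 < (n + a) * (p - 1) / (n - p) := by
      rw [lt_div_iff₀ hnp]; nlinarith
    linarith
  have ht0 : 0 < t := ht ▸ div_pos hpa hQ
  have htQ : t * (q - p + 1) = p + a := by rw [ht]; field_simp
  have hqn : (n + a) * (p - 1) < q * ((n : ℝ) - p) := (div_lt_iff₀ hnp).mp hq
  have hM : 0 < (n : ℝ) - 1 - (p - 1) * (t + 1) := by
    have key : 0 < ((n : ℝ) - 1 - (p - 1) * (t + 1)) * (q - p + 1) := by nlinarith
    nlinarith
  set M : ℝ := (n : ℝ) - 1 - (p - 1) * (t + 1) with hMdef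
  have hc0 : 0 < c := by
    rw [hc]
    exact mul_pos (Real.rpow_pos_of_pos ht0 _) (Real.rpow_pos_of_pos hM _)
  refine ⟨hM, fun x hx => ?_⟩
  have hxn : (0 : ℝ) < ‖x‖ := norm_pos_iff.2 hx
  set s : ℝ := (-t - 1) * (p - 2) + (-t - 2) with hsdef
  have hns : (n : ℝ) + s = M := by rw [hMdef, hsdef]; ring
  have hct : 0 < c * t := mul_pos hc0 ht0
  -- gradient formula
  have hgrad : ∀ y : EuclideanSpace ℝ (Fin n), y ≠ 0 →
      gradient (fun z => c * ‖z‖ ^ (-t)) y = (-(c * t) * ‖y‖ ^ (-t - 2)) • y := by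
    intro y hy
    refine HasGradientAt.gradient ?_
    rw [hasGradientAt_iff_hasFDerivAt]
    have H := (myHasFDerivAt_norm_rpow (-t) hy).const_mul c
    refine H.congr_fderiv ?_
    ext w
    simp only [InnerProductSpace.toDual_apply_apply, ContinuousLinearMap.smul_apply, innerSL_apply_apply,
      real_inner_smul_left, smul_eq_mul]
    ring
  -- the vector field agrees with an explicit one near x
  have hEq : (fun y => ‖gradient (fun z => c * ‖z‖ ^ (-t)) y‖ ^ (p - 2) •
        gradient (fun z => c * ‖z‖ ^ (-t)) y)
      =ᶠ[nhds x] (fun y => (-(c * t) ^ (p - 1)) • (‖y‖ ^ s • y)) := by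
    filter_upwards [IsOpen.mem_nhds isOpen_compl_singleton hx] with y hy
    have hy' : y ≠ 0 := hy
    have hyn : (0 : ℝ) < ‖y‖ := norm_pos_iff.2 hy'
    rw [hgrad y hy']
    have hnorm : ‖(-(c * t) * ‖y‖ ^ (-t - 2)) • y‖ = (c * t) * ‖y‖ ^ (-t - 1) := by
      rw [norm_smul, Real.norm_eq_abs, abs_of_neg (by
        exact mul_neg_of_neg_of_pos (neg_neg_iff_pos.mpr hct) (Real.rpow_pos_of_pos hyn _))]
      rw [show (-t - 1 : ℝ) = (-t - 2) + 1 by ring, Real.rpow_add_one (ne_of_gt hyn)]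
      ring
    rw [hnorm, smul_smul, smul_smul]
    congr 1
    have h1 : (c * t * ‖y‖ ^ (-t - 1)) ^ (p - 2)
        = (c * t) ^ (p - 2) * ‖y‖ ^ ((-t - 1) * (p - 2)) := by
      rw [Real.mul_rpow hct.le (Real.rpow_pos_of_pos hyn _).le,
        ← Real.rpow_mul (norm_nonneg y)]
    have h2 : (c * t) ^ (p - 2) * (c * t) = (c * t) ^ (p - 1) := by
      rw [show (p - 1 : ℝ) = (p - 2) + 1 by ring, Real.rpow_add_one (ne_of_gt hct)]
    have h3 : ‖y‖ ^ ((-t - 1) * (p - 2)) * ‖y‖ ^ (-t - 2) = ‖y‖ ^ s := by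
      rw [← Real.rpow_add hyn, hsdef]
    calc (c * t * ‖y‖ ^ (-t - 1)) ^ (p - 2) * (-(c * t) * ‖y‖ ^ (-t - 2))
        = -(((c * t) ^ (p - 2) * (c * t)) * (‖y‖ ^ ((-t - 1) * (p - 2)) * ‖y‖ ^ (-t - 2))) := by
          rw [h1]; ring
      _ = -(c * t) ^ (p - 1) * ‖y‖ ^ s := by rw [h2, h3]; ring
  -- derivative of the explicit vector field
  have hF : HasFDerivAt (fun y : EuclideanSpace ℝ (Fin n) => ‖y‖ ^ s • y)
      (‖x‖ ^ s • ContinuousLinearMap.id ℝ (EuclideanSpace ℝ (Fin n)) +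
        ((s * ‖x‖ ^ (s - 2)) • (innerSL ℝ x)).smulRight x) x :=
    (myHasFDerivAt_norm_rpow s hx).smul (hasFDerivAt_id x)
  have hF' := hF.const_smul (-(c * t) ^ (p - 1))
  have hfderiv : fderiv ℝ (fun y => ‖gradient (fun z => c * ‖z‖ ^ (-t)) y‖ ^ (p - 2) •
        gradient (fun z => c * ‖z‖ ^ (-t)) y) x
      = (-(c * t) ^ (p - 1)) • (‖x‖ ^ s • ContinuousLinearMap.id ℝ (EuclideanSpace ℝ (Fin n)) +
        ((s * ‖x‖ ^ (s - 2)) • (innerSL ℝ x)).smulRight x) := by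
    rw [hEq.fderiv_eq]; exact hF'.fderiv
  have hxx : (inner ℝ x x : ℝ) = ‖x‖ ^ (2:ℕ) := real_inner_self_eq_norm_sq x
  have e4 : ‖x‖ ^ (s - 2) * ‖x‖ ^ (2:ℕ) = ‖x‖ ^ s := by
    rw [← Real.rpow_natCast ‖x‖ 2, ← Real.rpow_add hxn]
    norm_num
  have hpl : pLap n p (fun y => c * ‖y‖ ^ (-t)) x
      = -(c * t) ^ (p - 1) * (M * ‖x‖ ^ s) := by
    unfold pLap
    rw [hfderiv]
    rw [ContinuousLinearMap.coe_smul, LinearMap.map_smul, my_trace_formula, smul_eq_mul]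
    rw [hxx]
    rw [mul_assoc s, e4, ← hns]
    ring
  have hcQ : c ^ (q - p + 1) = t ^ (p - 1) * M := by
    rw [hc, Real.mul_rpow (Real.rpow_nonneg ht0.le _) (Real.rpow_nonneg hM.le _),
      ← Real.rpow_mul ht0.le, ← Real.rpow_mul hM.le,
      div_mul_cancel₀ _ (ne_of_gt hQ), one_div_mul_cancel (ne_of_gt hQ), Real.rpow_one]
  have hconst : (c * t) ^ (p - 1) * M = c ^ q := by
    rw [Real.mul_rpow hc0.le ht0.le,
      show q = (p - 1) + (q - p + 1) by ring, Real.rpow_add hc0, hcQ]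
    ring
  have hexp : a + (-t) * q = s := by rw [hsdef]; linear_combination -htQ
  have hrhs : ‖x‖ ^ a * (c * ‖x‖ ^ (-t)) ^ q = c ^ q * ‖x‖ ^ s := by
    rw [Real.mul_rpow hc0.le (Real.rpow_pos_of_pos hxn _).le,
      ← Real.rpow_mul (norm_nonneg x), ← hexp, Real.rpow_add hxn]
    ring
  rw [hpl, hrhs, ← hconst]
  ring
end

section
/- Let n ≥ 3, p ∈ (1,2], β > 0, a ∈ ℝ with 0 ≤ −a < pβ < n, and q > (n+a)(p−1)/(n−pβ). Set t = (pβ+a)/(q−p+1) and let c > 0. Then for u(x) = c|x|^{−t}, the Wolff potential x ↦ W_{β,p}(|·|^a u^q)(x) is finite and positive on ℝ^n \ {0}, and there exists a double bounded function R on ℝ^n \ {0} such that u(x) = R(x)·W_{β,p}(|·|^a u^q)(x) for all x ≠ 0; equivalently, there exist constants 0 < c₁ ≤ c₂ with c₁·W_{β,p}(|·|^a u^q)(x) ≤ u(x) ≤ c₂·W_{β,p}(|·|^a u^q)(x) for all x ≠ 0. -/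
open MeasureTheory Metric Set Filter ENNReal

section WolffAux

open MeasureTheory Metric Set ENNReal

lemma aux_subst {l : ℝ} (hl : 0 < l) (h : ℝ → ℝ≥0∞) (hm : Measurable h) :
    ∫⁻ r in Set.Ioi (0:ℝ), h r = ENNReal.ofReal l * ∫⁻ s in Set.Ioi (0:ℝ), h (l * s) := by
  have h1 : ∫⁻ s, (Set.Ioi (0:ℝ)).indicator h (l * s) ∂volume
      = ENNReal.ofReal l⁻¹ * ∫⁻ r, (Set.Ioi (0:ℝ)).indicator h r ∂volume := by
    have := Real.map_volume_mul_left (ne_of_gt hl)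
    rw [← lintegral_map (hm.indicator measurableSet_Ioi) (measurable_const_mul l), this,
      lintegral_smul_measure]
    congr 1
    rw [abs_of_pos (inv_pos.2 hl)]
  have h2 : ∀ s : ℝ, (Set.Ioi (0:ℝ)).indicator h (l * s)
      = (Set.Ioi (0:ℝ)).indicator (fun s => h (l * s)) s := by
    intro s
    by_cases hs : s ∈ Set.Ioi (0:ℝ)
    · rw [Set.indicator_of_mem hs, Set.indicator_of_mem (by exact mul_pos hl hs)]
    · rw [Set.indicator_of_notMem hs, Set.indicator_of_notMem (by
        simp only [Set.mem_Ioi, not_lt] at hs ⊢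
        nlinarith)]
  simp_rw [h2] at h1
  rw [← lintegral_indicator measurableSet_Ioi, ← lintegral_indicator measurableSet_Ioi, h1,
    ← mul_assoc, ← ENNReal.ofReal_mul hl.le, mul_inv_cancel₀ (ne_of_gt hl), ENNReal.ofReal_one,
    one_mul]

lemma aux_smul {n : ℕ} {l : ℝ} (hl : 0 < l) (h : EuclideanSpace ℝ (Fin n) → ℝ≥0∞)
    (hm : Measurable h) :
    ∫⁻ y, h y = ENNReal.ofReal (l ^ n) * ∫⁻ z, h (l • z) := by
  have hmap : Measure.map (l • ·) (volume : Measure (EuclideanSpace ℝ (Fin n))) =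
      ENNReal.ofReal ((l ^ n)⁻¹) • volume := by
    rw [MeasureTheory.Measure.map_addHaar_smul volume (ne_of_gt hl)]
    simp [abs_of_pos (inv_pos.2 (pow_pos hl n)), abs_of_pos (pow_pos hl n)]
  have : ∫⁻ z, h (l • z) ∂volume = ENNReal.ofReal ((l ^ n)⁻¹) * ∫⁻ y, h y ∂volume := by
    rw [← lintegral_map hm (measurable_const_smul l), hmap, lintegral_smul_measure, smul_eq_mul]
  rw [this, ← mul_assoc, ← ENNReal.ofReal_mul (pow_pos hl n).le,
    mul_inv_cancel₀ (ne_of_gt (pow_pos hl n)), ENNReal.ofReal_one, one_mul]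

lemma inner_scale {n : ℕ} (σ : ℝ) {l : ℝ} (hl : 0 < l) (x : EuclideanSpace ℝ (Fin n)) (r : ℝ) :
    (∫⁻ y in Metric.ball (l • x) (l * r), ENNReal.ofReal (‖y‖ ^ σ))
      = ENNReal.ofReal (l ^ ((n : ℝ) + σ)) * ∫⁻ y in Metric.ball x r, ENNReal.ofReal (‖y‖ ^ σ) := by
  have hg : Measurable fun y : EuclideanSpace ℝ (Fin n) => ENNReal.ofReal (‖y‖ ^ σ) :=
    (measurable_norm.pow_const σ).ennreal_ofReal
  have key := aux_smul hl ((Metric.ball (l • x) (l * r)).indicator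
      fun y => ENNReal.ofReal (‖y‖ ^ σ)) (hg.indicator measurableSet_ball)
  have hmem : ∀ z : EuclideanSpace ℝ (Fin n),
      l • z ∈ Metric.ball (l • x) (l * r) ↔ z ∈ Metric.ball x r := by
    intro z
    simp only [Metric.mem_ball, dist_eq_norm, ← smul_sub, norm_smul, Real.norm_eq_abs,
      abs_of_pos hl]
    constructor
    · intro h; nlinarith [norm_nonneg (z - x)]
    · intro h; nlinarith [norm_nonneg (z - x)]
  have hfun : ∀ z : EuclideanSpace ℝ (Fin n),
      (Metric.ball (l • x) (l * r)).indicator (fun y => ENNReal.ofReal (‖y‖ ^ σ)) (l • z)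
      = ENNReal.ofReal (l ^ σ) *
          (Metric.ball x r).indicator (fun y => ENNReal.ofReal (‖y‖ ^ σ)) z := by
    intro z
    by_cases hz : z ∈ Metric.ball x r
    · rw [Set.indicator_of_mem ((hmem z).2 hz), Set.indicator_of_mem hz, norm_smul,
        Real.norm_eq_abs, abs_of_pos hl, Real.mul_rpow hl.le (norm_nonneg z),
        ENNReal.ofReal_mul (Real.rpow_nonneg hl.le σ)]
    · rw [Set.indicator_of_notMem (fun hbad => hz ((hmem z).1 hbad)),
        Set.indicator_of_notMem hz, mul_zero]
  simp_rw [hfun] at key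
  rw [lintegral_const_mul _ (hg.indicator measurableSet_ball)] at key
  rw [← lintegral_indicator measurableSet_ball, ← lintegral_indicator measurableSet_ball, key,
    ← mul_assoc, ← ENNReal.ofReal_mul (pow_pos hl n).le]
  congr 2
  rw [Real.rpow_add hl, Real.rpow_natCast]

lemma inner_rot {n : ℕ} (σ r : ℝ) (x x' : EuclideanSpace ℝ (Fin n)) (hxx : ‖x‖ = ‖x'‖) :
    (∫⁻ y in Metric.ball x r, ENNReal.ofReal (‖y‖ ^ σ))
      = ∫⁻ y in Metric.ball x' r, ENNReal.ofReal (‖y‖ ^ σ) := by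
  have hg : Measurable fun y : EuclideanSpace ℝ (Fin n) => ENNReal.ofReal (‖y‖ ^ σ) :=
    (measurable_norm.pow_const σ).ennreal_ofReal
  set e := Submodule.reflection (ℝ ∙ (x - x'))ᗮ with he
  have hex : e x = x' := Submodule.reflection_sub hxx
  have hmp : MeasurePreserving e volume volume := e.measurePreserving
  have key := hmp.lintegral_comp (hg.indicator (measurableSet_ball (x := x') (ε := r)))
  have hfun : ∀ z : EuclideanSpace ℝ (Fin n),
      (Metric.ball x' r).indicator (fun y => ENNReal.ofReal (‖y‖ ^ σ)) (e z)
      = (Metric.ball x r).indicator (fun y => ENNReal.ofReal (‖y‖ ^ σ)) z := by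
    intro z
    have hnorm : ‖(e z : EuclideanSpace ℝ (Fin n))‖ = ‖z‖ := e.norm_map z
    have hmem : e z ∈ Metric.ball x' r ↔ z ∈ Metric.ball x r := by
      rw [Metric.mem_ball, Metric.mem_ball, ← hex, dist_eq_norm, dist_eq_norm, ← map_sub,
        e.norm_map]
    by_cases hz : z ∈ Metric.ball x r
    · rw [Set.indicator_of_mem (hmem.2 hz), Set.indicator_of_mem hz, hnorm]
    · rw [Set.indicator_of_notMem (fun hbad => hz (hmem.1 hbad)), Set.indicator_of_notMem hz]
  simp_rw [hfun] at key
  rw [← lintegral_indicator measurableSet_ball, ← lintegral_indicator measurableSet_ball, key]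



lemma finite_ball {n : ℕ} (hn : 0 < n) {σ : ℝ} (hσn : -(n:ℝ) < σ) (hσ0 : σ < 0) :
    (∫⁻ y in Metric.ball (0 : EuclideanSpace ℝ (Fin n)) 2, ENNReal.ofReal (‖y‖ ^ σ)) ≠ ∞ := by
  haveI : Nonempty (Fin n) := ⟨⟨0, hn⟩⟩
  set S : ℕ → Set (EuclideanSpace ℝ (Fin n)) := fun k => {y : EuclideanSpace ℝ (Fin n) | (2:ℝ)⁻¹ ^ k ≤ ‖y‖ ∧ ‖y‖ < 2 * (2:ℝ)⁻¹ ^ k} with hS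
  have hSm : ∀ k, MeasurableSet (S k) := by
    intro k
    have : S k = (fun y : EuclideanSpace ℝ (Fin n) => ‖y‖) ⁻¹' (Set.Ico ((2:ℝ)⁻¹ ^ k) (2 * (2:ℝ)⁻¹ ^ k)) := rfl
    rw [this]
    exact measurable_norm measurableSet_Ico
  have hcover : Metric.ball (0 : EuclideanSpace ℝ (Fin n)) 2 ⊆ {0} ∪ ⋃ k, S k := by
    intro y hy
    rcases eq_or_ne y 0 with rfl | hy0
    · exact Set.mem_union_left _ rfl
    right
    have hy2 : ‖y‖ < 2 := by simpa [mem_ball, dist_eq_norm] using hy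
    have hypos : 0 < ‖y‖ := norm_pos_iff.2 hy0
    have hex : ∃ k : ℕ, (2:ℝ)⁻¹ ^ k ≤ ‖y‖ := by
      obtain ⟨k, hk⟩ := exists_pow_lt_of_lt_one hypos (by norm_num : (2:ℝ)⁻¹ < 1)
      exact ⟨k, hk.le⟩
    set k := Nat.find hex with hk
    have h1 : (2:ℝ)⁻¹ ^ k ≤ ‖y‖ := Nat.find_spec hex
    refine Set.mem_iUnion.2 ⟨k, h1, ?_⟩
    rcases Nat.eq_zero_or_pos k with hk0 | hkpos
    · rw [hk0]; simpa using hy2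
    · have hmin := Nat.find_min hex (Nat.sub_lt hkpos one_pos)
      push_neg at hmin
      have hkk : k = (k - 1) + 1 := (Nat.succ_pred_eq_of_pos hkpos).symm
      have heq : 2 * (2:ℝ)⁻¹ ^ k = (2:ℝ)⁻¹ ^ (k - 1) := by
        conv_lhs => rw [hkk]
        rw [pow_succ]
        ring
      rw [heq]
      exact hmin
  set V := volume (Metric.ball (0 : EuclideanSpace ℝ (Fin n)) 1) with hV
  have hVfin : V ≠ ∞ := measure_ball_lt_top.ne
  set ρ : ℝ := (2:ℝ)⁻¹ ^ ((n:ℝ) + σ) with hρ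
  have hρ0 : 0 ≤ ρ := Real.rpow_nonneg (by norm_num) _
  have hρ1 : ρ < 1 := Real.rpow_lt_one (by norm_num) (by norm_num) (by linarith)
  have hterm : ∀ k : ℕ, (∫⁻ y in S k, ENNReal.ofReal (‖y‖ ^ σ))
      ≤ ENNReal.ofReal (2 ^ n) * V * ENNReal.ofReal ρ ^ k := by
    intro k
    have hb0 : (0:ℝ) < (2:ℝ)⁻¹ ^ k := by positivity
    have step1 : (∫⁻ y in S k, ENNReal.ofReal (‖y‖ ^ σ))
        ≤ ENNReal.ofReal (((2:ℝ)⁻¹ ^ k) ^ σ) * volume (S k) := by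
      rw [← setLIntegral_const (S k) _]
      refine setLIntegral_mono' (hSm k) fun y hy => ?_
      exact ENNReal.ofReal_le_ofReal
        (Real.rpow_le_rpow_of_nonpos hb0 hy.1 hσ0.le)
    have step2 : volume (S k) ≤ ENNReal.ofReal ((2 * (2:ℝ)⁻¹ ^ k) ^ n) * V := by
      have hsub : S k ⊆ Metric.ball (0 : EuclideanSpace ℝ (Fin n)) (2 * (2:ℝ)⁻¹ ^ k) := by
        intro y hy
        simpa [mem_ball, dist_eq_norm] using hy.2
      calc volume (S k) ≤ volume (Metric.ball (0 : EuclideanSpace ℝ (Fin n)) (2 * (2:ℝ)⁻¹ ^ k)) := measure_mono hsub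
        _ = ENNReal.ofReal ((2 * (2:ℝ)⁻¹ ^ k) ^ n) * V := by
            rw [Measure.addHaar_ball_of_pos volume _ (by positivity),
              finrank_euclideanSpace, Fintype.card_fin]
    calc (∫⁻ y in S k, ENNReal.ofReal (‖y‖ ^ σ))
        ≤ ENNReal.ofReal (((2:ℝ)⁻¹ ^ k) ^ σ) * (ENNReal.ofReal ((2 * (2:ℝ)⁻¹ ^ k) ^ n) * V) :=
          step1.trans (mul_le_mul_right step2 _)
      _ = ENNReal.ofReal (((2:ℝ)⁻¹ ^ k) ^ σ * (2 * (2:ℝ)⁻¹ ^ k) ^ n) * V := by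
          rw [← mul_assoc, ← ENNReal.ofReal_mul (Real.rpow_nonneg hb0.le _)]
      _ = ENNReal.ofReal (2 ^ n * ρ ^ k) * V := by
          congr 2
          have e1 : ((2:ℝ)⁻¹ ^ k) ^ σ = (2:ℝ)⁻¹ ^ ((k:ℝ) * σ) := by
            rw [← Real.rpow_natCast ((2:ℝ)⁻¹) k, ← Real.rpow_mul (by norm_num)]
          have e2 : ((2:ℝ) * (2:ℝ)⁻¹ ^ k) ^ n = 2 ^ n * (2:ℝ)⁻¹ ^ ((k:ℝ) * (n:ℝ)) := by
            rw [mul_pow, ← Real.rpow_natCast ((2:ℝ)⁻¹ ^ k) n,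
              ← Real.rpow_natCast ((2:ℝ)⁻¹) k, ← Real.rpow_mul (by norm_num)]
          have e3 : ρ ^ k = (2:ℝ)⁻¹ ^ ((k:ℝ) * ((n:ℝ) + σ)) := by
            rw [hρ, ← Real.rpow_natCast ((2:ℝ)⁻¹ ^ ((n:ℝ) + σ)) k,
              ← Real.rpow_mul (by norm_num), mul_comm ((n:ℝ) + σ) (k:ℝ)]
          rw [e1, e2, e3, show (k:ℝ) * ((n:ℝ) + σ) = (k:ℝ) * σ + (k:ℝ) * (n:ℝ) by ring,
            Real.rpow_add (by norm_num : (0:ℝ) < (2:ℝ)⁻¹)]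
          ring
      _ = ENNReal.ofReal (2 ^ n) * V * ENNReal.ofReal ρ ^ k := by
          rw [ENNReal.ofReal_mul (by positivity), ENNReal.ofReal_pow hρ0]
          ring
  have h0 : (∫⁻ y in ({0} : Set (EuclideanSpace ℝ (Fin n))), ENNReal.ofReal (‖y‖ ^ σ)) = 0 := by
    have hz : volume ({0} : Set (EuclideanSpace ℝ (Fin n))) = 0 := measure_singleton 0
    rw [setLIntegral_measure_zero _ _ hz]
  have hsum : (∫⁻ y in ⋃ k, S k, ENNReal.ofReal (‖y‖ ^ σ))
      ≤ ENNReal.ofReal (2 ^ n) * V * (1 - ENNReal.ofReal ρ)⁻¹ := by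
    calc (∫⁻ y in ⋃ k, S k, ENNReal.ofReal (‖y‖ ^ σ))
        ≤ ∑' k, ∫⁻ y in S k, ENNReal.ofReal (‖y‖ ^ σ) := lintegral_iUnion_le _ _
      _ ≤ ∑' k, ENNReal.ofReal (2 ^ n) * V * ENNReal.ofReal ρ ^ k := ENNReal.tsum_le_tsum hterm
      _ = ENNReal.ofReal (2 ^ n) * V * ∑' k, ENNReal.ofReal ρ ^ k := ENNReal.tsum_mul_left
      _ = ENNReal.ofReal (2 ^ n) * V * (1 - ENNReal.ofReal ρ)⁻¹ := by
          rw [ENNReal.tsum_geometric]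
  have hfin : ENNReal.ofReal (2 ^ n) * V * (1 - ENNReal.ofReal ρ)⁻¹ ≠ ∞ := by
    apply ENNReal.mul_ne_top (ENNReal.mul_ne_top ENNReal.ofReal_ne_top hVfin)
    rw [Ne, ENNReal.inv_eq_top]
    intro hbad
    rw [tsub_eq_zero_iff_le] at hbad
    exact absurd hbad (not_le.2 (ENNReal.ofReal_lt_one.2 hρ1))
  refine ne_top_of_le_ne_top hfin ?_
  calc (∫⁻ y in Metric.ball (0 : EuclideanSpace ℝ (Fin n)) 2, ENNReal.ofReal (‖y‖ ^ σ))
      ≤ ∫⁻ y in ({0} : Set (EuclideanSpace ℝ (Fin n))) ∪ ⋃ k, S k, ENNReal.ofReal (‖y‖ ^ σ) :=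
        lintegral_mono_set hcover
    _ ≤ (∫⁻ y in ({0} : Set (EuclideanSpace ℝ (Fin n))), ENNReal.ofReal (‖y‖ ^ σ))
        + ∫⁻ y in ⋃ k, S k, ENNReal.ofReal (‖y‖ ^ σ) := lintegral_union_le _ _ _
    _ ≤ ENNReal.ofReal (2 ^ n) * V * (1 - ENNReal.ofReal ρ)⁻¹ := by
        rw [h0, zero_add]
        exact hsum

lemma wolff_integrand_measurable {n : ℕ} (β p σ : ℝ) (x : EuclideanSpace ℝ (Fin n)) :
    Measurable fun r : ℝ =>
      ((ENNReal.ofReal (r ^ (p * β - (n : ℝ))) *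
        ∫⁻ y in Metric.ball x r, ENNReal.ofReal (‖y‖ ^ σ)) ^ (1 / (p - 1))) /
      ENNReal.ofReal r := by
  have hI : Monotone fun r : ℝ => ∫⁻ y in Metric.ball x r, ENNReal.ofReal (‖y‖ ^ σ) := by
    intro r₁ r₂ h
    exact lintegral_mono_set (Metric.ball_subset_ball h)
  exact (((measurable_id.pow_const _).ennreal_ofReal.mul hI.measurable).pow_const _).div
    measurable_id.ennreal_ofReal


lemma wolff_scale {n : ℕ} {p : ℝ} (hp1 : 1 < p) (β σ : ℝ) {l : ℝ} (hl : 0 < l)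
    (x : EuclideanSpace ℝ (Fin n)) :
    wolff n β p (fun y => ‖y‖ ^ σ) (l • x)
      = ENNReal.ofReal (l ^ ((p * β + σ) * (1 / (p - 1)))) *
          wolff n β p (fun y => ‖y‖ ^ σ) x := by
  have he : (0:ℝ) ≤ 1 / (p - 1) := div_nonneg zero_le_one (by linarith)
  have hl0 : ENNReal.ofReal l ≠ 0 := (ENNReal.ofReal_pos.2 hl).ne'
  set C : ℝ≥0∞ := ENNReal.ofReal (l ^ ((p * β + σ) * (1 / (p - 1)))) with hC
  have key : ∀ s ∈ Set.Ioi (0:ℝ),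
      ((ENNReal.ofReal ((l * s) ^ (p * β - (n : ℝ))) *
          ∫⁻ y in Metric.ball (l • x) (l * s), ENNReal.ofReal (‖y‖ ^ σ)) ^ (1 / (p - 1))) /
        ENNReal.ofReal (l * s)
      = (C * (ENNReal.ofReal l)⁻¹) *
        (((ENNReal.ofReal (s ^ (p * β - (n : ℝ))) *
          ∫⁻ y in Metric.ball x s, ENNReal.ofReal (‖y‖ ^ σ)) ^ (1 / (p - 1))) /
        ENNReal.ofReal s) := by
    intro s hs
    have hs0 : (0:ℝ) < s := hs
    rw [inner_scale σ hl x s, Real.mul_rpow hl.le hs0.le,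
      ENNReal.ofReal_mul (Real.rpow_nonneg hl.le _)]
    have hnum : ENNReal.ofReal (l ^ (p * β - (n:ℝ))) * ENNReal.ofReal (s ^ (p * β - (n:ℝ))) *
        (ENNReal.ofReal (l ^ ((n:ℝ) + σ)) *
          ∫⁻ y in Metric.ball x s, ENNReal.ofReal (‖y‖ ^ σ))
        = ENNReal.ofReal (l ^ (p * β + σ)) *
          (ENNReal.ofReal (s ^ (p * β - (n:ℝ))) *
            ∫⁻ y in Metric.ball x s, ENNReal.ofReal (‖y‖ ^ σ)) := by
      rw [show ENNReal.ofReal (l ^ (p * β - (n:ℝ))) * ENNReal.ofReal (s ^ (p * β - (n:ℝ))) *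
        (ENNReal.ofReal (l ^ ((n:ℝ) + σ)) * ∫⁻ y in Metric.ball x s, ENNReal.ofReal (‖y‖ ^ σ))
        = (ENNReal.ofReal (l ^ (p * β - (n:ℝ))) * ENNReal.ofReal (l ^ ((n:ℝ) + σ))) *
          (ENNReal.ofReal (s ^ (p * β - (n:ℝ))) *
            ∫⁻ y in Metric.ball x s, ENNReal.ofReal (‖y‖ ^ σ)) from by ring,
        ← ENNReal.ofReal_mul (Real.rpow_nonneg hl.le _), ← Real.rpow_add hl,
        show p * β - (n:ℝ) + ((n:ℝ) + σ) = p * β + σ from by ring]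
    rw [hnum, ENNReal.mul_rpow_of_nonneg _ _ he, ENNReal.ofReal_rpow_of_pos (Real.rpow_pos_of_pos hl _),
      ← Real.rpow_mul hl.le, ← hC, ENNReal.ofReal_mul hl.le]
    simp only [div_eq_mul_inv]
    rw [ENNReal.mul_inv (Or.inl hl0) (Or.inl ENNReal.ofReal_ne_top)]
    ring
  have hmeas := wolff_integrand_measurable (n := n) β p σ (l • x)
  rw [wolff, aux_subst hl _ hmeas]
  rw [setLIntegral_congr_fun measurableSet_Ioi key]
  rw [lintegral_const_mul' _ _ (by
    exact ENNReal.mul_ne_top ENNReal.ofReal_ne_top (ENNReal.inv_ne_top.2 hl0))]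
  rw [← mul_assoc, show ENNReal.ofReal l * (C * (ENNReal.ofReal l)⁻¹)
      = C * (ENNReal.ofReal l * (ENNReal.ofReal l)⁻¹) from by ring,
    ENNReal.mul_inv_cancel hl0 ENNReal.ofReal_ne_top, mul_one]
  rfl

-- bound on the inner integral, small radius
lemma inner_bound_small {n : ℕ} (hn : 0 < n) {σ : ℝ} (hσ0 : σ < 0)
    (x₀ : EuclideanSpace ℝ (Fin n)) (hx₀ : ‖x₀‖ = 1) {r : ℝ} (hr0 : 0 < r) (hr : r ≤ 1/2) :
    (∫⁻ y in Metric.ball x₀ r, ENNReal.ofReal (‖y‖ ^ σ))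
      ≤ ENNReal.ofReal ((2:ℝ)⁻¹ ^ σ) * volume (Metric.ball (0 : EuclideanSpace ℝ (Fin n)) 1)
          * ENNReal.ofReal (r ^ (n:ℝ)) := by
  have hsub : ∀ y ∈ Metric.ball x₀ r, ENNReal.ofReal (‖y‖ ^ σ) ≤ ENNReal.ofReal ((2:ℝ)⁻¹ ^ σ) := by
    intro y hy
    have h1 : ‖y - x₀‖ < r := by simpa [mem_ball, dist_eq_norm] using hy
    have h2 : (2:ℝ)⁻¹ ≤ ‖y‖ := by
      have := norm_sub_norm_le x₀ y
      have h3 : ‖x₀ - y‖ = ‖y - x₀‖ := norm_sub_rev _ _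
      rw [hx₀] at this
      rw [h3] at this
      linarith
    exact ENNReal.ofReal_le_ofReal (Real.rpow_le_rpow_of_nonpos (by norm_num) h2 hσ0.le)
  calc (∫⁻ y in Metric.ball x₀ r, ENNReal.ofReal (‖y‖ ^ σ))
      ≤ ∫⁻ _ in Metric.ball x₀ r, ENNReal.ofReal ((2:ℝ)⁻¹ ^ σ) :=
        setLIntegral_mono' measurableSet_ball hsub
    _ = ENNReal.ofReal ((2:ℝ)⁻¹ ^ σ) * volume (Metric.ball x₀ r) := setLIntegral_const _ _
    _ = ENNReal.ofReal ((2:ℝ)⁻¹ ^ σ) * (ENNReal.ofReal (r ^ n)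
          * volume (Metric.ball (0 : EuclideanSpace ℝ (Fin n)) 1)) := by
        rw [Measure.addHaar_ball_of_pos volume _ hr0, finrank_euclideanSpace, Fintype.card_fin]
    _ = ENNReal.ofReal ((2:ℝ)⁻¹ ^ σ) * volume (Metric.ball (0 : EuclideanSpace ℝ (Fin n)) 1)
          * ENNReal.ofReal (r ^ (n:ℝ)) := by
        rw [← Real.rpow_natCast r n]
        ring

-- bound on the inner integral, large radius
lemma inner_bound_large {n : ℕ} (hn : 0 < n) {σ : ℝ} (hσn : -(n:ℝ) < σ) (hσ0 : σ < 0)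
    (x₀ : EuclideanSpace ℝ (Fin n)) (hx₀ : ‖x₀‖ = 1) {r : ℝ} (hr : 1/2 ≤ r) :
    (∫⁻ y in Metric.ball x₀ r, ENNReal.ofReal (‖y‖ ^ σ))
      ≤ ENNReal.ofReal ((3:ℝ) ^ ((n:ℝ) + σ))
          * (∫⁻ y in Metric.ball (0 : EuclideanSpace ℝ (Fin n)) 2, ENNReal.ofReal (‖y‖ ^ σ))
          * ENNReal.ofReal (r ^ ((n:ℝ) + σ)) := by
  have hr0 : (0:ℝ) < r := by linarith
  have hsub : Metric.ball x₀ r ⊆ Metric.ball (0 : EuclideanSpace ℝ (Fin n)) ((3*r/2) * 2) := by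
    intro y hy
    have h1 : ‖y - x₀‖ < r := by simpa [mem_ball, dist_eq_norm] using hy
    have h2 : ‖y‖ ≤ ‖y - x₀‖ + ‖x₀‖ := by
      simpa using norm_add_le (y - x₀) x₀
    simp only [mem_ball, dist_zero_right]
    rw [hx₀] at h2
    linarith
  have hscale := inner_scale σ (show (0:ℝ) < 3*r/2 by linarith)
      (0 : EuclideanSpace ℝ (Fin n)) 2
  rw [smul_zero] at hscale
  calc (∫⁻ y in Metric.ball x₀ r, ENNReal.ofReal (‖y‖ ^ σ))
      ≤ ∫⁻ y in Metric.ball (0 : EuclideanSpace ℝ (Fin n)) ((3*r/2) * 2),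
          ENNReal.ofReal (‖y‖ ^ σ) := lintegral_mono_set hsub
    _ = ENNReal.ofReal ((3*r/2) ^ ((n:ℝ) + σ))
          * ∫⁻ y in Metric.ball (0 : EuclideanSpace ℝ (Fin n)) 2, ENNReal.ofReal (‖y‖ ^ σ) :=
        hscale
    _ ≤ ENNReal.ofReal ((3:ℝ) ^ ((n:ℝ) + σ) * r ^ ((n:ℝ) + σ))
          * ∫⁻ y in Metric.ball (0 : EuclideanSpace ℝ (Fin n)) 2, ENNReal.ofReal (‖y‖ ^ σ) := by
        refine mul_le_mul_left (ENNReal.ofReal_le_ofReal ?_) _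
        rw [← Real.mul_rpow (by norm_num) hr0.le]
        refine Real.rpow_le_rpow (by linarith) (by linarith) (by linarith)
    _ = ENNReal.ofReal ((3:ℝ) ^ ((n:ℝ) + σ))
          * (∫⁻ y in Metric.ball (0 : EuclideanSpace ℝ (Fin n)) 2, ENNReal.ofReal (‖y‖ ^ σ))
          * ENNReal.ofReal (r ^ ((n:ℝ) + σ)) := by
        rw [ENNReal.ofReal_mul (by positivity)]
        ring

lemma wolff_fin {n : ℕ} (hn : 0 < n) {p β σ : ℝ} (hp1 : 1 < p) (hβ : 0 < β)
    (hσn : -(n:ℝ) < σ) (hσ0 : σ < 0) (hκ : p * β + σ < 0)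
    (x₀ : EuclideanSpace ℝ (Fin n)) (hx₀ : ‖x₀‖ = 1) :
    wolff n β p (fun y => ‖y‖ ^ σ) x₀ ≠ ∞ := by
  set e : ℝ := 1 / (p - 1) with hedef
  have he : 0 < e := div_pos one_pos (by linarith)
  set G : ℝ → ℝ≥0∞ := fun r =>
    ((ENNReal.ofReal (r ^ (p * β - (n : ℝ))) *
        ∫⁻ y in Metric.ball x₀ r, ENNReal.ofReal (‖y‖ ^ σ)) ^ e) / ENNReal.ofReal r with hG
  have hwolff : wolff n β p (fun y => ‖y‖ ^ σ) x₀ = ∫⁻ r in Set.Ioi (0:ℝ), G r := rfl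
  set M := ∫⁻ y in Metric.ball (0 : EuclideanSpace ℝ (Fin n)) 2, ENNReal.ofReal (‖y‖ ^ σ)
    with hM
  have hMfin : M ≠ ∞ := finite_ball hn hσn hσ0
  set V := volume (Metric.ball (0 : EuclideanSpace ℝ (Fin n)) 1) with hV
  have hVfin : V ≠ ∞ := measure_ball_lt_top.ne
  set D₁ : ℝ≥0∞ := (ENNReal.ofReal ((2:ℝ)⁻¹ ^ σ) * V) ^ e with hD₁
  have hD₁fin : D₁ ≠ ∞ :=
    ENNReal.rpow_ne_top_of_nonneg he.le (ENNReal.mul_ne_top ENNReal.ofReal_ne_top hVfin)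
  set D₂ : ℝ≥0∞ := (ENNReal.ofReal ((3:ℝ) ^ ((n:ℝ) + σ)) * M) ^ e with hD₂
  have hD₂fin : D₂ ≠ ∞ :=
    ENNReal.rpow_ne_top_of_nonneg he.le (ENNReal.mul_ne_top ENNReal.ofReal_ne_top hMfin)
  -- small radii
  have hsmall : ∀ r ∈ Set.Ioo (0:ℝ) (1/2), G r ≤ D₁ * ENNReal.ofReal (r ^ (p*β*e - 1)) := by
    intro r hr
    have hr0 : (0:ℝ) < r := hr.1
    have hnum : ENNReal.ofReal (r ^ (p * β - (n : ℝ))) *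
        (∫⁻ y in Metric.ball x₀ r, ENNReal.ofReal (‖y‖ ^ σ))
        ≤ (ENNReal.ofReal ((2:ℝ)⁻¹ ^ σ) * V) * ENNReal.ofReal (r ^ (p*β)) := by
      calc ENNReal.ofReal (r ^ (p * β - (n : ℝ))) *
          (∫⁻ y in Metric.ball x₀ r, ENNReal.ofReal (‖y‖ ^ σ))
          ≤ ENNReal.ofReal (r ^ (p * β - (n : ℝ))) *
            (ENNReal.ofReal ((2:ℝ)⁻¹ ^ σ) * V * ENNReal.ofReal (r ^ (n:ℝ))) :=
            mul_le_mul_right (inner_bound_small hn hσ0 x₀ hx₀ hr0 hr.2.le) _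
        _ = (ENNReal.ofReal ((2:ℝ)⁻¹ ^ σ) * V) *
            (ENNReal.ofReal (r ^ (p * β - (n : ℝ))) * ENNReal.ofReal (r ^ (n:ℝ))) := by ring
        _ = (ENNReal.ofReal ((2:ℝ)⁻¹ ^ σ) * V) * ENNReal.ofReal (r ^ (p*β)) := by
            rw [← ENNReal.ofReal_mul (Real.rpow_nonneg hr0.le _), ← Real.rpow_add hr0,
              show p * β - (n:ℝ) + (n:ℝ) = p * β from by ring]
    calc G r ≤ (((ENNReal.ofReal ((2:ℝ)⁻¹ ^ σ) * V) * ENNReal.ofReal (r ^ (p*β))) ^ e)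
        / ENNReal.ofReal r := by
          exact ENNReal.div_le_div_right (ENNReal.rpow_le_rpow hnum he.le) _
      _ = D₁ * (ENNReal.ofReal (r ^ (p*β*e)) / ENNReal.ofReal r) := by
          rw [ENNReal.mul_rpow_of_nonneg _ _ he.le,
            ENNReal.ofReal_rpow_of_pos (Real.rpow_pos_of_pos hr0 _), ← Real.rpow_mul hr0.le,
            mul_div_assoc]
      _ = D₁ * ENNReal.ofReal (r ^ (p*β*e - 1)) := by
          rw [← ENNReal.ofReal_div_of_pos hr0,
            show r ^ (p*β*e - 1) = r ^ (p*β*e) / r from by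
              rw [Real.rpow_sub hr0, Real.rpow_one]]
  -- large radii
  have hlarge : ∀ r ∈ Set.Ici (1/2:ℝ), G r ≤ D₂ * ENNReal.ofReal (r ^ ((p*β+σ)*e - 1)) := by
    intro r hr
    have hr0 : (0:ℝ) < r := by
      have : (1/2:ℝ) ≤ r := hr
      linarith
    have hnum : ENNReal.ofReal (r ^ (p * β - (n : ℝ))) *
        (∫⁻ y in Metric.ball x₀ r, ENNReal.ofReal (‖y‖ ^ σ))
        ≤ (ENNReal.ofReal ((3:ℝ) ^ ((n:ℝ) + σ)) * M) * ENNReal.ofReal (r ^ (p*β+σ)) := by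
      calc ENNReal.ofReal (r ^ (p * β - (n : ℝ))) *
          (∫⁻ y in Metric.ball x₀ r, ENNReal.ofReal (‖y‖ ^ σ))
          ≤ ENNReal.ofReal (r ^ (p * β - (n : ℝ))) *
            (ENNReal.ofReal ((3:ℝ) ^ ((n:ℝ) + σ)) * M * ENNReal.ofReal (r ^ ((n:ℝ)+σ))) :=
            mul_le_mul_right (inner_bound_large hn hσn hσ0 x₀ hx₀ hr) _
        _ = (ENNReal.ofReal ((3:ℝ) ^ ((n:ℝ) + σ)) * M) *
            (ENNReal.ofReal (r ^ (p * β - (n : ℝ))) * ENNReal.ofReal (r ^ ((n:ℝ)+σ))) := by ring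
        _ = (ENNReal.ofReal ((3:ℝ) ^ ((n:ℝ) + σ)) * M) * ENNReal.ofReal (r ^ (p*β+σ)) := by
            rw [← ENNReal.ofReal_mul (Real.rpow_nonneg hr0.le _), ← Real.rpow_add hr0,
              show p * β - (n:ℝ) + ((n:ℝ)+σ) = p * β + σ from by ring]
    calc G r ≤ (((ENNReal.ofReal ((3:ℝ) ^ ((n:ℝ) + σ)) * M) * ENNReal.ofReal (r ^ (p*β+σ))) ^ e)
        / ENNReal.ofReal r :=
          ENNReal.div_le_div_right (ENNReal.rpow_le_rpow hnum he.le) _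
      _ = D₂ * (ENNReal.ofReal (r ^ ((p*β+σ)*e)) / ENNReal.ofReal r) := by
          rw [ENNReal.mul_rpow_of_nonneg _ _ he.le,
            ENNReal.ofReal_rpow_of_pos (Real.rpow_pos_of_pos hr0 _), ← Real.rpow_mul hr0.le,
            mul_div_assoc]
      _ = D₂ * ENNReal.ofReal (r ^ ((p*β+σ)*e - 1)) := by
          rw [← ENNReal.ofReal_div_of_pos hr0,
            show r ^ ((p*β+σ)*e - 1) = r ^ ((p*β+σ)*e) / r from by
              rw [Real.rpow_sub hr0, Real.rpow_one]]
  -- the two integrals are finite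
  have hint1 : (∫⁻ r in Set.Ioo (0:ℝ) (1/2), ENNReal.ofReal (r ^ (p*β*e - 1))) ≠ ∞ := by
    have hI : IntegrableOn (fun r : ℝ => r ^ (p*β*e - 1)) (Set.Ioo (0:ℝ) (1/2)) := by
      refine (intervalIntegral.integrableOn_Ioo_rpow_iff (by norm_num)).2 ?_
      have : 0 < p * β * e := by
        have : 0 < p := by linarith
        positivity
      linarith
    have hfin := (hasFiniteIntegral_iff_norm _).1 hI.2
    refine ne_top_of_le_ne_top hfin.ne (lintegral_mono fun r => ENNReal.ofReal_le_ofReal ?_)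
    rw [Real.norm_eq_abs]
    exact le_abs_self _
  have hint2 : (∫⁻ r in Set.Ioi (1/4:ℝ), ENNReal.ofReal (r ^ ((p*β+σ)*e - 1))) ≠ ∞ := by
    have hI : IntegrableOn (fun r : ℝ => r ^ ((p*β+σ)*e - 1)) (Set.Ioi (1/4:ℝ)) := by
      refine integrableOn_Ioi_rpow_of_lt ?_ (by norm_num)
      have h1 : (p*β+σ)*e < 0 := mul_neg_of_neg_of_pos hκ he
      linarith
    have hfin := (hasFiniteIntegral_iff_norm _).1 hI.2
    refine ne_top_of_le_ne_top hfin.ne (lintegral_mono fun r => ENNReal.ofReal_le_ofReal ?_)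
    rw [Real.norm_eq_abs]
    exact le_abs_self _
  -- assemble
  rw [hwolff]
  have hsplit : Set.Ioi (0:ℝ) ⊆ Set.Ioo (0:ℝ) (1/2) ∪ Set.Ici (1/2:ℝ) := by
    intro r hr
    rcases lt_or_ge r (1/2) with h | h
    · exact Or.inl ⟨hr, h⟩
    · exact Or.inr h
  refine ne_top_of_le_ne_top ?_
    ((lintegral_mono_set hsplit).trans (lintegral_union_le _ _ _))
  refine ENNReal.add_ne_top.2 ⟨?_, ?_⟩
  · refine ne_top_of_le_ne_top (ENNReal.mul_ne_top hD₁fin hint1) ?_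
    calc (∫⁻ r in Set.Ioo (0:ℝ) (1/2), G r)
        ≤ ∫⁻ r in Set.Ioo (0:ℝ) (1/2), D₁ * ENNReal.ofReal (r ^ (p*β*e - 1)) :=
          setLIntegral_mono' measurableSet_Ioo hsmall
      _ = D₁ * ∫⁻ r in Set.Ioo (0:ℝ) (1/2), ENNReal.ofReal (r ^ (p*β*e - 1)) :=
          lintegral_const_mul' _ _ hD₁fin
  · refine ne_top_of_le_ne_top (ENNReal.mul_ne_top hD₂fin hint2) ?_
    calc (∫⁻ r in Set.Ici (1/2:ℝ), G r)
        ≤ ∫⁻ r in Set.Ici (1/2:ℝ), D₂ * ENNReal.ofReal (r ^ ((p*β+σ)*e - 1)) :=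
          setLIntegral_mono' measurableSet_Ici hlarge
      _ ≤ ∫⁻ r in Set.Ioi (1/4:ℝ), D₂ * ENNReal.ofReal (r ^ ((p*β+σ)*e - 1)) :=
          lintegral_mono_set (fun r hr => by
            simp only [Set.mem_Ici] at hr
            simp only [Set.mem_Ioi]
            linarith)
      _ = D₂ * ∫⁻ r in Set.Ioi (1/4:ℝ), ENNReal.ofReal (r ^ ((p*β+σ)*e - 1)) :=
          lintegral_const_mul' _ _ hD₂fin

lemma wolff_pos {n : ℕ} (hn : 0 < n) {p β σ : ℝ} (hp1 : 1 < p) (hβn : p * β < n)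
    (hσn : -(n:ℝ) < σ) (hσ0 : σ < 0)
    (x₀ : EuclideanSpace ℝ (Fin n)) (hx₀ : ‖x₀‖ = 1) :
    0 < wolff n β p (fun y => ‖y‖ ^ σ) x₀ := by
  set e : ℝ := 1 / (p - 1) with hedef
  have he : 0 < e := div_pos one_pos (by linarith)
  set I : ℝ → ℝ≥0∞ := fun r => ∫⁻ y in Metric.ball x₀ r, ENNReal.ofReal (‖y‖ ^ σ) with hI
  set G : ℝ → ℝ≥0∞ := fun r =>
    ((ENNReal.ofReal (r ^ (p * β - (n : ℝ))) * I r) ^ e) / ENNReal.ofReal r with hG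
  have hwolff : wolff n β p (fun y => ‖y‖ ^ σ) x₀ = ∫⁻ r in Set.Ioi (0:ℝ), G r := rfl
  -- ε = I 1 is positive and finite
  have hεpos : 0 < I 1 := by
    have hlow : ∀ y ∈ Metric.ball x₀ (1/2 : ℝ),
        ENNReal.ofReal ((3/2:ℝ) ^ σ) ≤ ENNReal.ofReal (‖y‖ ^ σ) := by
      intro y hy
      have h1 : ‖y - x₀‖ < 1/2 := by simpa [mem_ball, dist_eq_norm] using hy
      have h2 : ‖y‖ ≤ 3/2 := by
        have := norm_add_le (y - x₀) x₀
        simp only [sub_add_cancel] at this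
        rw [hx₀] at this
        linarith
      have h3 : (0:ℝ) < ‖y‖ := by
        have := norm_sub_norm_le x₀ y
        rw [hx₀, norm_sub_rev] at this
        linarith
      exact ENNReal.ofReal_le_ofReal (Real.rpow_le_rpow_of_nonpos h3 h2 hσ0.le)
    have hsub : Metric.ball x₀ (1/2:ℝ) ⊆ Metric.ball x₀ 1 := Metric.ball_subset_ball (by norm_num)
    have : ENNReal.ofReal ((3/2:ℝ) ^ σ) * volume (Metric.ball x₀ (1/2:ℝ)) ≤ I 1 := by
      calc ENNReal.ofReal ((3/2:ℝ) ^ σ) * volume (Metric.ball x₀ (1/2:ℝ))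
          = ∫⁻ _ in Metric.ball x₀ (1/2:ℝ), ENNReal.ofReal ((3/2:ℝ) ^ σ) :=
            (setLIntegral_const _ _).symm
        _ ≤ ∫⁻ y in Metric.ball x₀ (1/2:ℝ), ENNReal.ofReal (‖y‖ ^ σ) :=
            setLIntegral_mono ((measurable_norm.pow_const σ).ennreal_ofReal) hlow
        _ ≤ I 1 := lintegral_mono_set hsub
    refine lt_of_lt_of_le ?_ this
    exact ENNReal.mul_pos (ENNReal.ofReal_pos.2 (Real.rpow_pos_of_pos (by norm_num) _)).ne'
      (measure_ball_pos volume x₀ (by norm_num)).ne'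
  have hεfin : I 1 ≠ ∞ := by
    refine ne_top_of_le_ne_top (finite_ball hn hσn hσ0) (lintegral_mono_set ?_)
    intro y hy
    have h1 : ‖y - x₀‖ < 1 := by simpa [mem_ball, dist_eq_norm] using hy
    have h2 : ‖y‖ ≤ ‖y - x₀‖ + ‖x₀‖ := by simpa using norm_add_le (y - x₀) x₀
    simp only [mem_ball, dist_zero_right]
    rw [hx₀] at h2
    linarith
  -- lower bound for the integrand on (1,2)
  set κ : ℝ≥0∞ := ((ENNReal.ofReal ((2:ℝ) ^ (p * β - (n:ℝ))) * I 1) ^ e) / 2 with hκdef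
  have hκpos : 0 < κ := by
    refine ENNReal.div_pos ?_ (by norm_num)
    refine (ENNReal.rpow_pos ?_ ?_).ne'
    · exact ENNReal.mul_pos (ENNReal.ofReal_pos.2 (Real.rpow_pos_of_pos (by norm_num) _)).ne'
        hεpos.ne'
    · exact ENNReal.mul_ne_top ENNReal.ofReal_ne_top hεfin
  have hlow : ∀ r ∈ Set.Ioo (1:ℝ) 2, κ ≤ G r := by
    intro r hr
    have h1 : ENNReal.ofReal ((2:ℝ) ^ (p * β - (n:ℝ))) ≤ ENNReal.ofReal (r ^ (p * β - (n:ℝ))) :=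
      ENNReal.ofReal_le_ofReal
        (Real.rpow_le_rpow_of_nonpos (by linarith [hr.1]) hr.2.le (by linarith))
    have h2 : I 1 ≤ I r := lintegral_mono_set (Metric.ball_subset_ball hr.1.le)
    have h3 : (ENNReal.ofReal ((2:ℝ) ^ (p * β - (n:ℝ))) * I 1) ^ e
        ≤ (ENNReal.ofReal (r ^ (p * β - (n:ℝ))) * I r) ^ e :=
      ENNReal.rpow_le_rpow (mul_le_mul' h1 h2) he.le
    have h4 : ENNReal.ofReal r ≤ 2 := by
      rw [show (2:ℝ≥0∞) = ENNReal.ofReal 2 from by norm_num]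
      exact ENNReal.ofReal_le_ofReal hr.2.le
    calc κ ≤ ((ENNReal.ofReal (r ^ (p * β - (n:ℝ))) * I r) ^ e) / 2 :=
          ENNReal.div_le_div_right h3 _
      _ ≤ G r := ENNReal.div_le_div_left h4 _
  have : κ * volume (Set.Ioo (1:ℝ) 2) ≤ ∫⁻ r in Set.Ioo (1:ℝ) 2, G r := by
    rw [← setLIntegral_const]
    exact setLIntegral_mono' measurableSet_Ioo hlow
  rw [Real.volume_Ioo, show (2:ℝ) - 1 = 1 from by norm_num, ENNReal.ofReal_one, mul_one] at this
  have hsub : Set.Ioo (1:ℝ) 2 ⊆ Set.Ioi (0:ℝ) := fun r hr => lt_trans one_pos hr.1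
  calc (0:ℝ≥0∞) < κ := hκpos
    _ ≤ ∫⁻ r in Set.Ioo (1:ℝ) 2, G r := this
    _ ≤ ∫⁻ r in Set.Ioi (0:ℝ), G r := lintegral_mono_set hsub
    _ = wolff n β p (fun y => ‖y‖ ^ σ) x₀ := hwolff.symm

lemma wolff_rot {n : ℕ} (β p σ : ℝ) (x x' : EuclideanSpace ℝ (Fin n)) (hxx : ‖x‖ = ‖x'‖) :
    wolff n β p (fun y => ‖y‖ ^ σ) x = wolff n β p (fun y => ‖y‖ ^ σ) x' := by
  unfold wolff
  refine lintegral_congr fun r => ?_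
  rw [inner_rot σ r x x' hxx]

lemma wolff_const_mul {n : ℕ} {p : ℝ} (hp1 : 1 < p) (β : ℝ) {k : ℝ} (hk : 0 ≤ k)
    (f : EuclideanSpace ℝ (Fin n) → ℝ) (x : EuclideanSpace ℝ (Fin n)) :
    wolff n β p (fun y => k * f y) x
      = ENNReal.ofReal k ^ (1 / (p - 1)) * wolff n β p f x := by
  have he : (0:ℝ) ≤ 1 / (p - 1) := div_nonneg zero_le_one (by linarith)
  have hKfin : ENNReal.ofReal k ^ (1 / (p - 1)) ≠ ∞ :=
    ENNReal.rpow_ne_top_of_nonneg he ENNReal.ofReal_ne_top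
  unfold wolff
  rw [← lintegral_const_mul' _ _ hKfin]
  refine lintegral_congr fun r => ?_
  have hin : (∫⁻ y in Metric.ball x r, ENNReal.ofReal (k * f y))
      = ENNReal.ofReal k * ∫⁻ y in Metric.ball x r, ENNReal.ofReal (f y) := by
    rw [← lintegral_const_mul' _ _ ENNReal.ofReal_ne_top]
    refine lintegral_congr fun y => ?_
    rw [ENNReal.ofReal_mul hk]
  rw [hin, show ENNReal.ofReal (r ^ (p * β - (n:ℝ))) *
      (ENNReal.ofReal k * ∫⁻ y in Metric.ball x r, ENNReal.ofReal (f y))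
      = ENNReal.ofReal k * (ENNReal.ofReal (r ^ (p * β - (n:ℝ))) *
        ∫⁻ y in Metric.ball x r, ENNReal.ofReal (f y)) from by ring,
    ENNReal.mul_rpow_of_nonneg _ _ he, mul_div_assoc]

end WolffAux

set_option maxHeartbeats 1000000 in
/-- `u(x) = c|x|^{-t}` with the slow rate `t = (pβ+a)/(q-p+1)` solves the
integral equation with some double bounded `R` on `ℝⁿ \ {0}`: its Wolff potential is
finite and positive there, and comparable to `u`. -/
theorem stmt5_singular_solution
    (n : ℕ) (hn : 3 ≤ n) (p β a q : ℝ)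
    (hp1 : 1 < p) (hp2 : p ≤ 2) (hβ : 0 < β)
    (ha0 : 0 ≤ -a) (ha : -a < p * β) (hβn : p * β < n)
    (hq2 : (n + a) * (p - 1) / (n - p * β) < q)
    (t c : ℝ) (ht : t = (p * β + a) / (q - p + 1)) (hc : 0 < c) :
    (∀ x : EuclideanSpace ℝ (Fin n), x ≠ 0 →
      wolff n β p (fun y => ‖y‖ ^ a * (c * ‖y‖ ^ (-t)) ^ q) x ≠ ∞ ∧
      0 < wolff n β p (fun y => ‖y‖ ^ a * (c * ‖y‖ ^ (-t)) ^ q) x) ∧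
    ∃ c₁ c₂ : ℝ, 0 < c₁ ∧ c₁ ≤ c₂ ∧
      ∀ x : EuclideanSpace ℝ (Fin n), x ≠ 0 →
        c₁ * (wolff n β p (fun y => ‖y‖ ^ a * (c * ‖y‖ ^ (-t)) ^ q) x).toReal
            ≤ c * ‖x‖ ^ (-t) ∧
        c * ‖x‖ ^ (-t)
            ≤ c₂ * (wolff n β p (fun y => ‖y‖ ^ a * (c * ‖y‖ ^ (-t)) ^ q) x).toReal := by

  have hnpos : 0 < n := by omega
  have hp0 : (0:ℝ) < p - 1 := by linarith
  have hnpβ : (0:ℝ) < (n:ℝ) - p * β := by linarith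
  have ha' : a ≤ 0 := by linarith
  have hpβa : (0:ℝ) < p * β + a := by linarith
  have hq2' : ((n:ℝ) + a) * (p - 1) < q * ((n:ℝ) - p * β) := by
    rwa [div_lt_iff₀ hnpβ] at hq2
  have hq : p - 1 < q := by nlinarith [hq2', mul_pos hp0 hpβa, hnpβ]
  have hqp : (0:ℝ) < q - p + 1 := by linarith
  have hq0 : (0:ℝ) < q := by linarith
  have ht0 : 0 < t := by rw [ht]; positivity
  set σ : ℝ := a - t * q with hσ
  have hσ0 : σ < 0 := by linarith [hσ, mul_pos ht0 hq0, ha']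
  have hts : t * (q - p + 1) = p * β + a := by rw [ht]; field_simp
  have hkey : p * β + σ = -(t * (p - 1)) := by rw [hσ]; linarith [hts]
  have hκneg : p * β + σ < 0 := by linarith [hkey, mul_pos ht0 hp0]
  have hσn : -(n:ℝ) < σ := by
    have h2 : (p*β+a)*(p-1) < ((n:ℝ) - p*β) * (q - p + 1) := by nlinarith [hq2']
    have h1 : t * (q - p + 1) * (p-1) = (p*β+a)*(p-1) := by rw [hts]
    have h3 : t * (p-1) < (n:ℝ) - p*β := by
      refine lt_of_mul_lt_mul_right ?_ hqp.le
      calc t * (p-1) * (q-p+1) = t * (q - p + 1) * (p-1) := by ring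
        _ = (p*β+a)*(p-1) := h1
        _ < ((n:ℝ) - p*β) * (q - p + 1) := h2
    linarith [hkey, h3]
  have he : (0:ℝ) < 1 / (p - 1) := div_pos one_pos hp0
  have hexp : (p * β + σ) * (1 / (p - 1)) = -t := by
    rw [hkey]; field_simp
  have hfeq : (fun y : EuclideanSpace ℝ (Fin n) => ‖y‖ ^ a * (c * ‖y‖ ^ (-t)) ^ q)
      = fun y => c ^ q * ‖y‖ ^ σ := by
    funext y
    rcases eq_or_ne y 0 with rfl | hy
    · rw [norm_zero, Real.zero_rpow (neg_ne_zero.2 ht0.ne'), mul_zero,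
        Real.zero_rpow hq0.ne', mul_zero, Real.zero_rpow hσ0.ne, mul_zero]
    · have hy0 : (0:ℝ) < ‖y‖ := norm_pos_iff.2 hy
      rw [Real.mul_rpow hc.le (Real.rpow_nonneg (norm_nonneg y) _),
        ← Real.rpow_mul (norm_nonneg y),
        show ‖y‖ ^ a * (c ^ q * ‖y‖ ^ (-t * q)) = c ^ q * (‖y‖ ^ a * ‖y‖ ^ (-t * q)) from by ring,
        ← Real.rpow_add hy0, show a + -t * q = σ from by rw [hσ]; ring]
  set x₀ : EuclideanSpace ℝ (Fin n) := EuclideanSpace.single (⟨0, hnpos⟩ : Fin n) (1:ℝ)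
    with hx₀def
  have hx₀ : ‖x₀‖ = 1 := by simp [hx₀def, EuclideanSpace.norm_single]
  have hW₀fin : wolff n β p (fun y => ‖y‖ ^ σ) x₀ ≠ ∞ :=
    wolff_fin hnpos hp1 hβ hσn hσ0 hκneg x₀ hx₀
  have hW₀pos : 0 < wolff n β p (fun y => ‖y‖ ^ σ) x₀ :=
    wolff_pos hnpos hp1 hβn hσn hσ0 x₀ hx₀
  have hWgx : ∀ x : EuclideanSpace ℝ (Fin n), x ≠ 0 →
      wolff n β p (fun y => ‖y‖ ^ σ) x
        = ENNReal.ofReal (‖x‖ ^ (-t)) * wolff n β p (fun y => ‖y‖ ^ σ) x₀ := by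
    intro x hx
    have hxn : (0:ℝ) < ‖x‖ := norm_pos_iff.2 hx
    have hu1 : ‖‖x‖⁻¹ • x‖ = 1 := by
      rw [norm_smul, Real.norm_eq_abs, abs_of_pos (inv_pos.2 hxn), inv_mul_cancel₀ hxn.ne']
    conv_lhs => rw [show x = ‖x‖ • ‖x‖⁻¹ • x from (smul_inv_smul₀ hxn.ne' x).symm]
    rw [wolff_scale hp1 β σ hxn (‖x‖⁻¹ • x), hexp,
      wolff_rot β p σ (‖x‖⁻¹ • x) x₀ (hu1.trans hx₀.symm)]
  set K : ℝ≥0∞ := ENNReal.ofReal (c ^ q) ^ (1 / (p - 1)) *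
      wolff n β p (fun y => ‖y‖ ^ σ) x₀ with hKdef
  have hK0 : K ≠ 0 := by
    refine mul_ne_zero ?_ hW₀pos.ne'
    exact (ENNReal.rpow_pos (ENNReal.ofReal_pos.2 (Real.rpow_pos_of_pos hc q))
      ENNReal.ofReal_ne_top).ne'
  have hKfin : K ≠ ∞ :=
    ENNReal.mul_ne_top (ENNReal.rpow_ne_top_of_nonneg he.le ENNReal.ofReal_ne_top) hW₀fin
  have hform : ∀ x : EuclideanSpace ℝ (Fin n), x ≠ 0 →
      wolff n β p (fun y => ‖y‖ ^ a * (c * ‖y‖ ^ (-t)) ^ q) x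
        = ENNReal.ofReal (‖x‖ ^ (-t)) * K := by
    intro x hx
    rw [hfeq, wolff_const_mul hp1 β (by positivity) _ x, hWgx x hx, hKdef]
    ring
  have hKt : 0 < K.toReal := ENNReal.toReal_pos hK0 hKfin
  constructor
  · intro x hx
    have hxn : (0:ℝ) < ‖x‖ := norm_pos_iff.2 hx
    rw [hform x hx]
    exact ⟨ENNReal.mul_ne_top ENNReal.ofReal_ne_top hKfin,
      ENNReal.mul_pos (ENNReal.ofReal_pos.2 (Real.rpow_pos_of_pos hxn _)).ne' hK0⟩
  · refine ⟨c / K.toReal, c / K.toReal, div_pos hc hKt, le_refl _, ?_⟩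
    intro x hx
    have hxn : (0:ℝ) < ‖x‖ := norm_pos_iff.2 hx
    have htr : (wolff n β p (fun y => ‖y‖ ^ a * (c * ‖y‖ ^ (-t)) ^ q) x).toReal
        = ‖x‖ ^ (-t) * K.toReal := by
      rw [hform x hx, ENNReal.toReal_mul, ENNReal.toReal_ofReal (Real.rpow_nonneg hxn.le _)]
    rw [htr]
    have heq : c / K.toReal * (‖x‖ ^ (-t) * K.toReal) = c * ‖x‖ ^ (-t) := by
      field_simp
    exact ⟨heq.le, heq.ge⟩
end

section
/- Assume n ≥ 3, p ∈ (1,2], q > p−1, β > 0, 0 ≤ −a < pβ < n, and q > (n+a)(p−1)/(n−pβ). Let u be a positive solution of the integral equation (IE). Then there exist c > 0 and M > 0 such that u(x) ≥ c|x|^{−(n−pβ)/(p−1)} for all |x| ≥ M. -/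
open MeasureTheory Metric Set Filter ENNReal

/-- any positive solution of the integral equation is bounded below by a
multiple of the fast decay rate profile `|x|^{-(n-pβ)/(p-1)}` near infinity. -/
theorem stmt7_fast_rate_lower_bound
    (n : ℕ) (hn : 3 ≤ n) (p β a q : ℝ)
    (hp1 : 1 < p) (hp2 : p ≤ 2) (hβ : 0 < β)
    (ha0 : 0 ≤ -a) (ha : -a < p * β) (hβn : p * β < n)
    (hq1 : p - 1 < q) (hq2 : (n + a) * (p - 1) / (n - p * β) < q)
    (R u : EuclideanSpace ℝ (Fin n) → ℝ)
    (hR : DoubleBounded R) (hu : IsIESolutionWith n β p a q R u) :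
    ∃ (c M : ℝ), 0 < c ∧ 0 < M ∧
      ∀ x : EuclideanSpace ℝ (Fin n), M ≤ ‖x‖ →
        c * ‖x‖ ^ (-((n - p * β) / (p - 1))) ≤ u x := by
  obtain ⟨C, hC, hRC⟩ := hR
  obtain ⟨hu_cont, hu_pos, hu_eq⟩ := hu
  have hp : (0:ℝ) < p - 1 := by linarith
  have ha' : a ≤ 0 := by linarith
  have hq0 : (0:ℝ) < q := by linarith
  set e : ℝ := p * β - n with he_def
  have he : e < 0 := by simp only [he_def]; linarith
  set α : ℝ := e / (p - 1) with hα_def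
  have hα : α < 0 := div_neg_of_neg_of_pos he hp
  -- a point of norm 3/4
  set x0 : EuclideanSpace ℝ (Fin n) :=
    EuclideanSpace.single (⟨0, by omega⟩ : Fin n) ((3:ℝ)/4) with hx0_def
  have hx0 : ‖x0‖ = 3/4 := by
    rw [hx0_def, EuclideanSpace.norm_single, Real.norm_eq_abs]
    norm_num
  -- minimum of u on a small closed ball
  obtain ⟨z, hz, hzmin⟩ := (isCompact_closedBall x0 (1/8)).exists_isMinOn
    ⟨x0, mem_closedBall_self (by norm_num)⟩ hu_cont.continuousOn
  set m : ℝ := u z with hm_def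
  have hm : 0 < m := hu_pos z
  -- the measure of the small ball
  set v : ℝ≥0∞ := volume (ball x0 (1/8)) with hv_def
  have hv0 : 0 < v := measure_ball_pos _ _ (by norm_num)
  have hvt : v ≠ ∞ := measure_ball_lt_top.ne
  set ℓ : ℝ := m ^ q * v.toReal with hℓ_def
  have hℓ : 0 < ℓ := mul_pos (Real.rpow_pos_of_pos hm q)
    (ENNReal.toReal_pos hv0.ne' hvt)
  -- lower bound for f on the small ball
  have hf : ∀ y ∈ ball x0 (1/8),
      ENNReal.ofReal (m ^ q) ≤ ENNReal.ofReal (‖y‖ ^ a * u y ^ q) := by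
    intro y hy
    have hy' : y ∈ closedBall x0 (1/8) := ball_subset_closedBall hy
    have hd : ‖y - x0‖ ≤ 1/8 := by
      rw [← dist_eq_norm]; exact mem_closedBall.mp hy'
    have habs : |‖y‖ - ‖x0‖| ≤ 1/8 := le_trans (abs_norm_sub_norm_le y x0) hd
    have h1 : ‖y‖ ≤ 1 := by
      have := abs_le.mp habs; rw [hx0] at this; linarith [this.2]
    have h2 : 0 < ‖y‖ := by
      have := abs_le.mp habs; rw [hx0] at this; linarith [this.1]
    have h3 : (1:ℝ) ≤ ‖y‖ ^ a :=
      Real.one_le_rpow_of_pos_of_le_one_of_nonpos h2 h1 ha'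
    have h4 : m ^ q ≤ u y ^ q :=
      Real.rpow_le_rpow hm.le (hzmin hy') hq0.le
    have h5 : u y ^ q ≤ ‖y‖ ^ a * u y ^ q :=
      le_mul_of_one_le_left (Real.rpow_nonneg (hu_pos y).le q) h3
    exact ENNReal.ofReal_le_ofReal (le_trans h4 h5)
  -- constants
  set c0 : ℝ := ℓ ^ (1/(p-1)) * 4 ^ (α - 1) with hc0_def
  have hc0 : 0 < c0 := mul_pos (Real.rpow_pos_of_pos hℓ _)
    (Real.rpow_pos_of_pos (by norm_num) _)
  refine ⟨c0 / C, 1, div_pos hc0 hC, one_pos, ?_⟩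
  intro x hx
  set s : ℝ := ‖x‖ with hs_def
  have hs1 : (1:ℝ) ≤ s := hx
  have hs0 : 0 < s := by linarith
  set T : ℝ := s + 1 with hT_def
  have hT0 : 0 < T := by linarith
  have hT4 : 2 * T ≤ 4 * s := by rw [hT_def]; linarith
  -- the key constant lower bound for the integrand on Ioc T (2T)
  set L : ℝ≥0∞ := ENNReal.ofReal (m ^ q) * v with hL_def
  have hLℓ : L = ENNReal.ofReal ℓ := by
    rw [hL_def, hℓ_def, ENNReal.ofReal_mul (Real.rpow_nonneg hm.le q),
      ENNReal.ofReal_toReal hvt]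
  set A : ℝ≥0∞ := (ENNReal.ofReal ((4*s) ^ e) * L) ^ (1/(p-1)) /
    ENNReal.ofReal (4*s) with hA_def
  -- Step 1: integrand lower bound
  have hstep1 : ∀ t ∈ Ioc T (2*T), A ≤
      (ENNReal.ofReal (t ^ (p * β - (n:ℝ))) *
        ∫⁻ y in Metric.ball x t, ENNReal.ofReal (‖y‖ ^ a * u y ^ q)) ^ (1 / (p - 1)) /
      ENNReal.ofReal t := by
    intro t ht
    have ht0 : 0 < t := lt_trans hT0 ht.1
    have ht4 : t ≤ 4 * s := le_trans ht.2 hT4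
    -- inner integral bound
    have hball : ball x0 (1/8) ⊆ ball x t := by
      intro y hy
      have hd : ‖y - x0‖ < 1/8 := by rw [← dist_eq_norm]; exact mem_ball.mp hy
      have habs : |‖y‖ - ‖x0‖| < 1/8 := lt_of_le_of_lt (abs_norm_sub_norm_le y x0) hd
      have h1 : ‖y‖ < 1 := by
        have := abs_lt.mp habs; rw [hx0] at this; linarith [this.2]
      have : dist y x < t := by
        calc dist y x = ‖y - x‖ := dist_eq_norm y x
          _ ≤ ‖y‖ + ‖x‖ := norm_sub_le y x
          _ < 1 + s := by rw [hs_def] at *; linarith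
          _ < t := by rw [hT_def] at ht; linarith [ht.1]
      exact mem_ball.mpr this
    have hI : L ≤ ∫⁻ y in Metric.ball x t, ENNReal.ofReal (‖y‖ ^ a * u y ^ q) := by
      calc L = ∫⁻ _ in ball x0 (1/8), ENNReal.ofReal (m ^ q) := by
              rw [setLIntegral_const, hL_def, hv_def]
        _ ≤ ∫⁻ y in ball x0 (1/8), ENNReal.ofReal (‖y‖ ^ a * u y ^ q) := by
              refine lintegral_mono_ae ?_
              filter_upwards [ae_restrict_mem measurableSet_ball] with y hy
              exact hf y hy
        _ ≤ _ := lintegral_mono_set hball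
    have hpow : ENNReal.ofReal ((4*s) ^ e) ≤ ENNReal.ofReal (t ^ (p * β - (n:ℝ))) := by
      have : (4*s) ^ e ≤ t ^ e := Real.rpow_le_rpow_of_nonpos ht0 ht4 he.le
      rw [← he_def]
      exact ENNReal.ofReal_le_ofReal this
    refine ENNReal.div_le_div ?_ (ENNReal.ofReal_le_ofReal ht4)
    exact ENNReal.rpow_le_rpow (mul_le_mul' hpow hI) (by positivity)
  -- Step 2: Wolff potential lower bound
  have hW : ENNReal.ofReal (c0 * s ^ α) ≤
      wolff n β p (fun y => ‖y‖ ^ a * u y ^ q) x := by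
    have h1 : A * ENNReal.ofReal T ≤ wolff n β p (fun y => ‖y‖ ^ a * u y ^ q) x := by
      calc A * ENNReal.ofReal T = A * volume (Ioc T (2*T)) := by
            rw [Real.volume_Ioc]; ring_nf
        _ = ∫⁻ _ in Ioc T (2*T), A := (setLIntegral_const _ _).symm
        _ ≤ ∫⁻ t in Ioc T (2*T),
            (ENNReal.ofReal (t ^ (p * β - (n:ℝ))) *
              ∫⁻ y in Metric.ball x t, ENNReal.ofReal (‖y‖ ^ a * u y ^ q)) ^ (1 / (p - 1)) /
            ENNReal.ofReal t := by
            refine lintegral_mono_ae ?_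
            filter_upwards [ae_restrict_mem measurableSet_Ioc] with t ht
            exact hstep1 t ht
        _ ≤ _ := lintegral_mono_set (fun t ht => lt_trans hT0 ht.1)
    refine le_trans ?_ h1
    -- rewrite A * ofReal T as ofReal of a real expression and compare
    have h4s : (0:ℝ) < 4*s := by linarith
    have hAeq : A = ENNReal.ofReal (((4*s) ^ e * ℓ) ^ (1/(p-1)) / (4*s)) := by
      rw [hA_def, hLℓ, ← ENNReal.ofReal_mul (Real.rpow_nonneg h4s.le e),
        ENNReal.ofReal_rpow_of_pos (mul_pos (Real.rpow_pos_of_pos h4s e) hℓ),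
        ENNReal.ofReal_div_of_pos h4s]
    rw [hAeq, ← ENNReal.ofReal_mul (by positivity)]
    refine ENNReal.ofReal_le_ofReal ?_
    have hscomp : ((4*s) ^ e * ℓ) ^ (1/(p-1)) / (4*s) * s = c0 * s ^ α := by
      have h1 : ((4*s) ^ e * ℓ) ^ (1/(p-1)) = 4 ^ α * s ^ α * ℓ ^ (1/(p-1)) := by
        rw [Real.mul_rpow (Real.rpow_nonneg h4s.le e) hℓ.le, ← Real.rpow_mul h4s.le]
        rw [show e * (1/(p-1)) = α by rw [hα_def]; ring]
        rw [Real.mul_rpow (by norm_num : (0:ℝ) ≤ 4) hs0.le]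
      rw [h1, hc0_def, show (4:ℝ) ^ (α-1) = 4 ^ α / 4 by
        rw [Real.rpow_sub (by norm_num), Real.rpow_one]]
      field_simp
    have hsT : s ≤ T := by rw [hT_def]; linarith
    calc c0 * s ^ α = ((4*s) ^ e * ℓ) ^ (1/(p-1)) / (4*s) * s := hscomp.symm
      _ ≤ ((4*s) ^ e * ℓ) ^ (1/(p-1)) / (4*s) * T :=
          mul_le_mul_of_nonneg_left hsT (by positivity)
  -- Step 3: conclude
  have hWne := (hu_eq x).1
  have hWr : c0 * s ^ α ≤ (wolff n β p (fun y => ‖y‖ ^ a * u y ^ q) x).toReal :=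
    (ENNReal.ofReal_le_iff_le_toReal hWne).mp hW
  have hexp : -((n - p * β) / (p - 1)) = α := by rw [hα_def, he_def]; ring
  rw [hexp]
  have hgoal : c0 / C * s ^ α = (1/C) * (c0 * s ^ α) := by ring
  rw [(hu_eq x).2, hgoal]
  exact mul_le_mul (hRC x).1 hWr (by positivity)
    (le_trans (by positivity) (hRC x).1)
end
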